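/- arXiv:2501.06512 — 12 statements merged into one kernel-verified Lean document; each statement's English description precedes it below -/
import Mathlib

section
/- For all integers λ ≥ 0, ν ≥ 0 and μ ≥ 0, the generalized continuants satisfy the two Cassini-type identities: A_{ν+λ+μ−1} · B_{ν−1,λ} = A_{ν+λ−1} · B_{ν+μ−1,λ} + (−1)^{ν−1} · (a_{λ+1}·a_{λ+2}⋯a_{λ+ν}) · A_{λ−1} · B_{μ−1,ν+λ}, and B_{ν+λ+μ−1} · B_{ν−1,λ} = B_{ν+λ−1} · B_{ν+μ−1,λ} + (−1)^{ν−1} · (a_{λ+1}·a_{λ+2}⋯a_{λ+ν}) · B_{λ−1} · B_{μ−1,ν+λ}. -/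
/-- Cassini's identity for generalized continuants. -/
theorem cassini_identity
    (a b : ℤ → ℤ)
    (ha : ∀ ν : ℤ, 1 ≤ ν → 0 < a ν) (hb : ∀ ν : ℤ, 0 ≤ ν → 0 < b ν)
    (A B : ℤ → ℤ → ℤ)
    (hAm1 : ∀ l : ℤ, 0 ≤ l → A (-1) l = 1) (hA0 : ∀ l : ℤ, 0 ≤ l → A 0 l = b l)
    (hBm1 : ∀ l : ℤ, 0 ≤ l → B (-1) l = 0) (hB0 : ∀ l : ℤ, 0 ≤ l → B 0 l = 1)
    (hArec : ∀ l ν : ℤ, 0 ≤ l → 1 ≤ ν →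
      A ν l = b (l + ν) * A (ν - 1) l + a (l + ν) * A (ν - 2) l)
    (hBrec : ∀ l ν : ℤ, 0 ≤ l → 1 ≤ ν →
      B ν l = b (l + ν) * B (ν - 1) l + a (l + ν) * B (ν - 2) l) :
    ∀ lam nu mu : ℕ,
      A ((nu : ℤ) + lam + mu - 1) 0 * B ((nu : ℤ) - 1) lam =
        A ((nu : ℤ) + lam - 1) 0 * B ((nu : ℤ) + mu - 1) lam +
          (-1 : ℤ) ^ (nu + 1) * (∏ i ∈ Finset.range nu, a ((lam : ℤ) + 1 + i)) *
            A ((lam : ℤ) - 1) 0 * B ((mu : ℤ) - 1) ((nu : ℤ) + lam) ∧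
      B ((nu : ℤ) + lam + mu - 1) 0 * B ((nu : ℤ) - 1) lam =
        B ((nu : ℤ) + lam - 1) 0 * B ((nu : ℤ) + mu - 1) lam +
          (-1 : ℤ) ^ (nu + 1) * (∏ i ∈ Finset.range nu, a ((lam : ℤ) + 1 + i)) *
            B ((lam : ℤ) - 1) 0 * B ((mu : ℤ) - 1) ((nu : ℤ) + lam) := by
  -- wrapper for the B recurrence in "x+1" form
  have hB' : ∀ l x : ℤ, 0 ≤ l → 0 ≤ x →
      B (x + 1) l = b (l + x + 1) * B x l + a (l + x + 1) * B (x - 1) l := by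
    intro l x hl hx
    have h := hBrec l (x + 1) hl (by omega)
    have e1 : l + (x + 1) = l + x + 1 := by ring
    have e2 : x + 1 - 1 = x := by ring
    have e3 : x + 1 - 2 = x - 1 := by ring
    rw [e1, e2, e3] at h
    exact h
  have key : ∀ C : ℤ → ℤ → ℤ,
      (∀ x : ℤ, 0 ≤ x → C (x + 1) 0 = b (x + 1) * C x 0 + a (x + 1) * C (x - 1) 0) →
      ∀ lam nu mu : ℕ,
        C ((nu : ℤ) + lam + mu - 1) 0 * B ((nu : ℤ) - 1) lam =
          C ((nu : ℤ) + lam - 1) 0 * B ((nu : ℤ) + mu - 1) lam +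
            (-1 : ℤ) ^ (nu + 1) * (∏ i ∈ Finset.range nu, a ((lam : ℤ) + 1 + i)) *
              C ((lam : ℤ) - 1) 0 * B ((mu : ℤ) - 1) ((nu : ℤ) + lam) := by
    intro C hC lam nu mu
    -- Cassini's identity (the mu = 1 case), by induction on nu
    have cas1 : ∀ n : ℕ,
        C ((n : ℤ) + lam) 0 * B ((n : ℤ) - 1) lam =
          C ((n : ℤ) + lam - 1) 0 * B (n : ℤ) lam +
            (-1 : ℤ) ^ (n + 1) * (∏ i ∈ Finset.range n, a ((lam : ℤ) + 1 + i)) *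
              C ((lam : ℤ) - 1) 0 := by
      intro n
      induction n with
      | zero =>
          simp only [Nat.cast_zero, zero_add, zero_sub, pow_one, Finset.prod_range_zero]
          rw [hBm1 _ (by positivity), hB0 _ (by positivity)]
          ring
      | succ n ih =>
          have h1 := hC ((n : ℤ) + lam) (by positivity)
          have h2 := hB' (lam : ℤ) (n : ℤ) (by positivity) (by positivity)
          rw [Finset.prod_range_succ]
          push_cast
          linear_combination (norm := (push_cast; ring_nf))
            B (n : ℤ) lam * h1 - C ((n : ℤ) + lam) 0 * h2
              - a ((lam : ℤ) + (n : ℤ) + 1) * ih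
    induction mu using Nat.strong_induction_on with
    | _ mu ih =>
      match mu, ih with
      | 0, _ =>
          simp only [Nat.cast_zero, add_zero, zero_sub]
          rw [hBm1 _ (by positivity)]
          ring
      | 1, _ =>
          have h := cas1 nu
          have e : ((1 : ℕ) : ℤ) - 1 = 0 := by norm_num
          rw [e, hB0 _ (by positivity)]
          linear_combination (norm := (push_cast; ring_nf)) h
      | (m + 2), ih =>
          have t1 := ih (m + 1) (by omega)
          have t0 := ih m (by omega)
          have hc := hC ((nu : ℤ) + lam + m) (by positivity)
          have hb1 := hB' (lam : ℤ) ((nu : ℤ) + m) (by positivity) (by positivity)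
          have hb2 := hB' ((nu : ℤ) + lam) (m : ℤ) (by positivity) (by positivity)
          linear_combination (norm := (push_cast; ring_nf))
            B ((nu : ℤ) - 1) lam * hc
              + b ((nu : ℤ) + lam + m + 1) * t1 + a ((nu : ℤ) + lam + m + 1) * t0
              - C ((nu : ℤ) + lam - 1) 0 * hb1
              - ((-1 : ℤ) ^ (nu + 1) * (∏ i ∈ Finset.range nu, a ((lam : ℤ) + 1 + i)) *
                  C ((lam : ℤ) - 1) 0) * hb2
  intro lam nu mu
  have hA' : ∀ x : ℤ, 0 ≤ x → A (x + 1) 0 = b (x + 1) * A x 0 + a (x + 1) * A (x - 1) 0 := by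
    intro x hx
    have h := hArec 0 (x + 1) le_rfl (by omega)
    have e1 : (0 : ℤ) + (x + 1) = x + 1 := by ring
    have e2 : x + 1 - 1 = x := by ring
    have e3 : x + 1 - 2 = x - 1 := by ring
    rw [e1, e2, e3] at h
    exact h
  exact ⟨key A hA' lam nu mu, key B (by
    intro x hx
    have h := hBrec 0 (x + 1) le_rfl (by omega)
    have e1 : (0 : ℤ) + (x + 1) = x + 1 := by ring
    have e2 : x + 1 - 1 = x := by ring
    have e3 : x + 1 - 2 = x - 1 := by ring
    rw [e1, e2, e3] at h
    exact h) lam nu mu⟩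
end

section
/- For all integers λ and ν with 0 ≤ ν ≤ λ, the generalized continuants satisfy d'Ocagne's identities: A_λ · B_{ν−1,λ−ν} = A_{λ−1} · B_{ν,λ−ν} + (−1)^{ν−1} · (a_λ·a_{λ−1}⋯a_{λ−ν+1}) · A_{λ−ν−1}, and B_λ · B_{ν−1,λ−ν} = B_{λ−1} · B_{ν,λ−ν} + (−1)^{ν−1} · (a_λ·a_{λ−1}⋯a_{λ−ν+1}) · B_{λ−ν−1} (the product over a is empty, i.e. equal to 1, when ν = 0). -/
section
variable (a b : ℤ → ℤ) (B : ℤ → ℤ → ℤ)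

/-- front recurrence -/
lemma docagne_front
    (hBm1 : ∀ l : ℤ, 0 ≤ l → B (-1) l = 0) (hB0 : ∀ l : ℤ, 0 ≤ l → B 0 l = 1)
    (hBrec : ∀ l ν : ℤ, 0 ≤ l → 1 ≤ ν →
      B ν l = b (l + ν) * B (ν - 1) l + a (l + ν) * B (ν - 2) l) :
    ∀ n : ℕ, ∀ l : ℤ, 0 ≤ l →
      B ((n : ℤ) + 1) l = b (l + 1) * B (n : ℤ) (l + 1) + a (l + 2) * B ((n : ℤ) - 1) (l + 2) := by
  intro n
  induction n using Nat.twoStepInduction with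
  | zero =>
      intro l hl
      have h := hBrec l 1 hl le_rfl
      rw [show (1:ℤ)-1 = 0 by ring, show (1:ℤ)-2 = -1 by ring, hB0 l hl, hBm1 l hl] at h
      push_cast
      rw [hB0 (l+1) (by omega), hBm1 (l+2) (by omega)]
      linarith [h]
  | one =>
      intro l hl
      push_cast
      have h2 := hBrec l 2 hl (by norm_num)
      rw [show (2:ℤ)-1 = 1 by ring, show (2:ℤ)-2 = 0 by ring, hB0 l hl] at h2
      have h1 := hBrec l 1 hl le_rfl
      rw [show (1:ℤ)-1 = 0 by ring, show (1:ℤ)-2 = -1 by ring, hB0 l hl, hBm1 l hl] at h1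
      have h1' := hBrec (l+1) 1 (by omega) le_rfl
      rw [show (1:ℤ)-1 = 0 by ring, show (1:ℤ)-2 = -1 by ring, hB0 (l+1) (by omega),
        hBm1 (l+1) (by omega), show l+1+1 = l+2 by ring] at h1'
      have h0 := hB0 (l+2) (by omega)
      -- goal : B (1+1) l = b (l+1) * B 1 (l+1) + a (l+2) * B (1-1) (l+2)
      rw [h2, h1, h1', h0]
      ring
  | more n ih ih1 =>
      intro l hl
      push_cast
      push_cast at ih1
      have hrec : B ((n:ℤ)+3) l
          = b (l+((n:ℤ)+3)) * B ((n:ℤ)+2) l + a (l+((n:ℤ)+3)) * B ((n:ℤ)+1) l := by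
        have h := hBrec l ((n:ℤ)+3) hl (by omega)
        rw [show (n:ℤ)+3-1 = (n:ℤ)+2 by ring, show (n:ℤ)+3-2 = (n:ℤ)+1 by ring] at h
        exact h
      have hA : B ((n:ℤ)+2) l = b (l+1) * B ((n:ℤ)+1) (l+1) + a (l+2) * B ((n:ℤ)) (l+2) := by
        have h := ih1 l hl
        rw [show (n:ℤ)+1+1 = (n:ℤ)+2 by ring, show (n:ℤ)+1-1 = (n:ℤ) by ring] at h
        exact h
      have hB' : B ((n:ℤ)+1) l = b (l+1) * B ((n:ℤ)) (l+1) + a (l+2) * B ((n:ℤ)-1) (l+2) :=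
        ih l hl
      have hC : B ((n:ℤ)+2) (l+1)
          = b (l+1+((n:ℤ)+2)) * B ((n:ℤ)+1) (l+1) + a (l+1+((n:ℤ)+2)) * B ((n:ℤ)) (l+1) := by
        have h := hBrec (l+1) ((n:ℤ)+2) (by omega) (by omega)
        rw [show (n:ℤ)+2-1 = (n:ℤ)+1 by ring, show (n:ℤ)+2-2 = (n:ℤ) by ring] at h
        exact h
      have hD : B ((n:ℤ)+1) (l+2)
          = b (l+2+((n:ℤ)+1)) * B ((n:ℤ)) (l+2) + a (l+2+((n:ℤ)+1)) * B ((n:ℤ)-1) (l+2) := by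
        have h := hBrec (l+2) ((n:ℤ)+1) (by omega) (by omega)
        rw [show (n:ℤ)+1-1 = (n:ℤ) by ring, show (n:ℤ)+1-2 = (n:ℤ)-1 by ring] at h
        exact h
      rw [show (n:ℤ)+2+1 = (n:ℤ)+3 by ring, show (n:ℤ)+2-1 = (n:ℤ)+1 by ring,
        hrec, hA, hB', hC, hD]
      rw [show l+1+((n:ℤ)+2) = l+((n:ℤ)+3) by ring, show l+2+((n:ℤ)+1) = l+((n:ℤ)+3) by ring]
      ring

end

section
variable (a b : ℤ → ℤ) (B : ℤ → ℤ → ℤ)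

/-- splitting lemma -/
lemma docagne_split
    (hBm1 : ∀ l : ℤ, 0 ≤ l → B (-1) l = 0) (hB0 : ∀ l : ℤ, 0 ≤ l → B 0 l = 1)
    (hBrec : ∀ l ν : ℤ, 0 ≤ l → 1 ≤ ν →
      B ν l = b (l + ν) * B (ν - 1) l + a (l + ν) * B (ν - 2) l)
    (C : ℤ → ℤ)
    (hCrec : ∀ ν : ℤ, 1 ≤ ν → C ν = b ν * C (ν - 1) + a ν * C (ν - 2)) :
    ∀ nu lam : ℕ, nu ≤ lam →
      C (lam : ℤ) = C ((lam : ℤ) - nu) * B (nu : ℤ) ((lam : ℤ) - nu)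
        + a ((lam : ℤ) - nu + 1) * C ((lam : ℤ) - nu - 1) * B ((nu : ℤ) - 1) ((lam : ℤ) - nu + 1) := by
  intro nu
  induction nu with
  | zero =>
      intro lam _
      push_cast
      rw [sub_zero, hB0 (lam : ℤ) (by omega), hBm1 ((lam:ℤ)+1) (by omega)]
      ring
  | succ n ih =>
      intro lam hle
      have hih := ih lam (by omega)
      have hC : C ((lam:ℤ) - n)
          = b ((lam:ℤ)-n) * C ((lam:ℤ)-n-1) + a ((lam:ℤ)-n) * C ((lam:ℤ)-n-2) :=
        hCrec ((lam:ℤ) - n) (by omega)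
      have hF := docagne_front a b B hBm1 hB0 hBrec n ((lam:ℤ)-n-1) (by omega)
      rw [show (lam:ℤ)-n-1+1 = (lam:ℤ)-n by ring, show (lam:ℤ)-n-1+2 = (lam:ℤ)-n+1 by ring] at hF
      push_cast
      rw [show (lam:ℤ)-((n:ℤ)+1)+1 = (lam:ℤ)-n by ring,
        show (lam:ℤ)-((n:ℤ)+1)-1 = (lam:ℤ)-n-2 by ring,
        show ((n:ℤ))+1-1 = (n:ℤ) by ring,
        show (lam:ℤ)-((n:ℤ)+1) = (lam:ℤ)-n-1 by ring]
      rw [hih, hC, hF]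
      ring

/-- determinant lemma -/
lemma docagne_det
    (hBm1 : ∀ l : ℤ, 0 ≤ l → B (-1) l = 0) (hB0 : ∀ l : ℤ, 0 ≤ l → B 0 l = 1)
    (hBrec : ∀ l ν : ℤ, 0 ≤ l → 1 ≤ ν →
      B ν l = b (l + ν) * B (ν - 1) l + a (l + ν) * B (ν - 2) l) :
    ∀ n : ℕ, ∀ l : ℤ, 0 ≤ l →
      a (l+1) * (B ((n:ℤ)+1) l * B ((n:ℤ)-1) (l+1) - B (n:ℤ) l * B (n:ℤ) (l+1))
        = (-1:ℤ)^(n+1) * ∏ i ∈ Finset.range (n+1), a (l + 1 + i) := by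
  intro n
  induction n with
  | zero =>
      intro l hl
      push_cast
      rw [hBm1 (l+1) (by omega), hB0 l hl, hB0 (l+1) (by omega)]
      simp
  | succ n ih =>
      intro l hl
      have h1 : B ((n:ℤ)+2) l
          = b (l+((n:ℤ)+2)) * B ((n:ℤ)+1) l + a (l+((n:ℤ)+2)) * B ((n:ℤ)) l := by
        have h := hBrec l ((n:ℤ)+2) hl (by omega)
        rw [show (n:ℤ)+2-1 = (n:ℤ)+1 by ring, show (n:ℤ)+2-2 = (n:ℤ) by ring] at h
        exact h
      have h2 : B ((n:ℤ)+1) (l+1)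
          = b (l+((n:ℤ)+2)) * B ((n:ℤ)) (l+1) + a (l+((n:ℤ)+2)) * B ((n:ℤ)-1) (l+1) := by
        have h := hBrec (l+1) ((n:ℤ)+1) (by omega) (by omega)
        rw [show (n:ℤ)+1-1 = (n:ℤ) by ring, show (n:ℤ)+1-2 = (n:ℤ)-1 by ring,
          show l+1+((n:ℤ)+1) = l+((n:ℤ)+2) by ring] at h
        exact h
      have hih := ih l hl
      push_cast
      rw [show (n:ℤ)+1+1 = (n:ℤ)+2 by ring, show (n:ℤ)+1-1 = (n:ℤ) by ring]
      rw [Finset.prod_range_succ]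
      push_cast
      rw [h1, h2, show (l + 1 + ((n:ℤ)+1)) = l + ((n:ℤ)+2) by ring]
      calc a (l+1) * ((b (l+((n:ℤ)+2)) * B ((n:ℤ)+1) l + a (l+((n:ℤ)+2)) * B ((n:ℤ)) l) * B (n:ℤ) (l+1)
            - B ((n:ℤ)+1) l * (b (l+((n:ℤ)+2)) * B ((n:ℤ)) (l+1) + a (l+((n:ℤ)+2)) * B ((n:ℤ)-1) (l+1)))
          = -(a (l+((n:ℤ)+2))) * (a (l+1) * (B ((n:ℤ)+1) l * B ((n:ℤ)-1) (l+1) - B (n:ℤ) l * B (n:ℤ) (l+1))) := by ring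
        _ = (-1:ℤ)^(n+1+1) * ((∏ i ∈ Finset.range (n+1), a (l + 1 + i)) * a (l + ((n:ℤ)+2))) := by
              rw [hih]; ring

end

lemma docagne_prod_shift (a : ℤ → ℤ) :
    ∀ (n : ℕ) (x : ℤ), ∏ i ∈ Finset.range n, a (x - i) = ∏ i ∈ Finset.range n, a (x - n + 1 + i) := by
  intro n
  induction n with
  | zero => intro x; simp
  | succ n ih =>
      intro x
      rw [Finset.prod_range_succ, ih x, Finset.prod_range_succ']
      push_cast
      rw [show x - ((n:ℤ)+1) + 1 + 0 = x - n by ring]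
      congr 1
      apply Finset.prod_congr rfl
      intro i _
      congr 1
      push_cast
      ring

section
variable (a b : ℤ → ℤ) (B : ℤ → ℤ → ℤ)

lemma docagne_main
    (hBm1 : ∀ l : ℤ, 0 ≤ l → B (-1) l = 0) (hB0 : ∀ l : ℤ, 0 ≤ l → B 0 l = 1)
    (hBrec : ∀ l ν : ℤ, 0 ≤ l → 1 ≤ ν →
      B ν l = b (l + ν) * B (ν - 1) l + a (l + ν) * B (ν - 2) l)
    (C : ℤ → ℤ)
    (hCrec : ∀ ν : ℤ, 1 ≤ ν → C ν = b ν * C (ν - 1) + a ν * C (ν - 2)) :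
    ∀ lam nu : ℕ, nu ≤ lam →
      C (lam : ℤ) * B ((nu : ℤ) - 1) ((lam : ℤ) - nu) =
        C ((lam : ℤ) - 1) * B (nu : ℤ) ((lam : ℤ) - nu) +
          (-1 : ℤ) ^ (nu + 1) * (∏ i ∈ Finset.range nu, a ((lam : ℤ) - i)) *
            C ((lam : ℤ) - nu - 1) := by
  intro lam nu
  match nu with
  | 0 =>
      intro _
      push_cast
      rw [sub_zero, hBm1 (lam:ℤ) (by omega), hB0 (lam:ℤ) (by omega)]
      simp
  | m + 1 =>
      intro hle
      obtain ⟨k, rfl⟩ : ∃ k, lam = k + 1 := ⟨lam - 1, by omega⟩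
      have hmk : m ≤ k := by omega
      have h1 := docagne_split a b B hBm1 hB0 hBrec C hCrec (m+1) (k+1) hle
      have h2 := docagne_split a b B hBm1 hB0 hBrec C hCrec m k hmk
      have hD := docagne_det a b B hBm1 hB0 hBrec m ((k:ℤ) - m) (by omega)
      have hP : (∏ i ∈ Finset.range (m+1), a (((k:ℤ)+1) - i))
          = ∏ i ∈ Finset.range (m+1), a ((k:ℤ) - m + 1 + i) := by
        rw [docagne_prod_shift a (m+1) ((k:ℤ)+1)]
        apply Finset.prod_congr rfl
        intro i _
        congr 1
        push_cast
        ring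
      push_cast at h1 h2 ⊢
      simp only [show (k:ℤ)+1-((m:ℤ)+1)+1 = (k:ℤ)-m+1 from by ring,
        show (k:ℤ)+1-((m:ℤ)+1)-1 = (k:ℤ)-m-1 from by ring,
        show (k:ℤ)+1-((m:ℤ)+1) = (k:ℤ)-m from by ring,
        show (m:ℤ)+1-1 = (m:ℤ) from by ring,
        show (k:ℤ)+1-1 = (k:ℤ) from by ring] at h1 ⊢
      rw [hP]
      linear_combination B ((m:ℤ)) ((k:ℤ)-m) * h1 - B ((m:ℤ)+1) ((k:ℤ)-m) * h2
        - C ((k:ℤ)-m-1) * hD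

end

/-- d'Ocagne's identity for generalized continuants. -/
theorem docagne_identity
    (a b : ℤ → ℤ)
    (ha : ∀ ν : ℤ, 1 ≤ ν → 0 < a ν) (hb : ∀ ν : ℤ, 0 ≤ ν → 0 < b ν)
    (A B : ℤ → ℤ → ℤ)
    (hAm1 : ∀ l : ℤ, 0 ≤ l → A (-1) l = 1) (hA0 : ∀ l : ℤ, 0 ≤ l → A 0 l = b l)
    (hBm1 : ∀ l : ℤ, 0 ≤ l → B (-1) l = 0) (hB0 : ∀ l : ℤ, 0 ≤ l → B 0 l = 1)
    (hArec : ∀ l ν : ℤ, 0 ≤ l → 1 ≤ ν →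
      A ν l = b (l + ν) * A (ν - 1) l + a (l + ν) * A (ν - 2) l)
    (hBrec : ∀ l ν : ℤ, 0 ≤ l → 1 ≤ ν →
      B ν l = b (l + ν) * B (ν - 1) l + a (l + ν) * B (ν - 2) l) :
    ∀ lam nu : ℕ, nu ≤ lam →
      A (lam : ℤ) 0 * B ((nu : ℤ) - 1) ((lam : ℤ) - nu) =
        A ((lam : ℤ) - 1) 0 * B (nu : ℤ) ((lam : ℤ) - nu) +
          (-1 : ℤ) ^ (nu + 1) * (∏ i ∈ Finset.range nu, a ((lam : ℤ) - i)) *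
            A ((lam : ℤ) - nu - 1) 0 ∧
      B (lam : ℤ) 0 * B ((nu : ℤ) - 1) ((lam : ℤ) - nu) =
        B ((lam : ℤ) - 1) 0 * B (nu : ℤ) ((lam : ℤ) - nu) +
          (-1 : ℤ) ^ (nu + 1) * (∏ i ∈ Finset.range nu, a ((lam : ℤ) - i)) *
            B ((lam : ℤ) - nu - 1) 0 := by
  intro lam nu hle
  have hArec0 : ∀ ν : ℤ, 1 ≤ ν → A ν 0 = b ν * A (ν - 1) 0 + a ν * A (ν - 2) 0 := by
    intro ν hν
    have h := hArec 0 ν le_rfl hν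
    rwa [zero_add] at h
  have hBrec0 : ∀ ν : ℤ, 1 ≤ ν → B ν 0 = b ν * B (ν - 1) 0 + a ν * B (ν - 2) 0 := by
    intro ν hν
    have h := hBrec 0 ν le_rfl hν
    rwa [zero_add] at h
  refine ⟨?_, ?_⟩
  · exact docagne_main a b B hBm1 hB0 hBrec (fun ν => A ν 0) hArec0 lam nu hle
  · exact docagne_main a b B hBm1 hB0 hBrec (fun ν => B ν 0) hBrec0 lam nu hle
end

section
/- For all integers λ and ν with 0 ≤ ν ≤ λ and d dividing λ − ν, one has: A_{λ−1} · B_ν − A_λ · B_{ν−1} = (−1)^ν · (a_λ·a_{λ−1}⋯a_{λ−ν+1}) · A_{λ−ν−1}, and B_{λ−1} · B_ν − B_λ · B_{ν−1} = (−1)^ν · (a_λ·a_{λ−1}⋯a_{λ−ν+1}) · B_{λ−ν−1} (the product over a is empty, i.e. equal to 1, when ν = 0). -/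
/-- Telescoping-sum identity for periodic continuants. -/
theorem periodic_continuant_telescoping
    (a b : ℤ → ℤ)
    (ha : ∀ ν : ℤ, 1 ≤ ν → 0 < a ν) (hb : ∀ ν : ℤ, 0 ≤ ν → 0 < b ν)
    (d : ℕ) (hd : 1 ≤ d)
    (hpa : ∀ ν : ℤ, 1 ≤ ν → a (ν + d) = a ν) (hpb : ∀ ν : ℤ, 1 ≤ ν → b (ν + d) = b ν)
    (A B : ℤ → ℤ → ℤ)
    (hAm1 : ∀ l : ℤ, 0 ≤ l → A (-1) l = 1) (hA0 : ∀ l : ℤ, 0 ≤ l → A 0 l = b l)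
    (hBm1 : ∀ l : ℤ, 0 ≤ l → B (-1) l = 0) (hB0 : ∀ l : ℤ, 0 ≤ l → B 0 l = 1)
    (hArec : ∀ l ν : ℤ, 0 ≤ l → 1 ≤ ν →
      A ν l = b (l + ν) * A (ν - 1) l + a (l + ν) * A (ν - 2) l)
    (hBrec : ∀ l ν : ℤ, 0 ≤ l → 1 ≤ ν →
      B ν l = b (l + ν) * B (ν - 1) l + a (l + ν) * B (ν - 2) l) :
    ∀ lam nu : ℕ, nu ≤ lam → (d : ℤ) ∣ ((lam : ℤ) - nu) →
      A ((lam : ℤ) - 1) 0 * B (nu : ℤ) 0 - A (lam : ℤ) 0 * B ((nu : ℤ) - 1) 0 =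
        (-1 : ℤ) ^ nu * (∏ i ∈ Finset.range nu, a ((lam : ℤ) - i)) *
          A ((lam : ℤ) - nu - 1) 0 ∧
      B ((lam : ℤ) - 1) 0 * B (nu : ℤ) 0 - B (lam : ℤ) 0 * B ((nu : ℤ) - 1) 0 =
        (-1 : ℤ) ^ nu * (∏ i ∈ Finset.range nu, a ((lam : ℤ) - i)) *
          B ((lam : ℤ) - nu - 1) 0 := by
  -- iterated periodicity for a
  have hpa' : ∀ (k : ℕ) (ν : ℤ), 1 ≤ ν → a (ν + k * d) = a ν := by
    intro k
    induction k with
    | zero => intro ν hν; simp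
    | succ k ih =>
      intro ν hν
      have hkd : (0:ℤ) ≤ (k:ℤ) * d := by positivity
      have h1 : ν + ((k:ℕ)+1 : ℕ) * (d:ℤ) = (ν + (k:ℤ) * d) + d := by push_cast; ring
      rw [h1, hpa _ (by linarith), ih ν hν]
  have hpb' : ∀ (k : ℕ) (ν : ℤ), 1 ≤ ν → b (ν + k * d) = b ν := by
    intro k
    induction k with
    | zero => intro ν hν; simp
    | succ k ih =>
      intro ν hν
      have hkd : (0:ℤ) ≤ (k:ℤ) * d := by positivity
      have h1 : ν + ((k:ℕ)+1 : ℕ) * (d:ℤ) = (ν + (k:ℤ) * d) + d := by push_cast; ring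
      rw [h1, hpb _ (by linarith), ih ν hν]
  intro lam nu
  induction nu generalizing lam with
  | zero =>
    intro _ _
    push_cast
    rw [hB0 0 le_rfl, hBm1 0 le_rfl]
    constructor <;> simp
  | succ n ih =>
    intro hle hdvd
    obtain ⟨m, hm⟩ : ∃ m : ℕ, lam = m + 1 := ⟨lam - 1, by omega⟩
    -- get k with lam = (n+1) + k*d
    obtain ⟨c, hc⟩ := hdvd
    have hc0 : 0 ≤ c := by
      nlinarith [hc, Int.natCast_nonneg lam, Int.natCast_nonneg (n+1),
        show (1:ℤ) ≤ d by exact_mod_cast hd,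
        show ((n+1 : ℕ):ℤ) ≤ (lam:ℤ) by exact_mod_cast hle]
    lift c to ℕ using hc0 with k hk
    have hlamEq : (lam:ℤ) = ((n:ℤ)+1) + (k:ℤ) * d := by
      push_cast at hc ⊢; linarith [hc]
    have hn1 : (1:ℤ) ≤ (n:ℤ) + 1 := by omega
    have ha_eq : a (lam:ℤ) = a ((n:ℤ)+1) := by rw [hlamEq]; exact hpa' k _ hn1
    have hb_eq : b (lam:ℤ) = b ((n:ℤ)+1) := by rw [hlamEq]; exact hpb' k _ hn1
    have hlam1 : (1:ℤ) ≤ (lam:ℤ) := by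
      have : (1:ℕ) ≤ lam := by omega
      exact_mod_cast this
    -- recurrences at lam and n+1
    have hA := hArec 0 (lam:ℤ) le_rfl hlam1
    have hBl := hBrec 0 (lam:ℤ) le_rfl hlam1
    have hB := hBrec 0 ((n:ℤ)+1) le_rfl hn1
    simp only [zero_add] at hA hBl hB
    rw [show ((n:ℤ)+1) - 1 = (n:ℤ) by ring, show ((n:ℤ)+1) - 2 = (n:ℤ) - 1 by ring] at hB
    rw [show ((lam:ℤ) - 2) = (lam:ℤ) - 1 - 1 by ring] at hA hBl
    -- induction hypothesis at (m, n)
    have hdvd' : (d:ℤ) ∣ ((m:ℤ) - n) := by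
      refine ⟨k, ?_⟩
      have : (m:ℤ) = (lam:ℤ) - 1 := by rw [hm]; push_cast; ring
      rw [this, hlamEq]; ring
    obtain ⟨ih1, ih2⟩ := ih m (by omega) hdvd'
    have hmL : (m:ℤ) = (lam:ℤ) - 1 := by rw [hm]; push_cast; ring
    rw [hmL] at ih1 ih2
    -- product manipulation
    have hprod : (∏ i ∈ Finset.range (n+1), a ((lam:ℤ) - i)) =
        (∏ i ∈ Finset.range n, a ((lam:ℤ) - 1 - i)) * a (lam:ℤ) := by
      rw [Finset.prod_range_succ']
      congr 1
      all_goals first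
        | exact Finset.prod_congr rfl fun i _ => congrArg a (by push_cast; ring)
        | exact congrArg a (by push_cast; ring)
    constructor
    · push_cast
      rw [show ((lam:ℤ) - ((n:ℤ)+1) - 1) = (lam:ℤ) - 1 - (n:ℤ) - 1 by ring,
        show ((n:ℤ)+1-1) = (n:ℤ) by ring]
      push_cast at hprod
      rw [hprod, hB, hA, hb_eq, ha_eq]
      linear_combination (-(a ((n:ℤ)+1))) * ih1
    · push_cast
      rw [show ((lam:ℤ) - ((n:ℤ)+1) - 1) = (lam:ℤ) - 1 - (n:ℤ) - 1 by ring,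
        show ((n:ℤ)+1-1) = (n:ℤ) by ring]
      push_cast at hprod
      rw [hprod, hB, hBl, hb_eq, ha_eq]
      linear_combination (-(a ((n:ℤ)+1))) * ih2
end

section
/- The integer B_{d−1} divides B_{2d−1}, and for every integer ν ≥ −1 one has B_{d−1} · B_{ν+2d} = B_{2d−1} · B_{ν+d} + (−1)^{d−1} · (a_1·a_2⋯a_d) · B_{d−1} · B_ν; equivalently, B_{ν+2d} = C_d · B_{ν+d} + D_d · B_ν where C_d = B_{2d−1}/B_{d−1} and D_d = (−1)^{d−1}·a_1·a_2⋯a_d. -/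
/-- The second solution of the continuant recurrence, shifted: `auxA a b n = A (n-1)`,
with `A (-1) = 1`, `A 0 = 0`, `A ν = b ν * A (ν-1) + a ν * A (ν-2)`. -/
def auxA (a b : ℤ → ℤ) : ℕ → ℤ
  | 0 => 1
  | 1 => 0
  | n+2 => b ((n : ℤ) + 1) * auxA a b (n+1) + a ((n : ℤ) + 1) * auxA a b n

lemma two_step {C : ℕ → Prop} (h0 : C 0) (h1 : C 1)
    (hs : ∀ n, C n → C (n+1) → C (n+2)) : ∀ n, C n := by
  have key : ∀ n, C n ∧ C (n+1) := by
    intro n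
    induction n with
    | zero => exact ⟨h0, h1⟩
    | succ m ih => exact ⟨ih.2, hs m ih.1 ih.2⟩
  exact fun n => (key n).1

section Aux

variable (d : ℕ) (hd : 1 ≤ d) (a b : ℤ → ℤ)
  (hpa : ∀ ν : ℤ, 1 ≤ ν → a (ν + d) = a ν) (hpb : ∀ ν : ℤ, 1 ≤ ν → b (ν + d) = b ν)
  (B : ℤ → ℤ) (hBm1 : B (-1) = 0) (hB0 : B 0 = 1)
  (hBrec : ∀ ν : ℤ, 1 ≤ ν → B ν = b ν * B (ν - 1) + a ν * B (ν - 2))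

include hd hpa hpb hBm1 hB0 hBrec in
lemma aux_main :
    ∀ n : ℕ, B ((n:ℤ) - 1 + d) = B ((n:ℤ) - 1) * B d + auxA a b n * B ((d:ℤ) - 1)
      ∧ auxA a b (n + d) = B ((n:ℤ) - 1) * auxA a b (d+1) + auxA a b n * auxA a b d := by
  apply two_step
  · constructor
    · rw [show ((0:ℕ):ℤ) - 1 + d = (d:ℤ) - 1 by omega,
        show ((0:ℕ):ℤ) - 1 = (-1 : ℤ) by omega, hBm1]
      simp [auxA]
    · rw [show ((0:ℕ):ℤ) - 1 = (-1 : ℤ) by omega, hBm1]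
      simp [auxA]
  · constructor
    · rw [show ((1:ℕ):ℤ) - 1 + d = (d:ℤ) by omega,
        show ((1:ℕ):ℤ) - 1 = (0 : ℤ) by omega, hB0]
      simp [auxA]
    · rw [show (1 + d) = d + 1 by ring,
        show ((1:ℕ):ℤ) - 1 = (0 : ℤ) by omega, hB0]
      simp [auxA]
  · intro n ih1 ih2
    have hb' : b ((n:ℤ) + 1 + d) = b ((n:ℤ) + 1) := hpb ((n:ℤ)+1) (by omega)
    have ha' : a ((n:ℤ) + 1 + d) = a ((n:ℤ) + 1) := hpa ((n:ℤ)+1) (by omega)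
    have hr1 : B ((n:ℤ) + 1 + d) = b ((n:ℤ)+1) * B ((n:ℤ) + d) + a ((n:ℤ)+1) * B ((n:ℤ) - 1 + d) := by
      have := hBrec ((n:ℤ) + 1 + d) (by omega)
      rw [hb', ha'] at this
      rw [show (n:ℤ) + 1 + d - 1 = (n:ℤ) + d by ring,
        show (n:ℤ) + 1 + d - 2 = (n:ℤ) - 1 + d by ring] at this
      exact this
    have hr2 : B ((n:ℤ) + 1) = b ((n:ℤ)+1) * B (n:ℤ) + a ((n:ℤ)+1) * B ((n:ℤ) - 1) := by
      have := hBrec ((n:ℤ) + 1) (by omega)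
      rw [show (n:ℤ) + 1 - 1 = (n:ℤ) by ring, show (n:ℤ) + 1 - 2 = (n:ℤ) - 1 by ring] at this
      exact this
    have hA2 : auxA a b (n+2) = b ((n:ℤ)+1) * auxA a b (n+1) + a ((n:ℤ)+1) * auxA a b n := rfl
    have e1 : ((n+1 : ℕ) : ℤ) - 1 + d = (n:ℤ) + d := by push_cast; ring
    have e1' : ((n+1 : ℕ) : ℤ) - 1 = (n:ℤ) := by push_cast; ring
    have e2 : ((n+2 : ℕ) : ℤ) - 1 + d = (n:ℤ) + 1 + d := by push_cast; ring
    have e2' : ((n+2 : ℕ) : ℤ) - 1 = (n:ℤ) + 1 := by push_cast; ring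
    rw [e1, e1'] at ih2
    constructor
    · rw [e2, e2', hr1, ih2.1, ih1.1, hr2, hA2]
      ring
    · have hAr : auxA a b (n + 2 + d) =
          b ((n:ℤ)+1) * auxA a b (n + 1 + d) + a ((n:ℤ)+1) * auxA a b (n + d) := by
        rw [show n + 2 + d = (n + d) + 2 by ring]
        have : auxA a b (n + d + 2) =
            b (((n + d : ℕ):ℤ) + 1) * auxA a b (n + d + 1) + a (((n + d : ℕ):ℤ) + 1) * auxA a b (n + d) := rfl
        rw [this, show (((n + d : ℕ):ℤ) + 1) = (n:ℤ) + 1 + d by push_cast; ring, hb', ha',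
          show n + d + 1 = n + 1 + d by ring]
      rw [e2', hAr, ih2.2, ih1.2, hr2, hA2]
      ring

include hBm1 hB0 hBrec in
lemma aux_det :
    ∀ n : ℕ, B (n:ℤ) * auxA a b n - auxA a b (n+1) * B ((n:ℤ) - 1) =
      ∏ i ∈ Finset.range n, (-a ((i:ℤ) + 1)) := by
  intro n
  induction n with
  | zero => simp [auxA, hB0]
  | succ m ih =>
    have hr : B ((m:ℤ) + 1) = b ((m:ℤ)+1) * B (m:ℤ) + a ((m:ℤ)+1) * B ((m:ℤ) - 1) := by
      have := hBrec ((m:ℤ) + 1) (by omega)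
      rw [show (m:ℤ) + 1 - 1 = (m:ℤ) by ring, show (m:ℤ) + 1 - 2 = (m:ℤ) - 1 by ring] at this
      exact this
    have hA2 : auxA a b (m+2) = b ((m:ℤ)+1) * auxA a b (m+1) + a ((m:ℤ)+1) * auxA a b m := rfl
    rw [Finset.prod_range_succ, ← ih,
      show ((m+1 : ℕ):ℤ) = (m:ℤ) + 1 by push_cast; ring,
      show (m:ℤ) + 1 - 1 = (m:ℤ) by ring, hr, hA2]
    ring

include hBm1 hB0 hBrec in
lemma aux_pos (ha : ∀ ν : ℤ, 1 ≤ ν → 0 < a ν) (hb : ∀ ν : ℤ, 1 ≤ ν → 0 < b ν) :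
    ∀ n : ℕ, 0 ≤ B ((n:ℤ) - 1) ∧ 0 < B (n:ℤ) := by
  intro n
  induction n with
  | zero => norm_num [hBm1, hB0]
  | succ m ih =>
    have hr : B ((m:ℤ) + 1) = b ((m:ℤ)+1) * B (m:ℤ) + a ((m:ℤ)+1) * B ((m:ℤ) - 1) := by
      have := hBrec ((m:ℤ) + 1) (by omega)
      rw [show (m:ℤ) + 1 - 1 = (m:ℤ) by ring, show (m:ℤ) + 1 - 2 = (m:ℤ) - 1 by ring] at this
      exact this
    have ha' := ha ((m:ℤ)+1) (by omega)
    have hb' := hb ((m:ℤ)+1) (by omega)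
    have e : ((m+1 : ℕ):ℤ) = (m:ℤ) + 1 := by push_cast; ring
    constructor
    · rw [show ((m+1 : ℕ):ℤ) - 1 = (m:ℤ) by push_cast; ring]
      exact le_of_lt ih.2
    · rw [e, hr]
      nlinarith [ih.1, ih.2]

end Aux

/-- A second-order recurrence of period length `d` for the periodic continuant denominators. -/
theorem single_recurrence
    (d : ℕ) (hd : 1 ≤ d) (a b : ℤ → ℤ)
    (ha : ∀ ν : ℤ, 1 ≤ ν → 0 < a ν) (hb : ∀ ν : ℤ, 1 ≤ ν → 0 < b ν)
    (hpa : ∀ ν : ℤ, 1 ≤ ν → a (ν + d) = a ν) (hpb : ∀ ν : ℤ, 1 ≤ ν → b (ν + d) = b ν)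
    (B : ℤ → ℤ) (hBm1 : B (-1) = 0) (hB0 : B 0 = 1)
    (hBrec : ∀ ν : ℤ, 1 ≤ ν → B ν = b ν * B (ν - 1) + a ν * B (ν - 2)) :
    B ((d : ℤ) - 1) ∣ B (2 * (d : ℤ) - 1) ∧
    (∀ ν : ℤ, -1 ≤ ν →
      B ((d : ℤ) - 1) * B (ν + 2 * d) =
        B (2 * (d : ℤ) - 1) * B (ν + d) +
          (-1 : ℤ) ^ (d - 1) * (∏ i ∈ Finset.range d, a ((i : ℤ) + 1)) *
            B ((d : ℤ) - 1) * B ν) ∧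
    (∀ ν : ℤ, -1 ≤ ν →
      B (ν + 2 * d) =
        (B (2 * (d : ℤ) - 1) / B ((d : ℤ) - 1)) * B (ν + d) +
          ((-1 : ℤ) ^ (d - 1) * ∏ i ∈ Finset.range d, a ((i : ℤ) + 1)) * B ν) := by
  have main := aux_main d hd a b hpa hpb B hBm1 hB0 hBrec
  -- factorization of B (2d - 1)
  have hfact : B (2 * (d:ℤ) - 1) = B ((d:ℤ) - 1) * (B (d:ℤ) + auxA a b d) := by
    have := (main d).1
    rw [show (d:ℤ) - 1 + d = 2 * (d:ℤ) - 1 by ring] at this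
    rw [this]; ring
  -- the product identity
  obtain ⟨e, rfl⟩ : ∃ e, d = e + 1 := ⟨d - 1, by omega⟩
  set d := e + 1 with hdd
  have hD : auxA a b (d+1) * B ((d:ℤ) - 1) - auxA a b d * B (d:ℤ) =
      (-1 : ℤ) ^ (d - 1) * ∏ i ∈ Finset.range d, a ((i:ℤ) + 1) := by
    have hdet := aux_det a b B hBm1 hB0 hBrec d
    have hprod : (∏ i ∈ Finset.range d, (-a ((i:ℤ) + 1))) =
        (-1 : ℤ) ^ d * ∏ i ∈ Finset.range d, a ((i:ℤ) + 1) := by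
      rw [show (∏ i ∈ Finset.range d, (-a ((i:ℤ) + 1))) =
          ∏ i ∈ Finset.range d, ((-1) * a ((i:ℤ) + 1)) by simp,
        Finset.prod_mul_distrib, Finset.prod_const, Finset.card_range]
    rw [hprod] at hdet
    have : (-1 : ℤ) ^ d = -(-1 : ℤ) ^ (d - 1) := by
      rw [hdd]; simp [pow_succ]
    rw [this] at hdet
    linarith [hdet]
  -- the scalar recurrence
  have hscal : ∀ n : ℕ, B ((n:ℤ) - 1 + 2 * d) =
      (B (d:ℤ) + auxA a b d) * B ((n:ℤ) - 1 + d) +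
        (auxA a b (d+1) * B ((d:ℤ) - 1) - auxA a b d * B (d:ℤ)) * B ((n:ℤ) - 1) := by
    intro n
    have h1 := (main (n + d)).1
    rw [show ((n + d : ℕ):ℤ) - 1 + d = (n:ℤ) - 1 + 2 * d by push_cast; ring,
      show ((n + d : ℕ):ℤ) - 1 = (n:ℤ) - 1 + d by push_cast; ring] at h1
    have h2 := (main n).1
    have h3 := (main n).2
    linear_combination h1 - auxA a b d * h2 + B ((d:ℤ) - 1) * h3
  have hpos : 0 < B ((d:ℤ) - 1) := by
    have h := (aux_pos a b B hBm1 hB0 hBrec ha hb e).2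
    rw [show (d:ℤ) - 1 = (e:ℤ) by rw [hdd]; push_cast; ring]
    exact h
  refine ⟨⟨B (d:ℤ) + auxA a b d, hfact⟩, ?_, ?_⟩
  · intro ν hν
    obtain ⟨n, hn⟩ : ∃ n : ℕ, ν = (n:ℤ) - 1 := ⟨(ν + 1).toNat, by omega⟩
    subst hn
    have h := hscal n
    linear_combination B ((d:ℤ) - 1) * h - B ((n:ℤ) - 1 + d) * hfact +
      B ((d:ℤ) - 1) * B ((n:ℤ) - 1) * hD
  · intro ν hν
    obtain ⟨n, hn⟩ : ∃ n : ℕ, ν = (n:ℤ) - 1 := ⟨(ν + 1).toNat, by omega⟩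
    subst hn
    have h := hscal n
    have hdiv : B (2 * (d:ℤ) - 1) / B ((d:ℤ) - 1) = B (d:ℤ) + auxA a b d := by
      rw [hfact, Int.mul_ediv_cancel_left _ (ne_of_gt hpos)]
    rw [hdiv]
    linear_combination h + B ((n:ℤ) - 1) * hD
end

section
/- For every integer n ≥ 1, as real numbers, B_{(n+1)d−1} = ( C_d·B_{nd−1} + √( Δ·B_{nd−1}² + 4·(−D_d)^n·B_{d−1}² ) ) / 2; in particular the quantity under the square root, Δ·B_{nd−1}² + 4·(−D_d)^n·B_{d−1}², is nonnegative. -/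
/-- The solution of the recurrence with initial values `x` (at index `-1`) and `y` (at `0`),
offset so that `sol a b x y k` corresponds to index `k - 1`. -/
private def sol (a b : ℤ → ℤ) (x y : ℤ) : ℕ → ℤ
  | 0 => x
  | 1 => y
  | (k+2) => b ((k : ℤ) + 1) * sol a b x y (k+1) + a ((k : ℤ) + 1) * sol a b x y k

/-- Quadratic (square-root) formula for `B_{(n+1)d-1}` in terms of `B_{nd-1}`. -/
theorem sqrt_formula
    (d : ℕ) (hd : 1 ≤ d) (a b : ℤ → ℤ)
    (ha : ∀ ν : ℤ, 1 ≤ ν → 0 < a ν) (hb : ∀ ν : ℤ, 1 ≤ ν → 0 < b ν)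
    (hpa : ∀ ν : ℤ, 1 ≤ ν → a (ν + d) = a ν) (hpb : ∀ ν : ℤ, 1 ≤ ν → b (ν + d) = b ν)
    (B : ℤ → ℤ) (hBm1 : B (-1) = 0) (hB0 : B 0 = 1)
    (hBrec : ∀ ν : ℤ, 1 ≤ ν → B ν = b ν * B (ν - 1) + a ν * B (ν - 2))
    (Cd Dd Δ : ℤ)
    (hC : B ((d : ℤ) - 1) * Cd = B (2 * (d : ℤ) - 1))
    (hD : Dd = (-1 : ℤ) ^ (d - 1) * ∏ i ∈ Finset.range d, a ((i : ℤ) + 1))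
    (hΔ : Δ = Cd ^ 2 + 4 * Dd) :
    ∀ n : ℕ, 1 ≤ n →
      0 ≤ (Δ : ℝ) * (B ((n : ℤ) * d - 1) : ℝ) ^ 2 +
        4 * (-(Dd : ℝ)) ^ n * (B ((d : ℤ) - 1) : ℝ) ^ 2 ∧
      (B (((n : ℤ) + 1) * d - 1) : ℝ) =
        ((Cd : ℝ) * (B ((n : ℤ) * d - 1) : ℝ) +
          Real.sqrt ((Δ : ℝ) * (B ((n : ℤ) * d - 1) : ℝ) ^ 2 +
            4 * (-(Dd : ℝ)) ^ n * (B ((d : ℤ) - 1) : ℝ) ^ 2)) / 2 := by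
  set P : ℕ → ℤ := sol a b 0 1 with hPdef
  set Q : ℕ → ℤ := sol a b 1 0 with hQdef
  have hP0 : P 0 = 0 := rfl
  have hP1 : P 1 = 1 := rfl
  have hQ0 : Q 0 = 1 := rfl
  have hQ1 : Q 1 = 0 := rfl
  have hPrec : ∀ k : ℕ, P (k+2) = b ((k : ℤ) + 1) * P (k+1) + a ((k : ℤ) + 1) * P k :=
    fun k => rfl
  have hQrec : ∀ k : ℕ, Q (k+2) = b ((k : ℤ) + 1) * Q (k+1) + a ((k : ℤ) + 1) * Q k :=
    fun k => rfl
  -- extended periodicity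
  have hpa' : ∀ (m : ℕ) (ν : ℤ), 1 ≤ ν → a (ν + m * d) = a ν := by
    intro m
    induction m with
    | zero => intro ν hν; simp
    | succ m ih =>
      intro ν hν
      have h1 : ν + ((m : ℤ) + 1) * d = (ν + m * d) + d := by ring
      have h0 : (0 : ℤ) ≤ (m : ℤ) * d := by positivity
      have h2 : (1 : ℤ) ≤ ν + m * d := by linarith
      push_cast
      rw [h1, hpa _ h2, ih ν hν]
  have hpb' : ∀ (m : ℕ) (ν : ℤ), 1 ≤ ν → b (ν + m * d) = b ν := by
    intro m
    induction m with
    | zero => intro ν hν; simp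
    | succ m ih =>
      intro ν hν
      have h1 : ν + ((m : ℤ) + 1) * d = (ν + m * d) + d := by ring
      have h0 : (0 : ℤ) ≤ (m : ℤ) * d := by positivity
      have h2 : (1 : ℤ) ≤ ν + m * d := by linarith
      push_cast
      rw [h1, hpb _ h2, ih ν hν]
  -- shift identity
  have L2 : ∀ (m k : ℕ),
      B ((m : ℤ) * d + k - 1) = P k * B ((m : ℤ) * d) + Q k * B ((m : ℤ) * d - 1) := by
    intro m
    have key : ∀ k : ℕ,
        (B ((m : ℤ) * d + k - 1) = P k * B ((m : ℤ) * d) + Q k * B ((m : ℤ) * d - 1)) ∧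
        (B ((m : ℤ) * d + (k+1) - 1) = P (k+1) * B ((m : ℤ) * d) + Q (k+1) * B ((m : ℤ) * d - 1)) := by
      intro k
      induction k with
      | zero =>
        constructor
        · rw [hP0, hQ0]; push_cast; ring_nf
        · rw [hP1, hQ1]; push_cast; ring_nf
      | succ k ih =>
        refine ⟨ih.2, ?_⟩
        have h0 : (0 : ℤ) ≤ (m : ℤ) * d := by positivity
        have hk1 : (1 : ℤ) ≤ (k : ℤ) + 1 := by omega
        have hν : (1 : ℤ) ≤ (m : ℤ) * d + ((k : ℤ) + 1) := by linarith
        have hidx : (m : ℤ) * d + ((k : ℤ) + 1 + 1) - 1 = (m : ℤ) * d + ((k : ℤ) + 1) := by ring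
        have hrec := hBrec ((m : ℤ) * d + ((k : ℤ) + 1)) hν
        have hb' : b ((m : ℤ) * d + ((k : ℤ) + 1)) = b ((k : ℤ) + 1) := by
          have := hpb' m ((k : ℤ) + 1) hk1
          rw [← this]; ring_nf
        have ha' : a ((m : ℤ) * d + ((k : ℤ) + 1)) = a ((k : ℤ) + 1) := by
          have := hpa' m ((k : ℤ) + 1) hk1
          rw [← this]; ring_nf
        have e1 : (m : ℤ) * d + ((k : ℤ) + 1) - 1 = (m : ℤ) * d + ((k : ℤ) + 1) - 1 := rfl
        have e2 : (m : ℤ) * d + ((k : ℤ) + 1) - 2 = (m : ℤ) * d + (k : ℤ) - 1 := by ring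
        rw [hb', ha', e2] at hrec
        have ih1 := ih.1
        have ih2 := ih.2
        push_cast at ih2 ⊢
        rw [hidx, hrec, ih1]
        rw [show (m : ℤ) * d + ((k : ℤ) + 1) - 1 = (m : ℤ) * d + ((k : ℤ) + 1) - 1 from rfl] at ih2
        rw [ih2, hPrec k, hQrec k]
        ring
    exact fun k => (key k).1
  -- B in terms of P
  have hBP : ∀ k : ℕ, B ((k : ℤ) - 1) = P k := by
    intro k
    have := L2 0 k
    simp only [Nat.cast_zero, zero_mul, zero_add, hB0] at this
    simpa [hBm1] using this
  -- positivity
  have hPpos : ∀ k : ℕ, 0 ≤ P k ∧ 0 < P (k+1) := by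
    intro k
    induction k with
    | zero => exact ⟨le_refl 0, by rw [hP1]; norm_num⟩
    | succ k ih =>
      refine ⟨le_of_lt ih.2, ?_⟩
      rw [hPrec k]
      have hk1 : (1 : ℤ) ≤ (k : ℤ) + 1 := by omega
      have ha1 := ha ((k : ℤ) + 1) hk1
      have hb1 := hb ((k : ℤ) + 1) hk1
      nlinarith [ih.1, ih.2]
  have hQnonneg : ∀ k : ℕ, 0 ≤ Q k := by
    intro k
    induction k using Nat.strong_induction_on with
    | _ k ih =>
      match k with
      | 0 => rw [hQ0]; norm_num
      | 1 => rw [hQ1]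
      | (k+2) =>
        rw [hQrec k]
        have hk1 : (1 : ℤ) ≤ (k : ℤ) + 1 := by omega
        have ha1 := ha ((k : ℤ) + 1) hk1
        have hb1 := hb ((k : ℤ) + 1) hk1
        nlinarith [ih (k+1) (by omega), ih k (by omega)]
  -- Wronskian
  have hW : ∀ k : ℕ, P (k+1) * Q k - Q (k+1) * P k
      = (-1 : ℤ) ^ k * ∏ i ∈ Finset.range k, a ((i : ℤ) + 1) := by
    intro k
    induction k with
    | zero => simp [hP0, hP1, hQ0, hQ1]
    | succ k ih =>
      rw [Finset.prod_range_succ, hPrec k, hQrec k, pow_succ]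
      linear_combination (-(a ((k : ℤ) + 1))) * ih
  -- identify Cd and Dd
  have hBd1 : B ((d : ℤ) - 1) = P d := hBP d
  have hBd : B (d : ℤ) = P (d+1) := by
    have := hBP (d+1); push_cast at this
    rw [show ((d : ℤ)) = (d : ℤ) + 1 - 1 by ring]; exact this
  have hPdpos : 0 < P d := by
    obtain ⟨k, rfl⟩ : ∃ k, d = k + 1 := ⟨d - 1, by omega⟩
    exact (hPpos k).2
  have hB2d1 : B (2 * (d : ℤ) - 1) = P d * B (d : ℤ) + Q d * B ((d : ℤ) - 1) := by
    have h := L2 1 d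
    push_cast at h
    simp only [one_mul] at h
    rw [show (2 : ℤ) * (d : ℤ) - 1 = (d : ℤ) + d - 1 by ring]
    exact h
  have hCd : Cd = P (d+1) + Q d := by
    have h1 : B ((d : ℤ) - 1) * Cd = P d * (P (d+1) + Q d) := by
      rw [hC, hB2d1, hBd, hBd1]; ring
    rw [hBd1] at h1
    exact mul_left_cancel₀ (ne_of_gt hPdpos) h1
  have hDd : Dd = -(P (d+1) * Q d - Q (d+1) * P d) := by
    have hWd := hW d
    have hpow : (-1 : ℤ) ^ (d - 1) = -(-1 : ℤ) ^ d := by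
      obtain ⟨k, rfl⟩ : ∃ k, d = k + 1 := ⟨d - 1, by omega⟩
      simp [pow_succ]
    rw [hD, hpow]
    linear_combination hWd
  -- discriminant nonneg
  have hΔnn : 0 ≤ Δ := by
    have h1 : 0 ≤ Q (d+1) := hQnonneg (d+1)
    have h2 : 0 ≤ (P (d+1) - Q d)^2 := sq_nonneg _
    rw [hΔ, hCd, hDd]
    nlinarith [mul_nonneg h1 (le_of_lt hPdpos)]
  -- the sequence x n = B (n d - 1)
  set x : ℕ → ℤ := fun m => B ((m : ℤ) * d - 1) with hxdef
  have hx0 : x 0 = 0 := by simp only [hxdef, Nat.cast_zero, zero_mul, zero_sub]; exact hBm1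
  have hx1 : x 1 = P d := by
    simp only [hxdef, Nat.cast_one, one_mul]; exact hBd1
  set u : ℕ → ℤ := fun m => B ((m : ℤ) * d) with hudef
  have r1 : ∀ m : ℕ, x (m+1) = P d * u m + Q d * x m := by
    intro m
    have := L2 m d
    simp only [hxdef, hudef]
    push_cast
    rw [show ((m : ℤ) + 1) * d - 1 = (m : ℤ) * d + d - 1 by ring]
    exact this
  have r2 : ∀ m : ℕ, u (m+1) = P (d+1) * u m + Q (d+1) * x m := by
    intro m
    have := L2 m (d+1)
    push_cast at this
    simp only [hxdef, hudef]
    push_cast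
    rw [show ((m : ℤ) + 1) * d = (m : ℤ) * d + ((d : ℤ) + 1) - 1 by ring]
    exact this
  have xrec : ∀ m : ℕ, x (m+2) = Cd * x (m+1) + Dd * x m := by
    intro m
    have h1 := r1 (m+1)
    have h2 := r2 m
    have h3 := r1 m
    rw [h2] at h1
    rw [h1, h3, hCd, hDd]
    ring
  -- invariant
  have hE : ∀ m : ℕ, x (m+1)^2 - Cd * x (m+1) * x m - Dd * (x m)^2 = (-Dd)^m * (P d)^2 := by
    intro m
    induction m with
    | zero => rw [hx0, hx1]; ring
    | succ m ih =>
      rw [xrec m, pow_succ]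
      linear_combination (-Dd) * ih
  set t : ℕ → ℤ := fun m => 2 * x (m+1) - Cd * x m with htdef
  have tsq : ∀ m : ℕ, (t m)^2 = Δ * (x m)^2 + 4 * (-Dd)^m * (P d)^2 := by
    intro m
    have h := hE m
    simp only [htdef]
    rw [hΔ]
    linear_combination 4 * h
  -- t is nonnegative, via real roots
  have hCdpos : 0 < Cd := by
    rw [hCd]
    have := (hPpos d).2
    have := hQnonneg d
    omega
  have hΔR : (0 : ℝ) ≤ (Δ : ℝ) := by exact_mod_cast hΔnn
  set α : ℝ := ((Cd : ℝ) + Real.sqrt Δ) / 2 with hαdef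
  set β : ℝ := ((Cd : ℝ) - Real.sqrt Δ) / 2 with hβdef
  have hsum : α + β = (Cd : ℝ) := by rw [hαdef, hβdef]; ring
  have hprod : α * β = -(Dd : ℝ) := by
    have hsq : Real.sqrt Δ ^ 2 = (Δ : ℝ) := Real.sq_sqrt hΔR
    have h1 : α * β = ((Cd : ℝ)^2 - Real.sqrt Δ ^ 2) / 4 := by rw [hαdef, hβdef]; ring
    rw [h1, hsq]
    have h2 : (Δ : ℝ) = (Cd : ℝ)^2 + 4 * Dd := by exact_mod_cast hΔ
    rw [h2]; ring
  have hsqrtnn : 0 ≤ Real.sqrt Δ := Real.sqrt_nonneg _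
  have hCdR : (0 : ℝ) < (Cd : ℝ) := by exact_mod_cast hCdpos
  have hαnn : 0 ≤ α := by rw [hαdef]; linarith
  have hβabs : |β| ≤ α := by
    rw [abs_le, hαdef, hβdef]
    constructor <;> [linarith; linarith]
  have trec : ∀ m : ℕ, t (m+2) = Cd * t (m+1) + Dd * t m := by
    intro m
    simp only [htdef]
    rw [xrec (m+1), xrec m]
    ring
  have treal : ∀ m : ℕ, (t m : ℝ) = (α^m + β^m) * (P d : ℝ) ∧
      (t (m+1) : ℝ) = (α^(m+1) + β^(m+1)) * (P d : ℝ) := by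
    intro m
    induction m with
    | zero =>
      constructor
      · have h : t 0 = 2 * P d := by simp only [htdef]; rw [hx1, hx0]; ring
        rw [h]; push_cast; ring
      · have h : t 1 = Cd * P d := by
          simp only [htdef]
          rw [show (1:ℕ)+1 = 0+2 from rfl, xrec 0, hx0, hx1]; ring
        rw [h]; push_cast; rw [← hsum]; ring
    | succ m ih =>
      refine ⟨ih.2, ?_⟩
      have h := trec m
      rw [h]
      push_cast
      rw [ih.1, ih.2, ← hsum]
      have hD' : (Dd : ℝ) = -(α * β) := by rw [hprod]; ring
      rw [hD']
      ring
  have htnn : ∀ m : ℕ, 0 ≤ t m := by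
    intro m
    have h1 := (treal m).1
    have h2 : 0 ≤ α^m + β^m := by
      have habs : |β|^m ≤ α^m := pow_le_pow_left₀ (abs_nonneg β) hβabs m
      have h3 : -(|β|^m) ≤ β^m := by
        rw [← abs_pow]
        exact neg_abs_le _
      linarith
    have h3 : (0 : ℝ) ≤ (P d : ℝ) := by exact_mod_cast le_of_lt hPdpos
    have h4 : (0 : ℝ) ≤ (t m : ℝ) := by rw [h1]; positivity
    exact_mod_cast h4
  -- conclusion
  intro n hn
  have hidx : (((n : ℤ) + 1) * d - 1) = (((n+1 : ℕ) : ℤ) * d - 1) := by push_cast; ring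
  have hxn : B ((n : ℤ) * d - 1) = x n := rfl
  have hxn1 : B (((n : ℤ) + 1) * d - 1) = x (n+1) := by rw [hidx]
  have hexpr : (Δ : ℝ) * (B ((n : ℤ) * d - 1) : ℝ) ^ 2 +
      4 * (-(Dd : ℝ)) ^ n * (B ((d : ℤ) - 1) : ℝ) ^ 2 = ((t n : ℤ) : ℝ)^2 := by
    have h := tsq n
    have hcast : ((t n : ℤ) : ℝ)^2 = ((Δ : ℤ) : ℝ) * ((x n : ℤ) : ℝ)^2
        + 4 * ((-Dd : ℤ) : ℝ)^n * ((P d : ℤ) : ℝ)^2 := by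
      exact_mod_cast congrArg (fun z : ℤ => (z : ℝ)) h
    rw [hxn, hBd1, hcast]
    push_cast
    ring
  constructor
  · rw [hexpr]; exact sq_nonneg _
  · rw [hexpr, Real.sqrt_sq (by exact_mod_cast htnn n), hxn, hxn1]
    have ht : (t n : ℝ) = 2 * (x (n+1) : ℝ) - (Cd : ℝ) * (x n : ℝ) := by
      simp only [htdef]; push_cast; ring
    rw [ht]
    ring
end

section
/- In the ring of formal power series ℤ⟦X⟧, one has (1 − C_d·X^d − D_d·X^{2d}) · (∑_{n≥0} B_n·X^n) = ∑_{n=0}^{2d−1} B_n·X^n − C_d·∑_{n=0}^{d−1} B_n·X^{n+d}. -/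
open Matrix PowerSeries

/-- Continuant step matrix. -/
def auxM (a b : ℤ → ℤ) (ν : ℕ) : Matrix (Fin 2) (Fin 2) ℤ := !![b ν, a ν; 1, 0]

/-- Product `M ν * ⋯ * M 1`. -/
def auxQ (a b : ℤ → ℤ) : ℕ → Matrix (Fin 2) (Fin 2) ℤ
  | 0 => 1
  | n + 1 => auxM a b (n + 1) * auxQ a b n

/-- Cayley–Hamilton for 2×2 integer matrices. -/
lemma ch2 (A : Matrix (Fin 2) (Fin 2) ℤ) :
    A * A = (A 0 0 + A 1 1) • A - A.det • (1 : Matrix (Fin 2) (Fin 2) ℤ) := by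
  ext i j
  simp only [Matrix.mul_apply, Matrix.sub_apply, Matrix.smul_apply, smul_eq_mul,
    Matrix.one_apply, Matrix.det_fin_two, Fin.sum_univ_two]
  fin_cases i <;> fin_cases j <;> simp <;> ring

lemma auxM_mul (a b : ℤ → ℤ) (ν : ℕ) (P : Matrix (Fin 2) (Fin 2) ℤ) :
    (auxM a b ν * P) 0 0 = b ν * P 0 0 + a ν * P 1 0 ∧
      (auxM a b ν * P) 1 0 = P 0 0 := by
  constructor <;> simp [auxM, Matrix.mul_apply, Fin.sum_univ_two]

/-- Generating function identity for the periodic continuant denominators,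
as an identity of formal power series over `ℤ`. -/
theorem generating_function
    (d : ℕ) (hd : 1 ≤ d) (a b : ℤ → ℤ)
    (ha : ∀ ν : ℤ, 1 ≤ ν → 0 < a ν) (hb : ∀ ν : ℤ, 1 ≤ ν → 0 < b ν)
    (hpa : ∀ ν : ℤ, 1 ≤ ν → a (ν + d) = a ν) (hpb : ∀ ν : ℤ, 1 ≤ ν → b (ν + d) = b ν)
    (B : ℤ → ℤ) (hBm1 : B (-1) = 0) (hB0 : B 0 = 1)
    (hBrec : ∀ ν : ℤ, 1 ≤ ν → B ν = b ν * B (ν - 1) + a ν * B (ν - 2))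
    (Cd Dd Δ : ℤ)
    (hC : B ((d : ℤ) - 1) * Cd = B (2 * (d : ℤ) - 1))
    (hD : Dd = (-1 : ℤ) ^ (d - 1) * ∏ i ∈ Finset.range d, a ((i : ℤ) + 1))
    (hΔ : Δ = Cd ^ 2 + 4 * Dd) :
    ((1 : PowerSeries ℤ) - PowerSeries.C (R := ℤ) Cd * PowerSeries.X ^ d -
        PowerSeries.C (R := ℤ) Dd * PowerSeries.X ^ (2 * d)) *
      PowerSeries.mk (fun n : ℕ => B (n : ℤ)) =
    (∑ n ∈ Finset.range (2 * d), PowerSeries.C (R := ℤ) (B (n : ℤ)) * PowerSeries.X ^ n) -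
      PowerSeries.C (R := ℤ) Cd *
        ∑ n ∈ Finset.range d, PowerSeries.C (R := ℤ) (B (n : ℤ)) * PowerSeries.X ^ (n + d) := by
  -- entries of Q
  have hQent : ∀ n : ℕ, auxQ a b n 0 0 = B n ∧ auxQ a b n 1 0 = B ((n : ℤ) - 1) := by
    intro n
    induction n with
    | zero =>
      constructor
      · simp [auxQ, Matrix.one_apply, hB0]
      · simp only [auxQ, Matrix.one_apply]
        norm_num [hBm1]
    | succ n ih =>
      have h1 : (1 : ℤ) ≤ (n : ℤ) + 1 := by omega
      have hr := hBrec ((n : ℤ) + 1) h1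
      have e1 : (n : ℤ) + 1 - 1 = (n : ℤ) := by ring
      have e2 : (n : ℤ) + 1 - 2 = (n : ℤ) - 1 := by ring
      rw [e1, e2] at hr
      have hc : ((n + 1 : ℕ) : ℤ) = (n : ℤ) + 1 := by push_cast; ring
      obtain ⟨e00, e10⟩ := auxM_mul a b (n + 1) (auxQ a b n)
      constructor
      · show (auxM a b (n + 1) * auxQ a b n) 0 0 = _
        rw [e00, ih.1, ih.2, hc, hr]
      · show (auxM a b (n + 1) * auxQ a b n) 1 0 = _
        rw [e10, ih.1, hc, e1]
  -- determinant of Q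
  have hQdet : ∀ n : ℕ, (auxQ a b n).det = ∏ i ∈ Finset.range n, (-(a ((i : ℤ) + 1))) := by
    intro n
    induction n with
    | zero => simp [auxQ]
    | succ n ih =>
      show (auxM a b (n + 1) * auxQ a b n).det = _
      have hc : ((n + 1 : ℕ) : ℤ) = (n : ℤ) + 1 := by push_cast; ring
      have hMdet : (auxM a b (n + 1)).det = -(a ((n : ℤ) + 1)) := by
        unfold auxM
        rw [Matrix.det_fin_two_of, hc]
        ring
      rw [Matrix.det_mul, ih, hMdet, Finset.prod_range_succ]
      ring
  -- periodicity of M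
  have hMper : ∀ ν : ℕ, 1 ≤ ν → auxM a b (ν + d) = auxM a b ν := by
    intro ν hν
    have h1 : (1 : ℤ) ≤ (ν : ℤ) := by exact_mod_cast hν
    unfold auxM
    have hc : ((ν + d : ℕ) : ℤ) = (ν : ℤ) + (d : ℤ) := by push_cast; ring
    rw [hc, hpa ν h1, hpb ν h1]
  -- shift property
  have hQshift : ∀ n : ℕ, auxQ a b (n + d) = auxQ a b n * auxQ a b d := by
    intro n
    induction n with
    | zero => simp [auxQ]
    | succ n ih =>
      have h1 : n + 1 + d = (n + d) + 1 := by omega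
      rw [h1]
      show auxM a b (n + d + 1) * auxQ a b (n + d) = _
      have h2 : n + d + 1 = (n + 1) + d := by omega
      rw [h2, hMper (n + 1) (by omega), ih]
      show _ = auxM a b (n + 1) * auxQ a b n * auxQ a b d
      rw [mul_assoc]
  -- positivity of B on ℕ
  have hBpos : ∀ n : ℕ, 0 < B (n : ℤ) ∧ 0 ≤ B ((n : ℤ) - 1) := by
    intro n
    induction n with
    | zero =>
      refine ⟨by simp [hB0], ?_⟩
      norm_num [hBm1]
    | succ n ih =>
      have h1 : (1 : ℤ) ≤ (n : ℤ) + 1 := by omega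
      have hr := hBrec ((n : ℤ) + 1) h1
      have hc : ((n + 1 : ℕ) : ℤ) = (n : ℤ) + 1 := by push_cast; ring
      constructor
      · rw [hc, hr]
        have hb' := hb ((n : ℤ) + 1) h1
        have ha' := ha ((n : ℤ) + 1) h1
        have e1 : (n : ℤ) + 1 - 1 = (n : ℤ) := by ring
        have e2 : (n : ℤ) + 1 - 2 = (n : ℤ) - 1 := by ring
        rw [e1, e2]
        nlinarith [ih.1, ih.2]
      · rw [hc]
        have : (n : ℤ) + 1 - 1 = (n : ℤ) := by ring
        rw [this]
        exact ih.1.le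
  -- trace and determinant of the period matrix
  set N := auxQ a b d with hN
  set t : ℤ := N 0 0 + N 1 1 with ht
  have hdet : N.det = -Dd := by
    rw [hQdet d, hD]
    have hprod : ∀ k : ℕ, ∏ i ∈ Finset.range k, (-(a ((i : ℤ) + 1))) =
        (-1 : ℤ) ^ k * ∏ i ∈ Finset.range k, a ((i : ℤ) + 1) := by
      intro k
      induction k with
      | zero => simp
      | succ k ih =>
        rw [Finset.prod_range_succ, Finset.prod_range_succ, ih, pow_succ]
        ring
    have hpow : (-1 : ℤ) ^ d = -(-1 : ℤ) ^ (d - 1) := by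
      conv_lhs => rw [show d = (d - 1) + 1 from by omega]
      rw [pow_succ]; ring
    rw [hprod d, hpow]
    ring
  have hN2 : N * N = t • N + Dd • (1 : Matrix (Fin 2) (Fin 2) ℤ) := by
    rw [ch2 N, hdet, ← ht]
    module
  -- matrix recurrence
  have hQrec : ∀ n : ℕ, auxQ a b (n + 2 * d) =
      t • auxQ a b (n + d) + Dd • auxQ a b n := by
    intro n
    have h1 : n + 2 * d = (n + d) + d := by omega
    rw [h1, hQshift (n + d), hQshift n, mul_assoc, hN2, Matrix.mul_add,
      mul_smul_comm, mul_smul_comm, mul_one, ← hQshift n]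
  -- t = Cd
  have htC : t = Cd := by
    have h := congrArg (fun A => A 1 0) (hQrec 0)
    simp only [zero_add, Matrix.add_apply, Matrix.smul_apply, smul_eq_mul] at h
    have e0 : auxQ a b 0 1 0 = 0 := by simp [auxQ, Matrix.one_apply]
    rw [e0, mul_zero, add_zero, (hQent (2 * d)).2, (hQent d).2] at h
    have hc2 : ((2 * d : ℕ) : ℤ) - 1 = 2 * (d : ℤ) - 1 := by push_cast; ring
    rw [hc2] at h
    have hBd : 0 < B ((d : ℤ) - 1) := by
      have := (hBpos (d - 1)).1
      have hc : ((d - 1 : ℕ) : ℤ) = (d : ℤ) - 1 := by omega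
      rwa [hc] at this
    have hcc : B ((d : ℤ) - 1) * Cd = B ((d : ℤ) - 1) * t := by
      rw [hC, h]; ring
    have := mul_left_cancel₀ (ne_of_gt hBd) hcc
    omega
  -- key scalar recurrence
  have key : ∀ m : ℕ, B ((m + 2 * d : ℕ) : ℤ) =
      Cd * B ((m + d : ℕ) : ℤ) + Dd * B (m : ℤ) := by
    intro m
    have h := congrArg (fun A => A 0 0) (hQrec m)
    simp only [Matrix.add_apply, Matrix.smul_apply, smul_eq_mul] at h
    rw [(hQent (m + 2 * d)).1, (hQent (m + d)).1, (hQent m).1, htC] at h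
    exact h
  -- power series identity, coefficientwise
  ext n
  rw [sub_mul, sub_mul, one_mul, map_sub, map_sub, map_sub]
  rw [mul_right_comm (PowerSeries.C (R := ℤ) Cd) _ (PowerSeries.mk fun n : ℕ => B (n : ℤ)),
    mul_right_comm (PowerSeries.C (R := ℤ) Dd) _ (PowerSeries.mk fun n : ℕ => B (n : ℤ))]
  rw [PowerSeries.coeff_mul_X_pow', PowerSeries.coeff_mul_X_pow']
  rw [PowerSeries.coeff_C_mul, PowerSeries.coeff_C_mul, PowerSeries.coeff_mk]
  rw [PowerSeries.coeff_C_mul]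
  rw [map_sum, map_sum]
  simp only [PowerSeries.coeff_C_mul, PowerSeries.coeff_X_pow, PowerSeries.coeff_mk,
    mul_ite, mul_one, mul_zero]
  rcases lt_or_ge n d with h1 | h1
  · rw [if_neg (by omega), if_neg (by omega)]
    rw [Finset.sum_eq_single n (fun m _ hm => by rw [if_neg (by omega)])
      (fun hn => absurd (Finset.mem_range.2 (by omega)) hn)]
    rw [if_pos rfl]
    rw [Finset.sum_eq_zero (fun m _ => by rw [if_neg (by omega)])]
    ring
  · rcases lt_or_ge n (2 * d) with h2 | h2
    · rw [if_pos h1, if_neg (by omega)]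
      rw [Finset.sum_eq_single n (fun m _ hm => by rw [if_neg (by omega)])
        (fun hn => absurd (Finset.mem_range.2 (by omega)) hn)]
      rw [if_pos rfl]
      rw [Finset.sum_eq_single (n - d)
        (fun m _ hm => by rw [if_neg (by omega)])
        (fun hn => absurd (Finset.mem_range.2 (by omega)) hn)]
      rw [if_pos (by omega)]
      ring
    · rw [if_pos h1, if_pos h2]
      rw [Finset.sum_eq_zero (fun m hm => by
        rw [if_neg (by have := Finset.mem_range.1 hm; omega)])]
      rw [Finset.sum_eq_zero (fun m hm => by
        rw [if_neg (by have := Finset.mem_range.1 hm; omega)])]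
      have hk := key (n - 2 * d)
      have e1 : n - 2 * d + 2 * d = n := by omega
      have e2 : n - 2 * d + d = n - d := by omega
      rw [e1, e2] at hk
      rw [hk]
      ring
end

section
/- (Binet's formula) For all integers n ≥ 1 and r ≥ −1, as real numbers, B_{nd+r} = (−D_d)^{n−1} · ( ((α^n − β^n)/(α − β))·B_{d+r} − ((α^{n−1} − β^{n−1})/(α − β))·B_r ). -/
namespace BinetAux
open Matrix

def Wk (M : ℤ → Matrix (Fin 2) (Fin 2) ℤ) : ℕ → ℤ → Matrix (Fin 2) (Fin 2) ℤ
  | 0, _ => 1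
  | (k+1), m => M (m + (k+1)) * Wk M k m

lemma Wk_succ_right (M : ℤ → Matrix (Fin 2) (Fin 2) ℤ) (k : ℕ) (m : ℤ) :
    Wk M (k+1) m = Wk M k (m+1) * M (m+1) := by
  induction k generalizing m with
  | zero => simp [Wk]
  | succ k ih =>
    have h1 : Wk M (k+2) m = M (m + ((k:ℤ) + 2)) * Wk M (k+1) m := rfl
    have h2 : Wk M (k+1) (m+1) = M ((m+1) + ((k:ℤ)+1)) * Wk M k (m+1) := rfl
    have h3 : m + ((k:ℤ) + 2) = (m+1) + ((k:ℤ)+1) := by ring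
    rw [h1, ih m, h2, Matrix.mul_assoc, h3]

lemma ch2 (A : Matrix (Fin 2) (Fin 2) ℤ) : A * A = A.trace • A - A.det • 1 := by
  rw [Matrix.eta_fin_two A, Matrix.mul_fin_two, Matrix.trace_fin_two_of, Matrix.det_fin_two_of]
  ext i j; fin_cases i <;> fin_cases j <;> simp [Matrix.one_fin_two] <;> ring

theorem key_rec (d : ℕ) (hd : 1 ≤ d) (a b : ℤ → ℤ)
    (ha : ∀ ν : ℤ, 1 ≤ ν → 0 < a ν) (hb : ∀ ν : ℤ, 1 ≤ ν → 0 < b ν)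
    (hpa : ∀ ν : ℤ, 1 ≤ ν → a (ν + d) = a ν) (hpb : ∀ ν : ℤ, 1 ≤ ν → b (ν + d) = b ν)
    (B : ℤ → ℤ) (hBm1 : B (-1) = 0) (hB0 : B 0 = 1)
    (hBrec : ∀ ν : ℤ, 1 ≤ ν → B ν = b ν * B (ν - 1) + a ν * B (ν - 2))
    (Cd Dd : ℤ)
    (hC : B ((d : ℤ) - 1) * Cd = B (2 * (d : ℤ) - 1))
    (hD : Dd = (-1 : ℤ) ^ (d - 1) * ∏ i ∈ Finset.range d, a ((i : ℤ) + 1)) :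
    ∀ m : ℤ, -1 ≤ m → B (m + 2 * (d:ℤ)) = Cd * B (m + (d:ℤ)) + Dd * B m := by
  set M : ℤ → Matrix (Fin 2) (Fin 2) ℤ := fun ν => !![b ν, a ν; 1, 0] with hM
  set v : ℤ → Fin 2 → ℤ := fun ν => ![B ν, B (ν - 1)] with hv
  have Mper : ∀ ν : ℤ, 1 ≤ ν → M (ν + d) = M ν := by
    intro ν hν; simp only [hM]; rw [hpa ν hν, hpb ν hν]
  have step : ∀ ν : ℤ, 1 ≤ ν → M ν *ᵥ v (ν - 1) = v ν := by
    intro ν hν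
    funext i
    fin_cases i <;>
      simp [hM, hv, Matrix.mulVec, dotProduct, Fin.sum_univ_two]
    · rw [hBrec ν hν, show ν - 1 - 1 = ν - 2 by ring]
  have vec : ∀ k : ℕ, ∀ m : ℤ, 0 ≤ m → (Wk M k m) *ᵥ (v m) = v (m + k) := by
    intro k
    induction k with
    | zero => intro m hm; simp [Wk]
    | succ k ih =>
      intro m hm
      have h1 : Wk M (k+1) m = M (m + ((k:ℤ)+1)) * Wk M k m := rfl
      rw [h1, ← Matrix.mulVec_mulVec, ih m hm]
      have := step (m + ((k:ℤ)+1)) (by omega)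
      rw [show m + ((k:ℤ)+1) - 1 = m + (k:ℤ) by ring] at this
      rw [this]
      push_cast; ring_nf
  have Wper : ∀ k : ℕ, ∀ m : ℤ, 0 ≤ m → Wk M k (m + d) = Wk M k m := by
    intro k
    induction k with
    | zero => intro m hm; rfl
    | succ k ih =>
      intro m hm
      have h1 : Wk M (k+1) (m + d) = M (m + (d:ℤ) + ((k:ℤ)+1)) * Wk M k (m + d) := rfl
      have h2 : Wk M (k+1) m = M (m + ((k:ℤ)+1)) * Wk M k m := rfl
      rw [h1, h2, ih m hm, show m + (d:ℤ) + ((k:ℤ)+1) = (m + ((k:ℤ)+1)) + d by ring,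
        Mper _ (by omega)]
  obtain ⟨e, he⟩ : ∃ e, d = e + 1 := ⟨d - 1, by omega⟩
  have inv : ∀ m : ℤ, 0 ≤ m →
      (Wk M d m).trace = (Wk M d 0).trace ∧ (Wk M d m).det = (Wk M d 0).det := by
    refine Int.le_induction ⟨rfl, rfl⟩ ?_
    intro m hm ih
    ·
      have h1 : Wk M d (m+1) = M ((m+1) + ((e:ℤ)+1)) * Wk M e (m+1) := by rw [he]; rfl
      have h2 : M ((m+1) + ((e:ℤ)+1)) = M (m+1) := by
        have hh := Mper (m+1) (by omega)
        rw [show (m+1) + ((e:ℤ)+1) = (m+1) + ((e+1:ℕ):ℤ) by push_cast; ring, ← he]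
        exact hh
      have h3 : Wk M d m = Wk M e (m+1) * M (m+1) := by rw [he]; exact Wk_succ_right M e m
      constructor
      · rw [h1, h2, Matrix.trace_mul_comm, ← h3]; exact ih.1
      · rw [h1, h2, Matrix.det_mul, mul_comm, ← Matrix.det_mul, ← h3]; exact ih.2
  have detWk : ∀ k : ℕ, (Wk M k 0).det = (-1:ℤ)^k * ∏ i ∈ Finset.range k, a ((i:ℤ)+1) := by
    intro k
    induction k with
    | zero => simp [Wk]
    | succ k ih =>
      have h1 : Wk M (k+1) 0 = M (0 + ((k:ℤ)+1)) * Wk M k 0 := rfl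
      rw [h1, Matrix.det_mul, ih, Finset.prod_range_succ]
      have : (M (0 + ((k:ℤ)+1))).det = -a ((k:ℤ)+1) := by
        simp [hM, Matrix.det_fin_two_of]
      rw [this]; ring
  have detW0 : (Wk M d 0).det = -Dd := by
    rw [detWk, hD, show d - 1 = e by omega, he]
    rw [pow_succ]; ring
  set t : ℤ := (Wk M d 0).trace with ht
  -- scalar recurrences for m ≥ 0 (component 0) and the component-1 identity
  have main : ∀ m : ℤ, 0 ≤ m → v (m + 2*(d:ℤ)) = fun i => t * v (m + d) i + Dd * v m i := by
    intro m hm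
    have e1 : v (m + 2*(d:ℤ)) = (Wk M d (m + d)) *ᵥ (v (m + d)) := by
      rw [vec d (m + d) (by omega), show m + (d:ℤ) + d = m + 2*d by ring]
    rw [e1, Wper d m hm, ← vec d m hm, Matrix.mulVec_mulVec, ch2 (Wk M d m),
      (inv m hm).1, (inv m hm).2, detW0]
    rw [Matrix.sub_mulVec, Matrix.smul_mulVec, Matrix.smul_mulVec,
      Matrix.one_mulVec, vec d m hm]
    funext i
    simp only [Pi.sub_apply, Pi.smul_apply, Pi.neg_apply, smul_eq_mul]
    ring
  have hBd1pos : 0 < B ((d:ℤ) - 1) := by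
    have pos : ∀ n : ℕ, 0 < B (n:ℤ) ∧ 0 ≤ B ((n:ℤ) - 1) := by
      intro n
      induction n with
      | zero => simp [hB0, hBm1]
      | succ n ih =>
        have h1 : ((n:ℤ)+1) - 1 = (n:ℤ) := by ring
        have h2 : ((n:ℤ)+1) - 2 = (n:ℤ) - 1 := by ring
        have := hBrec ((n:ℤ)+1) (by omega)
        rw [h1, h2] at this
        constructor
        · push_cast; rw [this]
          have := ha ((n:ℤ)+1) (by omega)
          have := hb ((n:ℤ)+1) (by omega)
          nlinarith [ih.1, ih.2]
        · push_cast; rw [h1]; exact le_of_lt ih.1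
      
    have := (pos (d - 1)).1
    rwa [show ((d-1 : ℕ) : ℤ) = (d:ℤ) - 1 by omega] at this
  have comp1 : B (2*(d:ℤ) - 1) = t * B ((d:ℤ) - 1) := by
    have h0 := congrFun (main 0 le_rfl) 1
    simp only [hv, Matrix.cons_val_one, Matrix.head_cons, Matrix.cons_val_zero] at h0
    rw [show (0:ℤ) + 2*(d:ℤ) - 1 = 2*(d:ℤ) - 1 by ring,
      show (0:ℤ) + (d:ℤ) - 1 = (d:ℤ) - 1 by ring,
      show (0:ℤ) - 1 = (-1:ℤ) by ring, hBm1] at h0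
    rw [h0]; ring
  have hteq : t = Cd := by
    have : B ((d:ℤ) - 1) * Cd = B ((d:ℤ) - 1) * t := by
      rw [hC]; linear_combination comp1
    exact (mul_left_cancel₀ (ne_of_gt hBd1pos) this).symm
  intro m hm
  rcases eq_or_lt_of_le hm with hmeq | hmlt
  · -- m = -1
    subst hmeq
    rw [show (-1:ℤ) + 2*(d:ℤ) = 2*(d:ℤ) - 1 by ring,
      show (-1:ℤ) + (d:ℤ) = (d:ℤ) - 1 by ring, hBm1, comp1, hteq]
    ring
  · have hm0 : 0 ≤ m := by omega
    have := congrFun (main m hm0) 0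
    simp only [hv] at this
    rw [hteq] at this
    simpa using this

noncomputable def Ubin (α β : ℝ) : ℕ → ℝ := fun n => (α ^ n - β ^ n) / (α - β)

end BinetAux

/-- Binet's formula for the periodic continuant denominators. -/
theorem binet_formula
    (d : ℕ) (hd : 1 ≤ d) (a b : ℤ → ℤ)
    (ha : ∀ ν : ℤ, 1 ≤ ν → 0 < a ν) (hb : ∀ ν : ℤ, 1 ≤ ν → 0 < b ν)
    (hpa : ∀ ν : ℤ, 1 ≤ ν → a (ν + d) = a ν) (hpb : ∀ ν : ℤ, 1 ≤ ν → b (ν + d) = b ν)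
    (B : ℤ → ℤ) (hBm1 : B (-1) = 0) (hB0 : B 0 = 1)
    (hBrec : ∀ ν : ℤ, 1 ≤ ν → B ν = b ν * B (ν - 1) + a ν * B (ν - 2))
    (Cd Dd Δ : ℤ)
    (hC : B ((d : ℤ) - 1) * Cd = B (2 * (d : ℤ) - 1))
    (hD : Dd = (-1 : ℤ) ^ (d - 1) * ∏ i ∈ Finset.range d, a ((i : ℤ) + 1))
    (hΔ : Δ = Cd ^ 2 + 4 * Dd) (hΔpos : 0 < Δ)
    (α β : ℝ)
    (hα : α = (-(Cd : ℝ) + Real.sqrt (Δ : ℝ)) / (2 * (Dd : ℝ)))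
    (hβ : β = (-(Cd : ℝ) - Real.sqrt (Δ : ℝ)) / (2 * (Dd : ℝ))) :
    ∀ n : ℕ, 1 ≤ n → ∀ r : ℤ, -1 ≤ r →
      (B ((n : ℤ) * d + r) : ℝ) =
        (-(Dd : ℝ)) ^ (n - 1) *
          ((α ^ n - β ^ n) / (α - β) * (B ((d : ℤ) + r) : ℝ) -
            (α ^ (n - 1) - β ^ (n - 1)) / (α - β) * (B r : ℝ)) := by
  have key := BinetAux.key_rec d hd a b ha hb hpa hpb B hBm1 hB0 hBrec Cd Dd hC hD
  have hprod : 0 < ∏ i ∈ Finset.range d, a ((i : ℤ) + 1) :=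
    Finset.prod_pos fun i _ => ha _ (by omega)
  have hDdne : Dd ≠ 0 := by
    rw [hD]
    exact mul_ne_zero (pow_ne_zero _ (by norm_num)) (ne_of_gt hprod)
  have hDne : (Dd : ℝ) ≠ 0 := Int.cast_ne_zero.mpr hDdne
  have hΔr : (Δ : ℝ) = (Cd : ℝ) ^ 2 + 4 * (Dd : ℝ) := by
    exact_mod_cast congrArg (Int.cast : ℤ → ℝ) hΔ
  have hΔnn : (0 : ℝ) ≤ (Δ : ℝ) := by exact_mod_cast le_of_lt hΔpos
  have hs : Real.sqrt (Δ : ℝ) ^ 2 = (Δ : ℝ) := Real.sq_sqrt hΔnn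
  have hspos : 0 < Real.sqrt (Δ : ℝ) := Real.sqrt_pos.mpr (by exact_mod_cast hΔpos)
  have hsub : α - β = Real.sqrt (Δ : ℝ) / (Dd : ℝ) := by
    rw [hα, hβ]; field_simp; ring
  have hsubne : α - β ≠ 0 := by
    rw [hsub]; exact div_ne_zero (ne_of_gt hspos) hDne
  have hrootα : (Dd : ℝ) * α ^ 2 + (Cd : ℝ) * α - 1 = 0 := by
    rw [hα]; field_simp; nlinarith [hs, hΔr]
  have hrootβ : (Dd : ℝ) * β ^ 2 + (Cd : ℝ) * β - 1 = 0 := by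
    rw [hβ]; field_simp; nlinarith [hs, hΔr]
  set U : ℕ → ℝ := BinetAux.Ubin α β with hUdef
  have hU : ∀ n : ℕ, U n = (α ^ n - β ^ n) / (α - β) := fun n => rfl
  have hU0 : U 0 = 0 := by rw [hU]; simp
  have hU1 : U 1 = 1 := by rw [hU]; simp [div_self hsubne]
  have hUrec : ∀ n : ℕ, (Dd : ℝ) * U (n + 2) + (Cd : ℝ) * U (n + 1) - U n = 0 := by
    intro n
    rw [hU, hU, hU]
    field_simp
    linear_combination α ^ n * hrootα - β ^ n * hrootβ
  intro n hn r hr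
  have claim : ∀ m : ℕ,
      (B (((m : ℤ) + 1) * d + r) : ℝ) =
        (-(Dd : ℝ)) ^ m * (U (m + 1) * (B ((d : ℤ) + r) : ℝ) - U m * (B r : ℝ)) ∧
      (B (((m : ℤ) + 2) * d + r) : ℝ) =
        (-(Dd : ℝ)) ^ (m + 1) * (U (m + 2) * (B ((d : ℤ) + r) : ℝ) - U (m + 1) * (B r : ℝ)) := by
    intro m
    induction m with
    | zero =>
      constructor
      · rw [show ((0 : ℕ) : ℤ) + 1 = 1 by norm_num]
        rw [show (1 : ℤ) * d + r = (d : ℤ) + r by ring]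
        simp [hU0, hU1]
      · have hk : (B (((0 : ℤ) + 2) * d + r) : ℝ) =
            (Cd : ℝ) * (B ((d : ℤ) + r) : ℝ) + (Dd : ℝ) * (B r : ℝ) := by
          have := key r hr
          rw [show r + 2 * (d : ℤ) = ((0 : ℤ) + 2) * d + r by ring,
            show r + (d : ℤ) = (d : ℤ) + r by ring] at this
          exact_mod_cast this
        rw [show ((0 : ℕ) : ℤ) = (0 : ℤ) by norm_num, hk]
        have h2 := hUrec 0
        rw [hU0, hU1] at h2
        rw [hU1]
        linear_combination (B ((d : ℤ) + r) : ℝ) * h2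
    | succ m ih =>
      refine ⟨by
        rw [show ((m + 1 : ℕ) : ℤ) + 1 = (m : ℤ) + 2 by push_cast; ring]
        exact ih.2, ?_⟩
      -- main step
      have hM0 : (-1 : ℤ) ≤ ((m : ℤ) + 1) * d + r := by
        have : (1 : ℤ) ≤ ((m : ℤ) + 1) * d := by
          have : (1 : ℤ) * 1 ≤ ((m : ℤ) + 1) * d := by
            apply mul_le_mul <;> omega
          omega
        omega
      have hk : (B ((((m : ℤ) + 1) + 2) * d + r) : ℝ) =
          (Cd : ℝ) * (B (((m : ℤ) + 2) * d + r) : ℝ) + (Dd : ℝ) * (B (((m : ℤ) + 1) * d + r) : ℝ) := by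
        have := key (((m : ℤ) + 1) * d + r) hM0
        rw [show ((m : ℤ) + 1) * d + r + 2 * (d : ℤ) = (((m : ℤ) + 1) + 2) * d + r by ring,
          show ((m : ℤ) + 1) * d + r + (d : ℤ) = ((m : ℤ) + 2) * d + r by ring] at this
        exact_mod_cast this
      rw [show ((m + 1 : ℕ) : ℤ) + 2 = ((m : ℤ) + 1) + 2 by push_cast; ring, hk, ih.1, ih.2]
      have r1 := hUrec (m + 1)
      have r0 := hUrec m
      rw [show (m + 1 + 1) = m + 2 from rfl, show (m + 1 + 2) = m + 3 from rfl] at r1 ⊢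
      linear_combination ((-(Dd : ℝ)) ^ m * (-((Dd : ℝ) * (B ((d : ℤ) + r) : ℝ)))) * r1 +
        ((-(Dd : ℝ)) ^ m * ((Dd : ℝ) * (B r : ℝ))) * r0
  obtain ⟨m, rfl⟩ : ∃ m, n = m + 1 := ⟨n - 1, by omega⟩
  have := claim m |>.1
  rw [show ((m + 1 : ℕ) : ℤ) = (m : ℤ) + 1 by push_cast; ring,
    show (m + 1) - 1 = m by omega, ← hU (m + 1), ← hU m]
  exact this
end

section
/- For every integer r ≥ 0, the sequence of real numbers n ↦ B_{nd+r}/B_{nd+r−1} converges as n → ∞ to (β·B_{d+r} − B_r)/(β·B_{d+r−1} − B_{r−1}). -/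
set_option maxHeartbeats 2000000 in
/-- Limit of ratios of consecutive terms of the periodic continuant denominators. -/
theorem limit_consecutive_terms
    (d : ℕ) (hd : 1 ≤ d) (a b : ℤ → ℤ)
    (ha : ∀ ν : ℤ, 1 ≤ ν → 0 < a ν) (hb : ∀ ν : ℤ, 1 ≤ ν → 0 < b ν)
    (hpa : ∀ ν : ℤ, 1 ≤ ν → a (ν + d) = a ν) (hpb : ∀ ν : ℤ, 1 ≤ ν → b (ν + d) = b ν)
    (B : ℤ → ℤ) (hBm1 : B (-1) = 0) (hB0 : B 0 = 1)
    (hBrec : ∀ ν : ℤ, 1 ≤ ν → B ν = b ν * B (ν - 1) + a ν * B (ν - 2))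
    (Cd Dd Δ : ℤ)
    (hC : B ((d : ℤ) - 1) * Cd = B (2 * (d : ℤ) - 1))
    (hD : Dd = (-1 : ℤ) ^ (d - 1) * ∏ i ∈ Finset.range d, a ((i : ℤ) + 1))
    (hΔ : Δ = Cd ^ 2 + 4 * Dd) (hΔpos : 0 < Δ)
    (α β : ℝ)
    (hα : α = (-(Cd : ℝ) + Real.sqrt (Δ : ℝ)) / (2 * (Dd : ℝ)))
    (hβ : β = (-(Cd : ℝ) - Real.sqrt (Δ : ℝ)) / (2 * (Dd : ℝ))) :
    ∀ r : ℕ,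
      Filter.Tendsto
        (fun n : ℕ => (B ((n : ℤ) * d + r) : ℝ) / (B ((n : ℤ) * d + r - 1) : ℝ))
        Filter.atTop
        (nhds ((β * (B ((d : ℤ) + r) : ℝ) - (B (r : ℤ) : ℝ)) /
          (β * (B ((d : ℤ) + r - 1) : ℝ) - (B ((r : ℤ) - 1) : ℝ)))) := by
  have hdz : (1:ℤ) ≤ (d:ℤ) := by exact_mod_cast hd
  -- positivity of B
  have hBpos : ∀ n : ℕ, 0 ≤ B ((n:ℤ) - 1) ∧ 0 < B (n:ℤ) := by
    intro n
    induction n with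
    | zero => constructor <;> simp [hBm1, hB0]
    | succ n ih =>
      have h1 : (1:ℤ) ≤ (n:ℤ) + 1 := by omega
      constructor
      · push_cast
        rw [show (n:ℤ) + 1 - 1 = (n:ℤ) from by ring]
        exact ih.2.le
      · push_cast
        rw [hBrec _ h1, show (n:ℤ) + 1 - 1 = (n:ℤ) from by ring,
          show (n:ℤ) + 1 - 2 = (n:ℤ) - 1 from by ring]
        have h2 := ha _ h1
        have h3 := hb _ h1
        nlinarith [mul_pos h3 ih.2, mul_nonneg h2.le ih.1]
  have hBpos' : ∀ ν : ℤ, 0 ≤ ν → 0 < B ν := by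
    intro ν hν
    obtain ⟨n, rfl⟩ := Int.eq_ofNat_of_zero_le hν
    exact (hBpos n).2
  have hBnn : ∀ ν : ℤ, -1 ≤ ν → 0 ≤ B ν := by
    intro ν hν
    obtain ⟨n, hn⟩ := Int.eq_ofNat_of_zero_le (by linarith : (0:ℤ) ≤ ν + 1)
    have e : ν = (n:ℤ) - 1 := by omega
    rw [e]; exact (hBpos n).1
  have hBd1 : 0 < B ((d:ℤ) - 1) := hBpos' _ (by omega)
  have hCpos : 0 < Cd := by
    have h1 : 0 < B (2*(d:ℤ) - 1) := hBpos' _ (by omega)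
    nlinarith [hC, hBd1]
  have hprodpos : 0 < ∏ i ∈ Finset.range d, a ((i:ℤ) + 1) :=
    Finset.prod_pos (fun i _ => ha _ (by omega))
  have hDne : Dd ≠ 0 := by
    rw [hD]
    exact mul_ne_zero (pow_ne_zero _ (by norm_num)) hprodpos.ne'
  -- Wronskian identity
  have hW : ∀ n : ℕ, B ((n:ℤ) + d) * B ((n:ℤ) - 1) - B ((n:ℤ) + d - 1) * B (n:ℤ)
      = (-1)^n * (∏ i ∈ Finset.range n, a ((i:ℤ) + 1)) * (- B ((d:ℤ) - 1)) := by
    intro n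
    induction n with
    | zero => simp [hBm1, hB0]
    | succ n ih =>
      have h1 : (1:ℤ) ≤ (n:ℤ) + 1 := by omega
      have h2 : (1:ℤ) ≤ (n:ℤ) + 1 + d := by omega
      have hr1 : B ((n:ℤ) + 1 + d)
          = b ((n:ℤ)+1) * B ((n:ℤ) + d) + a ((n:ℤ)+1) * B ((n:ℤ) + d - 1) := by
        rw [hBrec _ h2, show (n:ℤ) + 1 + d - 1 = (n:ℤ) + d from by ring,
          show (n:ℤ) + 1 + d - 2 = (n:ℤ) + d - 1 from by ring, hpa _ h1, hpb _ h1]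
      have hr2 : B ((n:ℤ) + 1) = b ((n:ℤ)+1) * B (n:ℤ) + a ((n:ℤ)+1) * B ((n:ℤ) - 1) := by
        rw [hBrec _ h1, show (n:ℤ) + 1 - 1 = (n:ℤ) from by ring,
          show (n:ℤ) + 1 - 2 = (n:ℤ) - 1 from by ring]
      push_cast
      rw [show (n:ℤ) + 1 - 1 = (n:ℤ) from by ring,
        show (n:ℤ) + 1 + (d:ℤ) - 1 = (n:ℤ) + d from by ring,
        hr1, hr2, Finset.prod_range_succ, pow_succ]
      push_cast
      linear_combination (-(a ((n:ℤ)+1))) * ih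
  -- B(2d) = Cd * B(d) + Dd
  have hB2d : B (2*(d:ℤ)) = Cd * B (d:ℤ) + Dd := by
    have h := hW d
    rw [show (d:ℤ) + d = 2*(d:ℤ) from by ring] at h
    have hdpow : ((-1:ℤ))^d = (-1)^(d-1) * (-1) := by
      conv_lhs => rw [show d = (d-1)+1 from by omega]
      rw [pow_succ]
    have h2 : B (2*(d:ℤ)) * B ((d:ℤ)-1) - B (2*(d:ℤ)-1) * B (d:ℤ)
        = Dd * B ((d:ℤ)-1) := by
      rw [h, hD, hdpow]; ring
    have key : B ((d:ℤ)-1) * (B (2*(d:ℤ)) - (Cd * B (d:ℤ) + Dd)) = 0 := by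
      linear_combination h2 - (B (d:ℤ)) * hC
    rcases mul_eq_zero.mp key with h' | h'
    · exact absurd h' hBd1.ne'
    · linarith
  -- the period recurrence
  have hF1aux : ∀ n : ℕ,
      B ((n:ℤ) - 1 + 2*d) = Cd * B ((n:ℤ) - 1 + d) + Dd * B ((n:ℤ) - 1)
      ∧ B ((n:ℤ) + 2*d) = Cd * B ((n:ℤ) + d) + Dd * B (n:ℤ) := by
    intro n
    induction n with
    | zero =>
      constructor
      · simp only [Nat.cast_zero]
        rw [show (0:ℤ) - 1 + 2*(d:ℤ) = 2*(d:ℤ) - 1 from by ring,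
          show (0:ℤ) - 1 + (d:ℤ) = (d:ℤ) - 1 from by ring,
          show (0:ℤ) - 1 = (-1:ℤ) from by ring, hBm1]
        linear_combination -hC
      · simp only [Nat.cast_zero]
        rw [show (0:ℤ) + 2*(d:ℤ) = 2*(d:ℤ) from by ring,
          show (0:ℤ) + (d:ℤ) = (d:ℤ) from by ring, hB0]
        linear_combination hB2d
    | succ n ih =>
      have h1 : (1:ℤ) ≤ (n:ℤ) + 1 := by omega
      have hbb : b ((n:ℤ)+1+2*d) = b ((n:ℤ)+1) := by
        have g1 := hpb ((n:ℤ)+1+d) (by omega)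
        rw [show (n:ℤ)+1+(d:ℤ)+(d:ℤ) = (n:ℤ)+1+2*(d:ℤ) from by ring] at g1
        exact g1.trans (hpb _ h1)
      have haa : a ((n:ℤ)+1+2*d) = a ((n:ℤ)+1) := by
        have g1 := hpa ((n:ℤ)+1+d) (by omega)
        rw [show (n:ℤ)+1+(d:ℤ)+(d:ℤ) = (n:ℤ)+1+2*(d:ℤ) from by ring] at g1
        exact g1.trans (hpa _ h1)
      have hr1 : B ((n:ℤ)+1+2*d)
          = b ((n:ℤ)+1) * B ((n:ℤ)+2*d) + a ((n:ℤ)+1) * B ((n:ℤ)-1+2*d) := by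
        rw [hBrec _ (by omega : (1:ℤ) ≤ (n:ℤ)+1+2*d),
          show (n:ℤ)+1+2*(d:ℤ)-1 = (n:ℤ)+2*(d:ℤ) from by ring,
          show (n:ℤ)+1+2*(d:ℤ)-2 = (n:ℤ)-1+2*(d:ℤ) from by ring, hbb, haa]
      have hr2 : B ((n:ℤ)+1+d)
          = b ((n:ℤ)+1) * B ((n:ℤ)+d) + a ((n:ℤ)+1) * B ((n:ℤ)-1+d) := by
        rw [hBrec _ (by omega : (1:ℤ) ≤ (n:ℤ)+1+d),
          show (n:ℤ)+1+(d:ℤ)-1 = (n:ℤ)+(d:ℤ) from by ring,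
          show (n:ℤ)+1+(d:ℤ)-2 = (n:ℤ)-1+(d:ℤ) from by ring, hpb _ h1, hpa _ h1]
      have hr3 : B ((n:ℤ)+1) = b ((n:ℤ)+1) * B (n:ℤ) + a ((n:ℤ)+1) * B ((n:ℤ)-1) := by
        rw [hBrec _ h1, show (n:ℤ)+1-1 = (n:ℤ) from by ring,
          show (n:ℤ)+1-2 = (n:ℤ)-1 from by ring]
      constructor
      · push_cast
        rw [show (n:ℤ)+1-1 = (n:ℤ) from by ring]
        exact ih.2
      · push_cast
        rw [hr1, hr2, hr3]
        linear_combination (b ((n:ℤ)+1)) * ih.2 + (a ((n:ℤ)+1)) * ih.1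
  have hF1 : ∀ ν : ℤ, -1 ≤ ν → B (ν + 2*d) = Cd * B (ν + d) + Dd * B ν := by
    intro ν hν
    obtain ⟨n, hn⟩ := Int.eq_ofNat_of_zero_le (by linarith : (0:ℤ) ≤ ν + 1)
    have e : ν = (n:ℤ) - 1 := by omega
    rw [e]; exact (hF1aux n).1
  -- real setup
  intro r
  have hΔR : (0:ℝ) < (Δ:ℝ) := by exact_mod_cast hΔpos
  set s : ℝ := Real.sqrt (Δ:ℝ) with hsdef
  have hspos : 0 < s := Real.sqrt_pos.mpr hΔR
  have hssq : s^2 = (Δ:ℝ) := Real.sq_sqrt hΔR.le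
  have hΔR' : (Δ:ℝ) = (Cd:ℝ)^2 + 4*(Dd:ℝ) := by exact_mod_cast hΔ
  have hCR : (0:ℝ) < (Cd:ℝ) := by exact_mod_cast hCpos
  have hDRne : ((Dd:ℝ)) ≠ 0 := by exact_mod_cast hDne
  set x1 : ℝ := ((Cd:ℝ) + s)/2 with hx1
  set x2 : ℝ := ((Cd:ℝ) - s)/2 with hx2
  have hsum : x1 + x2 = (Cd:ℝ) := by rw [hx1, hx2]; ring
  have hprod : x1 * x2 = -(Dd:ℝ) := by
    rw [hx1, hx2]
    linear_combination (-(1:ℝ)/4) * hssq - (1/4) * hΔR'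
  have hx1pos : 0 < x1 := by rw [hx1]; linarith
  have hx1ne : x1 ≠ 0 := hx1pos.ne'
  have habs : |x2| < x1 := by
    refine abs_lt.mpr ⟨?_, ?_⟩ <;> rw [hx1, hx2] <;> [linarith; linarith]
  -- geometric solution
  have key : ∀ (y z : ℝ), y + z = (Cd:ℝ) → y * z = -(Dd:ℝ) → ∀ (c : ℤ), -1 ≤ c → ∀ n : ℕ,
      (B (((n:ℤ)+1)*d + c) : ℝ) - z * (B ((n:ℤ)*d + c) : ℝ)
        = y^n * ((B ((d:ℤ) + c) : ℝ) - z * (B c : ℝ)) := by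
    intro y z hyz hyz2 c hc n
    induction n with
    | zero =>
      simp only [Nat.cast_zero]
      rw [show ((0:ℤ)+1)*(d:ℤ) + c = (d:ℤ) + c from by ring,
        show (0:ℤ)*(d:ℤ) + c = c from by ring, pow_zero, one_mul]
    | succ n ih =>
      have hnd : (0:ℤ) ≤ (n:ℤ)*d := by positivity
      have hrec := hF1 ((n:ℤ)*d + c) (by linarith)
      rw [show (n:ℤ)*d + c + 2*(d:ℤ) = ((n:ℤ)+1+1)*(d:ℤ) + c from by ring,
        show (n:ℤ)*d + c + (d:ℤ) = ((n:ℤ)+1)*(d:ℤ) + c from by ring] at hrec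
      have hrecR : (B (((n:ℤ)+1+1)*d + c):ℝ)
          = (Cd:ℝ) * (B (((n:ℤ)+1)*d + c):ℝ) + (Dd:ℝ) * (B ((n:ℤ)*d + c):ℝ) := by
        exact_mod_cast hrec
      push_cast
      rw [pow_succ]
      linear_combination hrecR + y * ih - (B (((n:ℤ)+1)*d + c):ℝ) * hyz
        + (B ((n:ℤ)*d + c):ℝ) * hyz2
  have binet : ∀ c : ℤ, -1 ≤ c → ∀ n : ℕ,
      s * (B ((n:ℤ)*d + c) : ℝ)
        = x1^n * ((B ((d:ℤ)+c):ℝ) - x2 * (B c:ℝ))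
          - x2^n * ((B ((d:ℤ)+c):ℝ) - x1 * (B c:ℝ)) := by
    intro c hc n
    have h1 := key x1 x2 hsum hprod c hc n
    have h2 := key x2 x1 (by linarith) (by rw [mul_comm]; exact hprod) c hc n
    have hs12 : x1 - x2 = s := by rw [hx1, hx2]; ring
    linear_combination h1 - h2 - (B ((n:ℤ)*d + c):ℝ) * hs12
  -- x2 < B d
  have hx2Bd : x2 < (B (d:ℤ) : ℝ) := by
    have hG : ∀ n : ℕ, (0 ≤ B ((n:ℤ) - 1 + d) - B (d:ℤ) * B ((n:ℤ) - 1))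
        ∧ (0 ≤ B ((n:ℤ) + d) - B (d:ℤ) * B (n:ℤ))
        ∧ (1 ≤ n → 0 < B ((n:ℤ) + d) - B (d:ℤ) * B (n:ℤ)) := by
      intro n
      induction n with
      | zero =>
        refine ⟨?_, ?_, by omega⟩
        · simp only [Nat.cast_zero]
          rw [show (0:ℤ) - 1 + (d:ℤ) = (d:ℤ) - 1 from by ring,
            show (0:ℤ) - 1 = (-1:ℤ) from by ring, hBm1]
          linarith [hBd1]
        · simp only [Nat.cast_zero]
          rw [show (0:ℤ) + (d:ℤ) = (d:ℤ) from by ring, hB0]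
          linarith
      | succ n ih =>
        have h1 : (1:ℤ) ≤ (n:ℤ)+1 := by omega
        have hapos := ha _ h1
        have hbpos := hb _ h1
        have hr1 : B ((n:ℤ)+1+d)
            = b ((n:ℤ)+1) * B ((n:ℤ)+d) + a ((n:ℤ)+1) * B ((n:ℤ)-1+d) := by
          rw [hBrec _ (by omega : (1:ℤ) ≤ (n:ℤ)+1+d),
            show (n:ℤ)+1+(d:ℤ)-1 = (n:ℤ)+(d:ℤ) from by ring,
            show (n:ℤ)+1+(d:ℤ)-2 = (n:ℤ)-1+(d:ℤ) from by ring, hpb _ h1, hpa _ h1]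
        have hr2 : B ((n:ℤ)+1) = b ((n:ℤ)+1) * B (n:ℤ) + a ((n:ℤ)+1) * B ((n:ℤ)-1) := by
          rw [hBrec _ h1, show (n:ℤ)+1-1 = (n:ℤ) from by ring,
            show (n:ℤ)+1-2 = (n:ℤ)-1 from by ring]
        refine ⟨?_, ?_, fun _ => ?_⟩
        · push_cast
          rw [show (n:ℤ)+1-1 = (n:ℤ) from by ring]
          exact ih.2.1
        · push_cast
          rw [hr1, hr2]
          nlinarith [mul_nonneg hbpos.le ih.2.1, mul_nonneg hapos.le ih.1]
        · push_cast
          rw [hr1, hr2]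
          rcases Nat.eq_zero_or_pos n with h0 | h0
          · subst h0
            simp only [Nat.cast_zero] at hapos hbpos ⊢
            have e1 : B ((0:ℤ) - 1 + (d:ℤ)) = B ((d:ℤ) - 1) := by
              rw [show (0:ℤ)-1+(d:ℤ) = (d:ℤ)-1 from by ring]
            have e2 : B ((0:ℤ) - 1) = 0 := by
              rw [show (0:ℤ)-1 = (-1:ℤ) from by ring, hBm1]
            have e3 : B ((0:ℤ) + (d:ℤ)) = B (d:ℤ) := by
              rw [show (0:ℤ)+(d:ℤ) = (d:ℤ) from by ring]
            rw [e1, e2, e3, hB0]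
            nlinarith [mul_pos hapos hBd1, hbpos]
          · nlinarith [mul_pos hbpos (ih.2.2 h0), mul_nonneg hapos.le ih.1]
    have hGd : B (d:ℤ) * B (d:ℤ) < B (2*(d:ℤ)) := by
      have h := (hG d).2.2 hd
      rw [show (d:ℤ) + (d:ℤ) = 2*(d:ℤ) from by ring] at h
      linarith
    have hGdR : (B (d:ℤ):ℝ) * (B (d:ℤ):ℝ) < (B (2*(d:ℤ)):ℝ) := by exact_mod_cast hGd
    have hB2dR : (B (2*(d:ℤ)):ℝ) = (Cd:ℝ) * (B (d:ℤ):ℝ) + (Dd:ℝ) := by exact_mod_cast hB2d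
    rw [hx2]
    nlinarith [hssq, hΔR', hspos, hGdR, hB2dR,
      sq_nonneg ((Cd:ℝ) - 2*(B (d:ℤ):ℝ) - s)]
  -- positivity of B(d+c) - x2 B(c)
  have hwpos : ∀ n : ℕ, (0 < (B ((d:ℤ) + ((n:ℤ)-1)):ℝ) - x2 * (B ((n:ℤ)-1):ℝ))
      ∧ (0 < (B ((d:ℤ) + (n:ℤ)):ℝ) - x2 * (B ((n:ℤ)):ℝ)) := by
    intro n
    induction n with
    | zero =>
      constructor
      · simp only [Nat.cast_zero]
        rw [show (d:ℤ) + ((0:ℤ) - 1) = (d:ℤ) - 1 from by ring,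
          show (0:ℤ) - 1 = (-1:ℤ) from by ring, hBm1]
        push_cast
        have : (0:ℝ) < (B ((d:ℤ)-1):ℝ) := by exact_mod_cast hBd1
        linarith
      · simp only [Nat.cast_zero]
        rw [show (d:ℤ) + (0:ℤ) = (d:ℤ) from by ring, hB0]
        push_cast
        linarith [hx2Bd]
    | succ n ih =>
      have h1 : (1:ℤ) ≤ (n:ℤ)+1 := by omega
      have hr1 : B ((d:ℤ) + ((n:ℤ)+1))
          = b ((n:ℤ)+1) * B ((d:ℤ) + (n:ℤ)) + a ((n:ℤ)+1) * B ((d:ℤ) + ((n:ℤ)-1)) := by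
        have hbb : b ((d:ℤ) + ((n:ℤ)+1)) = b ((n:ℤ)+1) := by
          have g := hpb ((n:ℤ)+1) h1
          rw [show (n:ℤ)+1+(d:ℤ) = (d:ℤ) + ((n:ℤ)+1) from by ring] at g
          exact g
        have haa : a ((d:ℤ) + ((n:ℤ)+1)) = a ((n:ℤ)+1) := by
          have g := hpa ((n:ℤ)+1) h1
          rw [show (n:ℤ)+1+(d:ℤ) = (d:ℤ) + ((n:ℤ)+1) from by ring] at g
          exact g
        rw [hBrec _ (by omega : (1:ℤ) ≤ (d:ℤ) + ((n:ℤ)+1)),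
          show (d:ℤ) + ((n:ℤ)+1) - 1 = (d:ℤ) + (n:ℤ) from by ring,
          show (d:ℤ) + ((n:ℤ)+1) - 2 = (d:ℤ) + ((n:ℤ)-1) from by ring, hbb, haa]
      have hr2 : B ((n:ℤ)+1) = b ((n:ℤ)+1) * B (n:ℤ) + a ((n:ℤ)+1) * B ((n:ℤ)-1) := by
        rw [hBrec _ h1, show (n:ℤ)+1-1 = (n:ℤ) from by ring,
          show (n:ℤ)+1-2 = (n:ℤ)-1 from by ring]
      have haR : (0:ℝ) < (a ((n:ℤ)+1):ℝ) := by exact_mod_cast ha _ h1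
      have hbR : (0:ℝ) < (b ((n:ℤ)+1):ℝ) := by exact_mod_cast hb _ h1
      constructor
      · push_cast
        rw [show (n:ℤ)+1-1 = (n:ℤ) from by ring]
        exact ih.2
      · push_cast
        rw [hr1, hr2]
        push_cast
        nlinarith [ih.1, ih.2, mul_pos hbR ih.2, mul_pos haR ih.1]
  -- final assembly
  set t : ℝ := x2 / x1 with ht
  have htabs : |t| < 1 := by
    rw [ht, abs_div, abs_of_pos hx1pos, div_lt_one hx1pos]
    exact habs
  have htend : Filter.Tendsto (fun n : ℕ => t^n) Filter.atTop (nhds 0) :=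
    tendsto_pow_atTop_nhds_zero_of_abs_lt_one htabs
  have hx2t : x2 = x1 * t := by rw [ht]; field_simp
  have hrm1 : (-1:ℤ) ≤ (r:ℤ) - 1 := by omega
  have hr0 : (-1:ℤ) ≤ (r:ℤ) := by omega
  set W1 : ℝ := (B ((d:ℤ)+r):ℝ) - x2 * (B (r:ℤ):ℝ) with hW1
  set V1 : ℝ := (B ((d:ℤ)+r):ℝ) - x1 * (B (r:ℤ):ℝ) with hV1
  set W0 : ℝ := (B ((d:ℤ)+((r:ℤ)-1)):ℝ) - x2 * (B ((r:ℤ)-1):ℝ) with hW0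
  set V0 : ℝ := (B ((d:ℤ)+((r:ℤ)-1)):ℝ) - x1 * (B ((r:ℤ)-1):ℝ) with hV0
  have hw0pos : 0 < W0 := (hwpos r).1
  have hfn : ∀ n : ℕ, (B ((n:ℤ)*d + r):ℝ) / (B ((n:ℤ)*d + r - 1):ℝ)
      = (W1 - t^n * V1) / (W0 - t^n * V0) := by
    intro n
    have b1 := binet (r:ℤ) hr0 n
    have b0 := binet ((r:ℤ)-1) hrm1 n
    rw [show (n:ℤ)*(d:ℤ) + (r:ℤ) - 1 = (n:ℤ)*(d:ℤ) + ((r:ℤ)-1) from by ring]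
    rw [← mul_div_mul_left ((B ((n:ℤ)*d + r):ℝ)) ((B ((n:ℤ)*d + ((r:ℤ)-1)):ℝ)) hspos.ne']
    rw [b1, b0, ← hW1, ← hV1, ← hW0, ← hV0]
    have hx2n : x2^n = x1^n * t^n := by rw [hx2t, mul_pow]
    rw [hx2n,
      show x1^n*W1 - x1^n*t^n*V1 = x1^n*(W1 - t^n*V1) from by ring,
      show x1^n*W0 - x1^n*t^n*V0 = x1^n*(W0 - t^n*V0) from by ring,
      mul_div_mul_left _ _ (pow_ne_zero n hx1ne)]
  have hnum : Filter.Tendsto (fun n : ℕ => W1 - t^n * V1) Filter.atTop (nhds W1) := by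
    have h := Filter.Tendsto.sub (tendsto_const_nhds (x := W1))
      (htend.mul (tendsto_const_nhds (x := V1)))
    simpa using h
  have hden : Filter.Tendsto (fun n : ℕ => W0 - t^n * V0) Filter.atTop (nhds W0) := by
    have h := Filter.Tendsto.sub (tendsto_const_nhds (x := W0))
      (htend.mul (tendsto_const_nhds (x := V0)))
    simpa using h
  have hβx2 : β * x2 = 1 := by
    rw [hβ, hx2]
    field_simp
    linear_combination hssq + hΔR'
  have hβne : β ≠ 0 := left_ne_zero_of_mul_eq_one hβx2
  have hval : (β * (B ((d:ℤ)+r):ℝ) - (B (r:ℤ):ℝ))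
      / (β * (B ((d:ℤ)+r-1):ℝ) - (B ((r:ℤ)-1):ℝ)) = W1/W0 := by
    rw [show (d:ℤ) + (r:ℤ) - 1 = (d:ℤ) + ((r:ℤ)-1) from by ring,
      show β * (B ((d:ℤ)+r):ℝ) - (B (r:ℤ):ℝ) = β * W1 from by
        rw [hW1]; linear_combination (B (r:ℤ):ℝ) * hβx2,
      show β * (B ((d:ℤ)+((r:ℤ)-1)):ℝ) - (B ((r:ℤ)-1):ℝ) = β * W0 from by
        rw [hW0]; linear_combination (B ((r:ℤ)-1):ℝ) * hβx2,
      mul_div_mul_left _ _ hβne]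
  rw [show (fun n : ℕ => (B ((n:ℤ)*d + r):ℝ) / (B ((n:ℤ)*d + r - 1):ℝ))
      = (fun n : ℕ => (W1 - t^n*V1)/(W0 - t^n*V0)) from funext hfn, hval]
  exact hnum.div hden hw0pos.ne'
end

section
/- For every integer r ≥ −1, the sequence of real numbers n ↦ B_{(n+1)d+r}/B_{nd+r} converges as n → ∞ to −D_d·β. -/
open Matrix

/-- One-step transfer matrix. -/
def Mm (a b : ℤ → ℤ) (ν : ℤ) : Matrix (Fin 2) (Fin 2) ℤ := !![b ν, a ν; 1, 0]

/-- Product of `k` transfer matrices starting after index `ν`. -/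
def Qm (a b : ℤ → ℤ) (ν : ℤ) : ℕ → Matrix (Fin 2) (Fin 2) ℤ
  | 0 => 1
  | (k+1) => Mm a b (ν + k + 1) * Qm a b ν k

lemma Qm_succ_right (a b : ℤ → ℤ) (ν : ℤ) (k : ℕ) :
    Qm a b ν (k+1) = Qm a b (ν+1) k * Mm a b (ν+1) := by
  induction k with
  | zero => simp [Qm]
  | succ k ih =>
      have h1 : Qm a b ν (k+1+1) = Mm a b (ν + (k+1) + 1) * Qm a b ν (k+1) := rfl
      have h2 : Qm a b (ν+1) (k+1) = Mm a b ((ν+1) + k + 1) * Qm a b (ν+1) k := rfl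
      have h3 : ν + ((k:ℤ)+1) + 1 = (ν+1) + k + 1 := by ring
      rw [h1, ih, h2, h3, Matrix.mul_assoc]

lemma mulvec2 (A : Matrix (Fin 2) (Fin 2) ℤ) (x y : ℤ) :
    A *ᵥ ![x, y] = ![A 0 0 * x + A 0 1 * y, A 1 0 * x + A 1 1 * y] := by
  ext i
  fin_cases i <;> simp [Matrix.mulVec, dotProduct, Fin.sum_univ_two]

lemma vecPair_eq {x y z w : ℤ} (h : ![x, y] = ![z, w]) : x = z ∧ y = w := by
  constructor
  · exact congrFun h 0
  · exact congrFun h 1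

lemma aux_tendsto (C D lam mu p : ℝ)
    (hsum : lam + mu = C) (hprod : lam * mu = -D)
    (hml : |mu| < lam) (hpm : mu < p) (hp0 : 0 < p)
    (y : ℕ → ℝ) (hyp : ∀ n, 1 ≤ n → p ≤ y n)
    (hrec : ∀ n, 1 ≤ n → y (n+1) * y n = C * y n + D) :
    Filter.Tendsto y Filter.atTop (nhds lam) := by
  have hlam : 0 < lam := lt_of_le_of_lt (abs_nonneg mu) hml
  have hlt : mu < lam := lt_of_le_of_lt (le_abs_self mu) hml
  have hq : |mu / lam| < 1 := by
    rw [abs_div, abs_of_pos hlam, div_lt_one hlam]; exact hml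
  set r : ℕ → ℝ := fun n => (y n - lam) / (y n - mu) with hr
  have hymu : ∀ n, 1 ≤ n → 0 < y n - mu := fun n hn => by
    have := hyp n hn; linarith
  have hy0 : ∀ n, 1 ≤ n → 0 < y n := fun n hn => by
    have := hyp n hn; linarith
  have hrstep : ∀ n, 1 ≤ n → r (n+1) = (mu / lam) * r n := by
    intro n hn
    have h1 : (y (n+1) - lam) * y n = mu * (y n - lam) := by
      linear_combination hrec n hn - y n * hsum + hprod
    have h2 : (y (n+1) - mu) * y n = lam * (y n - mu) := by
      linear_combination hrec n hn - y n * hsum + hprod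
    have hyn := hy0 n hn
    have hmun1 := hymu (n+1) (by omega)
    have hmun := hymu n hn
    rw [hr]
    field_simp
    nlinarith [h1, h2, mul_pos hmun1 hyn]
  have hrgeo : ∀ n : ℕ, r (n+1) = (mu/lam)^n * r 1 := by
    intro n
    induction n with
    | zero => simp
    | succ n ih => rw [hrstep (n+1) (by omega), ih, pow_succ]; ring
  have hr0 : Filter.Tendsto (fun n : ℕ => r (n+1)) Filter.atTop (nhds 0) := by
    have h := tendsto_pow_atTop_nhds_zero_of_abs_lt_one hq
    have := h.mul_const (r 1)
    rw [zero_mul] at this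
    exact Filter.Tendsto.congr (fun n => (hrgeo n).symm) this
  have hrlt : ∀ n, 1 ≤ n → r n < 1 := by
    intro n hn
    rw [hr, div_lt_one (hymu n hn)]
    linarith
  have hyform : ∀ n, 1 ≤ n → y n = lam + (lam - mu) * r n / (1 - r n) := by
    intro n hn
    have h1 : r n * (y n - mu) = y n - lam := div_mul_cancel₀ _ (ne_of_gt (hymu n hn))
    have hlm : lam - mu ≠ 0 := by linarith
    have h3 : 1 - r n = (lam - mu)/(y n - mu) := by
      rw [hr]
      field_simp [ne_of_gt (hymu n hn)]
      ring
    rw [h3, div_div_eq_mul_div, mul_assoc, mul_div_cancel_left₀ _ hlm, h1]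
    ring
  have htend : Filter.Tendsto (fun n : ℕ => lam + (lam - mu) * r (n+1) / (1 - r (n+1)))
      Filter.atTop (nhds lam) := by
    have hnum : Filter.Tendsto (fun n : ℕ => (lam - mu) * r (n+1)) Filter.atTop (nhds 0) := by
      simpa using hr0.const_mul (lam - mu)
    have hden : Filter.Tendsto (fun n : ℕ => 1 - r (n+1)) Filter.atTop (nhds 1) := by
      simpa using (tendsto_const_nhds.sub hr0)
    have := hnum.div hden one_ne_zero
    simpa using (tendsto_const_nhds.add this)
  have : Filter.Tendsto (fun n : ℕ => y (n+1)) Filter.atTop (nhds lam) := by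
    refine htend.congr (fun n => ?_)
    exact (hyform (n+1) (by omega)).symm
  exact (Filter.tendsto_add_atTop_iff_nat 1).mp this

set_option maxHeartbeats 1000000 in
/-- Limit of ratios of terms one period apart for the periodic continuant denominators. -/
theorem limit_consecutive_periods
    (d : ℕ) (hd : 1 ≤ d) (a b : ℤ → ℤ)
    (ha : ∀ ν : ℤ, 1 ≤ ν → 0 < a ν) (hb : ∀ ν : ℤ, 1 ≤ ν → 0 < b ν)
    (hpa : ∀ ν : ℤ, 1 ≤ ν → a (ν + d) = a ν) (hpb : ∀ ν : ℤ, 1 ≤ ν → b (ν + d) = b ν)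
    (B : ℤ → ℤ) (hBm1 : B (-1) = 0) (hB0 : B 0 = 1)
    (hBrec : ∀ ν : ℤ, 1 ≤ ν → B ν = b ν * B (ν - 1) + a ν * B (ν - 2))
    (Cd Dd Δ : ℤ)
    (hC : B ((d : ℤ) - 1) * Cd = B (2 * (d : ℤ) - 1))
    (hD : Dd = (-1 : ℤ) ^ (d - 1) * ∏ i ∈ Finset.range d, a ((i : ℤ) + 1))
    (hΔ : Δ = Cd ^ 2 + 4 * Dd) (hΔpos : 0 < Δ)
    (α β : ℝ)
    (hα : α = (-(Cd : ℝ) + Real.sqrt (Δ : ℝ)) / (2 * (Dd : ℝ)))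
    (hβ : β = (-(Cd : ℝ) - Real.sqrt (Δ : ℝ)) / (2 * (Dd : ℝ))) :
    ∀ r : ℤ, -1 ≤ r →
      Filter.Tendsto
        (fun n : ℕ => (B (((n : ℤ) + 1) * d + r) : ℝ) / (B ((n : ℤ) * d + r) : ℝ))
        Filter.atTop
        (nhds (-(Dd : ℝ) * β)) := by
  have hd1 : (1:ℤ) ≤ (d:ℤ) := by exact_mod_cast hd
  -- periodicity of the transfer matrices
  have hM : ∀ ν : ℤ, 1 ≤ ν → Mm a b (ν + d) = Mm a b ν := by
    intro ν hν
    unfold Mm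
    rw [hpa ν hν, hpb ν hν]
  -- positivity of B
  have hBstr : ∀ ν : ℤ, 0 ≤ ν → 0 < B ν ∧ 0 ≤ B (ν - 1) := by
    refine fun ν hν => Int.le_induction (motive := fun ν _ => 0 < B ν ∧ 0 ≤ B (ν - 1)) ?_ ?_ ν hν
    · norm_num [hB0, hBm1]
    · intro ν hν ih
      obtain ⟨h1, h2⟩ := ih
      have hrec := hBrec (ν+1) (by omega)
      have e1 : ν + 1 - 1 = ν := by ring
      have e2 : ν + 1 - 2 = ν - 1 := by ring
      rw [e1, e2] at hrec
      have hb1 := hb (ν+1) (by omega)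
      have ha1 := ha (ν+1) (by omega)
      constructor
      · rw [hrec]; nlinarith
      · rw [e1]; exact h1.le
  have hBpos : ∀ ν : ℤ, 0 ≤ ν → 0 < B ν := fun ν hν => (hBstr ν hν).1
  have hBnn : ∀ ν : ℤ, -1 ≤ ν → 0 ≤ B ν := by
    intro ν hν
    rcases eq_or_lt_of_le hν with h | h
    · rw [← h, hBm1]
    · exact (hBpos ν (by omega)).le
  -- the vector recursion
  have hvec : ∀ ν : ℤ, 0 ≤ ν → ∀ k : ℕ,
      Qm a b ν k *ᵥ ![B ν, B (ν-1)] = ![B (ν+k), B (ν+k-1)] := by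
    intro ν hν k
    induction k with
    | zero => simp [Qm]
    | succ k ih =>
        have h1 : Qm a b ν (k+1) = Mm a b (ν + k + 1) * Qm a b ν k := rfl
        rw [h1, ← Matrix.mulVec_mulVec, ih, Mm, mulvec2]
        have hrec := hBrec (ν + k + 1) (by omega)
        have e1 : ν + (k:ℤ) + 1 - 1 = ν + k := by ring
        have e2 : ν + (k:ℤ) + 1 - 2 = ν + k - 1 := by ring
        rw [e1, e2] at hrec
        have e3 : ν + ((k+1 : ℕ):ℤ) = ν + k + 1 := by push_cast; ring
        rw [e3, e1, hrec]
        ext i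
        fin_cases i <;> simp
  -- periodicity of Q
  have hQper : ∀ ν : ℤ, 0 ≤ ν → ∀ k : ℕ, Qm a b (ν + d) k = Qm a b ν k := by
    intro ν hν k
    induction k with
    | zero => rfl
    | succ k ih =>
        have h1 : Qm a b (ν+d) (k+1) = Mm a b (ν + d + k + 1) * Qm a b (ν+d) k := rfl
        have h2 : Qm a b ν (k+1) = Mm a b (ν + k + 1) * Qm a b ν k := rfl
        have e : ν + (d:ℤ) + k + 1 = (ν + k + 1) + d := by ring
        rw [h1, h2, ih, e, hM (ν + k + 1) (by omega)]
  -- trace and det invariance under shift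
  obtain ⟨e, he⟩ : ∃ e, d = e + 1 := ⟨d - 1, by omega⟩
  have hshift : ∀ ν : ℤ, 0 ≤ ν →
      Qm a b ν d = Qm a b (ν+1) e * Mm a b (ν+1) ∧
      Qm a b (ν+1) d = Mm a b (ν+1) * Qm a b (ν+1) e := by
    intro ν hν
    constructor
    · rw [he]; exact Qm_succ_right a b ν e
    · rw [he]
      have h1 : Qm a b (ν+1) (e+1) = Mm a b (ν + 1 + e + 1) * Qm a b (ν+1) e := rfl
      have e2 : ν + 1 + (e:ℤ) + 1 = (ν + 1) + d := by rw [he]; push_cast; ring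
      rw [h1, e2, hM (ν+1) (by omega)]
  have htrinv : ∀ ν : ℤ, 0 ≤ ν → (Qm a b (ν+1) d).trace = (Qm a b ν d).trace := by
    intro ν hν
    obtain ⟨h1, h2⟩ := hshift ν hν
    rw [h1, h2, Matrix.trace_mul_comm]
  have hdetinv : ∀ ν : ℤ, 0 ≤ ν → (Qm a b (ν+1) d).det = (Qm a b ν d).det := by
    intro ν hν
    obtain ⟨h1, h2⟩ := hshift ν hν
    rw [h1, h2, Matrix.det_mul, Matrix.det_mul, mul_comm]
  have htrconst : ∀ ν : ℤ, 0 ≤ ν → (Qm a b ν d).trace = (Qm a b 0 d).trace := by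
    refine fun ν hν => Int.le_induction
      (motive := fun ν _ => (Qm a b ν d).trace = (Qm a b 0 d).trace) ?_ ?_ ν hν
    · rfl
    · intro ν hν ih
      rw [htrinv ν hν, ih]
  have hdetconst : ∀ ν : ℤ, 0 ≤ ν → (Qm a b ν d).det = (Qm a b 0 d).det := by
    refine fun ν hν => Int.le_induction
      (motive := fun ν _ => (Qm a b ν d).det = (Qm a b 0 d).det) ?_ ?_ ν hν
    · rfl
    · intro ν hν ih
      rw [hdetinv ν hν, ih]
  -- determinant formula
  have hdetQ : ∀ ν : ℤ, ∀ k : ℕ,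
      (Qm a b ν k).det = (-1)^k * ∏ i ∈ Finset.range k, a (ν + i + 1) := by
    intro ν k
    induction k with
    | zero => simp [Qm]
    | succ k ih =>
        have h1 : Qm a b ν (k+1) = Mm a b (ν + k + 1) * Qm a b ν k := rfl
        rw [h1, Matrix.det_mul, ih, Mm, Matrix.det_fin_two_of, Finset.prod_range_succ,
          pow_succ]
        ring
  -- entry positivity
  have hQpos : ∀ ν : ℤ, 0 ≤ ν → ∀ k : ℕ, 1 ≤ k →
      0 < Qm a b ν k 0 0 ∧ 0 < Qm a b ν k 0 1 ∧ 0 < Qm a b ν k 1 0 ∧ 0 ≤ Qm a b ν k 1 1 := by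
    intro ν hν k hk
    induction k with
    | zero => omega
    | succ k ih =>
        rcases Nat.eq_or_lt_of_le hk with h | h
        · -- k + 1 = 1, i.e. k = 0
          have hk0 : k = 0 := by omega
          subst hk0
          have h1 : Qm a b ν 1 = Mm a b (ν + 0 + 1) * 1 := rfl
          rw [h1, mul_one, Mm]
          have := ha (ν + 0 + 1) (by omega)
          have := hb (ν + 0 + 1) (by omega)
          refine ⟨by simpa using this, by simpa using ‹0 < a (ν+0+1)›, by norm_num, by norm_num⟩
        · have hk1 : 1 ≤ k := by omega
          obtain ⟨h00, h01, h10, h11⟩ := ih hk1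
          have h1 : Qm a b ν (k+1) = Mm a b (ν + k + 1) * Qm a b ν k := rfl
          have ha1 := ha (ν + k + 1) (by omega)
          have hb1 := hb (ν + k + 1) (by omega)
          rw [h1, Mm]
          refine ⟨?_, ?_, ?_, ?_⟩ <;>
            · simp [Matrix.mul_apply, Fin.sum_univ_two]
              nlinarith
  -- components of the basic vector identities
  have hcomp : ∀ ν : ℤ, 0 ≤ ν →
      B (ν + d) = Qm a b ν d 0 0 * B ν + Qm a b ν d 0 1 * B (ν - 1) ∧
      B (ν + d - 1) = Qm a b ν d 1 0 * B ν + Qm a b ν d 1 1 * B (ν - 1) := by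
    intro ν hν
    have h := hvec ν hν d
    rw [mulvec2] at h
    obtain ⟨h1, h2⟩ := vecPair_eq h
    exact ⟨h1.symm, h2.symm⟩
  -- identification of Cd with the trace
  have hBd1pos : 0 < B ((d:ℤ) - 1) := hBpos _ (by omega)
  have htr0 : (Qm a b 0 d).trace = Cd := by
    obtain ⟨h1, h2⟩ := hcomp 0 le_rfl
    have e0 : (0:ℤ) - 1 = -1 := by ring
    rw [e0, hBm1, hB0] at h1 h2
    simp only [mul_one, mul_zero, add_zero, zero_add] at h1 h2
    obtain ⟨g1, g2⟩ := hcomp ((d:ℤ)) (by omega)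
    have hQdd : Qm a b ((0:ℤ) + d) d = Qm a b 0 d := hQper 0 le_rfl d
    rw [zero_add] at hQdd
    rw [hQdd] at g1 g2
    -- B (2d - 1) = trace * B (d - 1)
    have e1 : (d:ℤ) + d - 1 = 2 * (d:ℤ) - 1 := by ring
    rw [e1] at g2
    have key : B (2 * (d:ℤ) - 1) = (Qm a b 0 d).trace * B ((d:ℤ) - 1) := by
      rw [Matrix.trace_fin_two, g2, h1, h2]
      ring
    have hne : B ((d:ℤ) - 1) ≠ 0 := ne_of_gt hBd1pos
    have hcomb : B ((d:ℤ)-1) * (Qm a b 0 d).trace = B ((d:ℤ)-1) * Cd := by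
      rw [hC, key]; ring
    exact mul_left_cancel₀ hne hcomb
  -- determinant equals -Dd
  have hdet0 : (Qm a b 0 d).det = -Dd := by
    rw [hdetQ 0 d, hD]
    have : ∀ i ∈ Finset.range d, a ((0:ℤ) + i + 1) = a ((i:ℤ) + 1) := by
      intro i _
      congr 1
      ring
    rw [Finset.prod_congr rfl this, he]
    simp only [Nat.add_sub_cancel]
    rw [pow_succ]
    ring
  -- the key two-term recurrence
  have hrec2 : ∀ ν : ℤ, 0 ≤ ν → B (ν + 2*d) = Cd * B (ν + d) + Dd * B ν := by
    intro ν hν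
    obtain ⟨h1, h2⟩ := hcomp ν hν
    obtain ⟨g1, _⟩ := hcomp (ν + d) (by omega)
    have hQd : Qm a b (ν + d) d = Qm a b ν d := hQper ν hν d
    rw [hQd] at g1
    have e1 : ν + (d:ℤ) + d = ν + 2*d := by ring
    rw [e1] at g1
    have htr : Qm a b ν d 0 0 + Qm a b ν d 1 1 = Cd := by
      have := (htrconst ν hν).trans htr0
      rwa [Matrix.trace_fin_two] at this
    have hdt : Qm a b ν d 0 0 * Qm a b ν d 1 1 - Qm a b ν d 0 1 * Qm a b ν d 1 0 = -Dd := by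
      have := (hdetconst ν hν).trans hdet0
      rwa [Matrix.det_fin_two] at this
    rw [g1, h2]
    linear_combination (-(Qm a b ν d 1 1)) * h1 + B (ν + (d:ℤ)) * htr + (-(B ν)) * hdt
  -- Dd is nonzero, Cd is positive
  have hprodpos : 0 < ∏ i ∈ Finset.range d, a ((i:ℤ) + 1) := by
    apply Finset.prod_pos
    intro i _
    exact ha _ (by omega)
  have hDdne : Dd ≠ 0 := by
    rw [hD]
    exact mul_ne_zero (pow_ne_zero _ (by norm_num)) (ne_of_gt hprodpos)
  have hCdpos : 0 < Cd := by
    have h1 := hBpos (2*(d:ℤ)-1) (by omega)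
    nlinarith [hBd1pos, hC]
  intro r hr
  have hν₀0 : (0:ℤ) ≤ (d:ℤ) + r := by omega
  obtain ⟨hp, hq, hs1, ht1⟩ := hQpos ((d:ℤ)+r) hν₀0 d hd
  set P := Qm a b ((d:ℤ)+r) d 0 0 with hPdef
  set Qe := Qm a b ((d:ℤ)+r) d 0 1 with hQedef
  set S := Qm a b ((d:ℤ)+r) d 1 0 with hSdef
  set T := Qm a b ((d:ℤ)+r) d 1 1 with hTdef
  have htrR : P + T = Cd := by
    have := (htrconst ((d:ℤ)+r) hν₀0).trans htr0
    rwa [Matrix.trace_fin_two] at this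
  have hdtR : P * T - Qe * S = -Dd := by
    have := (hdetconst ((d:ℤ)+r) hν₀0).trans hdet0
    rwa [Matrix.det_fin_two] at this
  have hΔint : Δ = (P - T)^2 + 4 * (Qe * S) := by
    linear_combination hΔ - (Cd + P + T) * htrR + 4 * hdtR
  -- index nonnegativity
  have hidx : ∀ n : ℕ, 1 ≤ n → (0:ℤ) ≤ (n:ℤ)*d + r := by
    intro n hn
    have hn' : (1:ℤ) ≤ (n:ℤ) := by exact_mod_cast hn
    have : (d:ℤ) ≤ (n:ℤ)*d := le_mul_of_one_le_left (by omega) hn'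
    omega
  have hxpos : ∀ n : ℕ, 1 ≤ n → 0 < B ((n:ℤ)*d + r) := fun n hn => hBpos _ (hidx n hn)
  -- the Q matrix is the same along the arithmetic progression
  have hQn : ∀ n : ℕ, Qm a b (((d:ℤ)+r) + n*d) d = Qm a b ((d:ℤ)+r) d := by
    intro n
    induction n with
    | zero => norm_num
    | succ n ih =>
        have e : ((d:ℤ)+r) + ((n+1:ℕ):ℤ)*d = (((d:ℤ)+r) + n*d) + d := by push_cast; ring
        have hnn : (0:ℤ) ≤ ((d:ℤ)+r) + n*d := by positivity
        rw [e, hQper (((d:ℤ)+r) + n*d) hnn d, ih]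
  have hstep : ∀ n : ℕ, 1 ≤ n →
      B (((n:ℤ)+1)*d + r) = P * B ((n:ℤ)*d + r) + Qe * B ((n:ℤ)*d + r - 1) := by
    intro n hn
    obtain ⟨h1, _⟩ := hcomp ((n:ℤ)*d + r) (hidx n hn)
    have hQeq : Qm a b ((n:ℤ)*d + r) d = Qm a b ((d:ℤ)+r) d := by
      have h := hQn (n-1)
      have e : ((d:ℤ)+r) + ((n-1:ℕ):ℤ)*d = (n:ℤ)*d + r := by
        push_cast [Nat.cast_sub hn]
        ring
      rwa [e] at h
    rw [hQeq] at h1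
    have e2 : (n:ℤ)*d + r + d = ((n:ℤ)+1)*d + r := by ring
    rwa [e2] at h1
  have hxrec : ∀ n : ℕ, 1 ≤ n →
      B (((n:ℤ)+2)*d + r) = Cd * B (((n:ℤ)+1)*d + r) + Dd * B ((n:ℤ)*d + r) := by
    intro n hn
    have h := hrec2 ((n:ℤ)*d + r) (hidx n hn)
    have e1 : (n:ℤ)*d + r + 2*d = ((n:ℤ)+2)*d + r := by ring
    have e2 : (n:ℤ)*d + r + d = ((n:ℤ)+1)*d + r := by ring
    rwa [e1, e2] at h
  -- pass to the reals
  have hΔR : ((Δ:ℤ):ℝ) = (Cd:ℝ)^2 + 4*(Dd:ℝ) := by exact_mod_cast hΔ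
  have hΔRpos : (0:ℝ) < ((Δ:ℤ):ℝ) := by exact_mod_cast hΔpos
  have hsqpos : 0 < Real.sqrt ((Δ:ℤ):ℝ) := Real.sqrt_pos.mpr hΔRpos
  have hsq2 : Real.sqrt ((Δ:ℤ):ℝ) ^ 2 = ((Δ:ℤ):ℝ) := Real.sq_sqrt hΔRpos.le
  have hCR : (0:ℝ) < (Cd:ℝ) := by exact_mod_cast hCdpos
  have hDdneR : (Dd:ℝ) ≠ 0 := Int.cast_ne_zero.mpr hDdne
  have hbeta : -(Dd:ℝ) * β = ((Cd:ℝ) + Real.sqrt ((Δ:ℤ):ℝ))/2 := by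
    rw [hβ]
    field_simp
    ring
  rw [hbeta]
  have htrRR : (P:ℝ) + (T:ℝ) = (Cd:ℝ) := by exact_mod_cast htrR
  have hΔR2 : ((Δ:ℤ):ℝ) = ((P:ℝ) - (T:ℝ))^2 + 4*((Qe:ℝ)*(S:ℝ)) := by exact_mod_cast hΔint
  have hQSR : (1:ℝ) ≤ (Qe:ℝ)*(S:ℝ) := by
    have : (1:ℤ) ≤ Qe * S := mul_pos hq hs1
    exact_mod_cast this
  refine aux_tendsto (Cd:ℝ) (Dd:ℝ) _ (((Cd:ℝ) - Real.sqrt ((Δ:ℤ):ℝ))/2) (P:ℝ)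
    (by ring) ?_ ?_ ?_ ?_ _ ?_ ?_
  · -- lam * mu = -D
    linear_combination (-(1:ℝ)/4) * hsq2 - (1/4) * hΔR
  · -- |mu| < lam
    rw [abs_lt]
    constructor <;> [linarith; linarith]
  · -- mu < P
    nlinarith [hsq2, hΔR2, hsqpos, hQSR, htrRR]
  · exact_mod_cast hp
  · -- lower bound on the ratios
    intro n hn
    have hBn := hxpos n hn
    have hBnR : (0:ℝ) < (B ((n:ℤ)*d + r) : ℝ) := by exact_mod_cast hBn
    rw [le_div_iff₀ hBnR]
    have hBm : 0 ≤ B ((n:ℤ)*d + r - 1) := hBnn _ (by have := hidx n hn; omega)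
    have : P * B ((n:ℤ)*d + r) ≤ B (((n:ℤ)+1)*d + r) := by
      rw [hstep n hn]
      nlinarith [hq, hBm]
    exact_mod_cast this
  · -- the ratio recurrence
    intro n hn
    have hB0 := hxpos n hn
    have hB1 := hxpos (n+1) (by omega)
    have hB0R : ((B ((n:ℤ)*d + r):ℤ):ℝ) ≠ 0 := by
      exact_mod_cast ne_of_gt hB0
    have hB1' : (0:ℤ) < B (((n:ℤ)+1)*d + r) := by
      have := hB1
      rwa [show ((n+1:ℕ):ℤ) = (n:ℤ)+1 by push_cast; ring] at this
    have hB1R : ((B (((n:ℤ)+1)*d + r):ℤ):ℝ) ≠ 0 := by exact_mod_cast ne_of_gt hB1'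
    have hrecR : ((B (((n:ℤ)+2)*d + r):ℤ):ℝ)
        = (Cd:ℝ) * (B (((n:ℤ)+1)*d + r):ℝ) + (Dd:ℝ) * (B ((n:ℤ)*d + r):ℝ) := by
      exact_mod_cast hxrec n hn
    have e1 : ((n+1:ℕ):ℤ) + 1 = (n:ℤ) + 2 := by push_cast; ring
    have e2 : ((n+1:ℕ):ℤ) = (n:ℤ) + 1 := by push_cast; ring
    show (B ((((n+1:ℕ):ℤ)+1)*d + r) : ℝ) / (B (((n+1:ℕ):ℤ)*d + r) : ℝ)
        * ((B (((n:ℤ)+1)*d + r) : ℝ) / (B ((n:ℤ)*d + r) : ℝ))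
        = (Cd:ℝ) * ((B (((n:ℤ)+1)*d + r) : ℝ) / (B ((n:ℤ)*d + r) : ℝ)) + (Dd:ℝ)
    rw [show (((n+1:ℕ):ℤ)+1)*(d:ℤ) + r = ((n:ℤ)+2)*d + r by rw [e1], show ((n+1:ℕ):ℤ)*(d:ℤ) + r = ((n:ℤ)+1)*d + r by rw [e2]]
    field_simp
    linear_combination hrecR
end

section
/- Suppose d = 2. Then the series of real numbers ∑_{n=1}^∞ (a_1·a_2)^{2^{n−1}} / B_{2^{n+1}−1} converges, and its sum equals 1/(b_1·β). -/
/-- A Millin-type series for the bi-periodic (d = 2) continuant denominators: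
`∑_{n≥1} (a₁a₂)^(2^(n-1)) / B_{2^(n+1)-1} = 1/(b₁·β)` (the series is indexed here by
`n : ℕ` via the shift `n ↦ n + 1`). -/
theorem millin_series
    (d : ℕ) (hd : 1 ≤ d) (a b : ℤ → ℤ)
    (ha : ∀ ν : ℤ, 1 ≤ ν → 0 < a ν) (hb : ∀ ν : ℤ, 1 ≤ ν → 0 < b ν)
    (hpa : ∀ ν : ℤ, 1 ≤ ν → a (ν + d) = a ν) (hpb : ∀ ν : ℤ, 1 ≤ ν → b (ν + d) = b ν)
    (B : ℤ → ℤ) (hBm1 : B (-1) = 0) (hB0 : B 0 = 1)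
    (hBrec : ∀ ν : ℤ, 1 ≤ ν → B ν = b ν * B (ν - 1) + a ν * B (ν - 2))
    (Cd Dd Δ : ℤ)
    (hC : B ((d : ℤ) - 1) * Cd = B (2 * (d : ℤ) - 1))
    (hD : Dd = (-1 : ℤ) ^ (d - 1) * ∏ i ∈ Finset.range d, a ((i : ℤ) + 1))
    (hΔ : Δ = Cd ^ 2 + 4 * Dd) (hΔpos : 0 < Δ)
    (α β : ℝ)
    (hα : α = (-(Cd : ℝ) + Real.sqrt (Δ : ℝ)) / (2 * (Dd : ℝ)))
    (hβ : β = (-(Cd : ℝ) - Real.sqrt (Δ : ℝ)) / (2 * (Dd : ℝ)))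
    (hd2 : d = 2) :
    HasSum
      (fun n : ℕ =>
        ((a 1 * a 2 : ℤ) : ℝ) ^ (2 ^ n) / (B ((2 : ℤ) ^ (n + 2) - 1) : ℝ))
      (1 / ((b 1 : ℝ) * β)) := by
  subst hd2
  -- basic integer facts
  have hb1 : 0 < b 1 := hb 1 le_rfl
  have hb2 : 0 < b 2 := hb 2 (by norm_num)
  have ha1 : 0 < a 1 := ha 1 le_rfl
  have ha2 : 0 < a 2 := ha 2 (by norm_num)
  have hpa2 : ∀ ν : ℤ, 1 ≤ ν → a (ν + 2) = a ν := by
    intro ν hν; have := hpa ν hν; push_cast at this; exact this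
  have hpb2 : ∀ ν : ℤ, 1 ≤ ν → b (ν + 2) = b ν := by
    intro ν hν; have := hpb ν hν; push_cast at this; exact this
  have haodd : ∀ k : ℕ, a (2 * (k : ℤ) + 1) = a 1 := by
    intro k; induction k with
    | zero => norm_num
    | succ n ih =>
      have h := hpa2 (2 * (n : ℤ) + 1) (by omega)
      have e : 2 * ((n : ℤ) + 1) + 1 = (2 * (n : ℤ) + 1) + 2 := by ring
      push_cast; rw [e, h]; exact ih
  have hbodd : ∀ k : ℕ, b (2 * (k : ℤ) + 1) = b 1 := by
    intro k; induction k with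
    | zero => norm_num
    | succ n ih =>
      have h := hpb2 (2 * (n : ℤ) + 1) (by omega)
      have e : 2 * ((n : ℤ) + 1) + 1 = (2 * (n : ℤ) + 1) + 2 := by ring
      push_cast; rw [e, h]; exact ih
  have haev : ∀ k : ℕ, a (2 * (k : ℤ) + 2) = a 2 := by
    intro k; induction k with
    | zero => norm_num
    | succ n ih =>
      have h := hpa2 (2 * (n : ℤ) + 2) (by omega)
      have e : 2 * ((n : ℤ) + 1) + 2 = (2 * (n : ℤ) + 2) + 2 := by ring
      push_cast; rw [e, h]; exact ih
  have hbev : ∀ k : ℕ, b (2 * (k : ℤ) + 2) = b 2 := by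
    intro k; induction k with
    | zero => norm_num
    | succ n ih =>
      have h := hpb2 (2 * (n : ℤ) + 2) (by omega)
      have e : 2 * ((n : ℤ) + 1) + 2 = (2 * (n : ℤ) + 2) + 2 := by ring
      push_cast; rw [e, h]; exact ih
  -- small values
  have hB1 : B 1 = b 1 := by
    have h := hBrec 1 le_rfl
    norm_num [hB0, hBm1] at h
    exact h
  have hB2 : B 2 = b 2 * b 1 + a 2 := by
    have h := hBrec 2 (by norm_num)
    norm_num [hB0, hB1] at h
    linarith
  -- doubling recurrence with trace T
  set T : ℤ := b 1 * b 2 + a 1 + a 2 with hT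
  have keyT : ∀ m : ℕ, B (2 * (m : ℤ) + 3) =
      T * B (2 * (m : ℤ) + 1) - (a 1 * a 2) * B (2 * (m : ℤ) - 1) := by
    intro m
    have h1 := hBrec (2 * (m : ℤ) + 3) (by omega)
    have h2 := hBrec (2 * (m : ℤ) + 2) (by omega)
    have h3 := hBrec (2 * (m : ℤ) + 1) (by omega)
    have e1 : 2 * (m : ℤ) + 3 - 1 = 2 * (m : ℤ) + 2 := by ring
    have e2 : 2 * (m : ℤ) + 3 - 2 = 2 * (m : ℤ) + 1 := by ring
    have e3 : 2 * (m : ℤ) + 2 - 1 = 2 * (m : ℤ) + 1 := by ring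
    have e4 : 2 * (m : ℤ) + 2 - 2 = 2 * (m : ℤ) := by ring
    have e5 : 2 * (m : ℤ) + 1 - 1 = 2 * (m : ℤ) := by ring
    have e6 : 2 * (m : ℤ) + 1 - 2 = 2 * (m : ℤ) - 1 := by ring
    rw [e1, e2] at h1
    rw [e3, e4] at h2
    rw [e5, e6] at h3
    have hbo := hbodd (m + 1)
    have hao := haodd (m + 1)
    have e7 : 2 * ((m : ℤ) + 1) + 1 = 2 * (m : ℤ) + 3 := by ring
    push_cast at hbo hao
    rw [e7] at hbo hao
    rw [hbo, hao] at h1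
    rw [hbev m, haev m] at h2
    rw [hbodd m, haodd m] at h3
    rw [hT]
    linear_combination h1 + b 1 * h2 - a 2 * h3
  -- identify Cd with T
  have hB3 : B 3 = T * b 1 := by
    have h := keyT 0
    norm_num [hBm1, hB1] at h
    linarith
  have hCd : Cd = T := by
    have h : B ((2 : ℤ) - 1) * Cd = B (2 * (2 : ℤ) - 1) := by exact_mod_cast hC
    norm_num [hB1] at h
    rw [hB3] at h
    have hb1' : (b 1 : ℤ) ≠ 0 := ne_of_gt hb1
    have := mul_left_cancel₀ hb1' (by linarith : b 1 * Cd = b 1 * T)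
    exact this
  have key : ∀ m : ℕ, B (2 * (m : ℤ) + 3) =
      Cd * B (2 * (m : ℤ) + 1) - (a 1 * a 2) * B (2 * (m : ℤ) - 1) := by
    intro m; rw [hCd]; exact keyT m
  have hDval : Dd = -(a 1 * a 2) := by
    rw [hD]; norm_num [Finset.prod_range_succ]
  have hΔval : Δ = Cd ^ 2 - 4 * (a 1 * a 2) := by rw [hΔ, hDval]; ring
  have hCdpos : 0 < Cd := by
    have hB3pos : 0 < B 3 := by
      rw [hB3]
      have : 0 < T := by rw [hT]; positivity
      positivity
    rw [hB3] at hB3pos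
    nlinarith [hb1]
  -- real setup
  set s : ℝ := Real.sqrt (Δ : ℝ) with hsdef
  have hspos : 0 < s := Real.sqrt_pos.2 (by exact_mod_cast hΔpos)
  set C : ℝ := (Cd : ℝ) with hCdef
  set P : ℝ := ((a 1 : ℤ) : ℝ) * ((a 2 : ℤ) : ℝ) with hPdef
  have hPpos : 0 < P := by rw [hPdef]; exact_mod_cast mul_pos ha1 ha2
  have hCpos : 0 < C := by rw [hCdef]; exact_mod_cast hCdpos
  have hs2 : s ^ 2 = C ^ 2 - 4 * P := by
    rw [hsdef, Real.sq_sqrt (by exact_mod_cast hΔpos.le : (0:ℝ) ≤ (Δ:ℝ))]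
    rw [hCdef, hPdef]
    exact_mod_cast congrArg (fun x : ℤ => (x : ℝ)) hΔval
  have hsC : s < C := by nlinarith [hspos, hPpos, hCpos, hs2]
  set φ : ℝ := (C + s) / 2 with hφdef
  set ψ : ℝ := (C - s) / 2 with hψdef
  have hψpos : 0 < ψ := by rw [hψdef]; linarith
  have hφψ : ψ < φ := by rw [hφdef, hψdef]; linarith
  have hφpos : 0 < φ := lt_trans hψpos hφψ
  have hprod : φ * ψ = P := by rw [hφdef, hψdef]; linear_combination -hs2 / 4
  have hφ2 : φ ^ 2 = C * φ - P := by rw [hφdef]; linear_combination hs2 / 4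
  have hψ2 : ψ ^ 2 = C * ψ - P := by rw [hψdef]; linear_combination hs2 / 4
  set F : ℕ → ℝ := fun m => (φ ^ m - ψ ^ m) / s with hFdef
  have hFrec : ∀ m : ℕ, F (m + 2) = C * F (m + 1) - P * F m := by
    intro m
    simp only [hFdef]
    field_simp
    calc φ ^ (m + 2) - ψ ^ (m + 2) = φ ^ 2 * φ ^ m - ψ ^ 2 * ψ ^ m := by ring
    _ = (C * φ - P) * φ ^ m - (C * ψ - P) * ψ ^ m := by rw [hφ2, hψ2]
    _ = C * (φ ^ (m+1) - ψ ^ (m+1)) - P * (φ ^ m - ψ ^ m) := by ring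
  -- Binet formula for B(2m-1)
  have binet : ∀ m : ℕ, ((B (2 * (m : ℤ) - 1) : ℤ) : ℝ) = (b 1 : ℝ) * F m := by
    have main : ∀ m : ℕ, ((B (2 * (m : ℤ) - 1) : ℤ) : ℝ) = (b 1 : ℝ) * F m ∧
        ((B (2 * ((m : ℤ) + 1) - 1) : ℤ) : ℝ) = (b 1 : ℝ) * F (m + 1) := by
      intro m
      induction m with
      | zero =>
        constructor
        · norm_num [hBm1, hFdef]
        · norm_num [hB1, hFdef]
          have hφmψ : φ - ψ = s := by rw [hφdef, hψdef]; ring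
          rw [hφmψ, div_self (ne_of_gt hspos), mul_one]
      | succ n ih =>
        obtain ⟨ih1, ih2⟩ := ih
        constructor
        · have e : 2 * (((n : ℤ) + 1)) - 1 = 2 * ((n : ℤ) + 1) - 1 := by ring
          push_cast
          exact ih2
        · have hkey := key n
          have e : 2 * ((n : ℤ)) + 3 = 2 * (((n : ℤ) + 1) + 1) - 1 := by ring
          have e2 : 2 * ((n : ℤ)) + 1 = 2 * ((n : ℤ) + 1) - 1 := by ring
          rw [e, e2] at hkey
          push_cast
          have : ((B (2 * (((n : ℤ) + 1) + 1) - 1) : ℤ) : ℝ)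
              = C * ((B (2 * ((n : ℤ) + 1) - 1) : ℤ) : ℝ)
                - P * ((B (2 * (n : ℤ) - 1) : ℤ) : ℝ) := by
            rw [hkey]; push_cast [hCdef, hPdef]; ring
          rw [this, ih1, ih2, hFrec n]; ring
    exact fun m => (main m).1
  have hFpos : ∀ m : ℕ, 1 ≤ m → 0 < F m := by
    intro m hm
    have : ψ ^ m < φ ^ m := pow_lt_pow_left₀ hφψ hψpos.le (by omega)
    rw [hFdef]
    have : 0 < φ ^ m - ψ ^ m := by linarith
    positivity
  -- rewrite the summand
  have hterm : ∀ n : ℕ, ((a 1 * a 2 : ℤ) : ℝ) ^ (2 ^ n) / (B ((2 : ℤ) ^ (n + 2) - 1) : ℝ)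
      = P ^ (2 ^ n) / ((b 1 : ℝ) * F (2 ^ (n + 1))) := by
    intro n
    have e : (2 : ℤ) ^ (n + 2) - 1 = 2 * ((2 ^ (n + 1) : ℕ) : ℤ) - 1 := by
      push_cast; ring
    rw [e, binet (2 ^ (n + 1))]
    push_cast [hPdef]
    ring
  -- value of the sum
  have hβval : 1 / ((b 1 : ℝ) * β) = ψ / (b 1 : ℝ) := by
    have hDr : ((Dd : ℤ) : ℝ) = -P := by rw [hPdef]; exact_mod_cast congrArg (fun x : ℤ => (x : ℝ)) hDval
    have hβψ : β * ψ = 1 := by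
      rw [hβ, hDr, hψdef]
      have hP' : P ≠ 0 := ne_of_gt hPpos
      have hs2' := hs2
      rw [hPdef] at hs2'
      field_simp
      linarith [hs2']
    have hb1r : (0:ℝ) < (b 1 : ℝ) := by exact_mod_cast hb1
    have hβ1 : β = 1 / ψ := by
      rw [eq_div_iff (ne_of_gt hψpos)]; exact hβψ
    rw [hβ1]
    field_simp
  rw [hβval]
  simp only [hterm]
  have hb1r : (0:ℝ) < (b 1 : ℝ) := by exact_mod_cast hb1
  have hφmψ : φ - ψ = s := by rw [hφdef, hψdef]; ring
  have hnn : ∀ n : ℕ, 0 ≤ P ^ 2 ^ n / ((b 1 : ℝ) * F (2 ^ (n + 1))) := by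
    intro n
    have hF := hFpos (2 ^ (n + 1)) Nat.one_le_two_pow
    positivity
  rw [hasSum_iff_tendsto_nat_of_nonneg hnn]
  have hps : ∀ n : ℕ, ∑ i ∈ Finset.range n, P ^ 2 ^ i / ((b 1 : ℝ) * F (2 ^ (i + 1)))
      = ψ / (b 1 : ℝ) - (s / (b 1 : ℝ)) * (ψ ^ 2 ^ n / (φ ^ 2 ^ n - ψ ^ 2 ^ n)) := by
    intro n
    induction n with
    | zero =>
      simp only [Finset.range_zero, Finset.sum_empty, pow_zero, pow_one, hφmψ]
      field_simp
      ring
    | succ k ih =>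
      rw [Finset.sum_range_succ, ih]
      have hA : φ ^ 2 ^ (k + 1) = (φ ^ 2 ^ k) ^ 2 := by rw [← pow_mul, pow_succ]
      have hQ : ψ ^ 2 ^ (k + 1) = (ψ ^ 2 ^ k) ^ 2 := by rw [← pow_mul, pow_succ]
      have hP : P ^ 2 ^ k = φ ^ 2 ^ k * ψ ^ 2 ^ k := by rw [← hprod, mul_pow]
      have h2k : (2 : ℕ) ^ k ≠ 0 := (pow_pos (by norm_num : (0:ℕ) < 2) k).ne'
      have hlt : ψ ^ 2 ^ k < φ ^ 2 ^ k := pow_lt_pow_left₀ hφψ hψpos.le h2k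
      have hQpos : 0 < ψ ^ 2 ^ k := pow_pos hψpos _
      have hsub : (0:ℝ) < φ ^ 2 ^ k - ψ ^ 2 ^ k := sub_pos.2 hlt
      have hadd : (0:ℝ) < φ ^ 2 ^ k + ψ ^ 2 ^ k := by positivity
      simp only [hFdef, hA, hQ, hP]
      have h1 : ((φ ^ 2 ^ k) ^ 2 - (ψ ^ 2 ^ k) ^ 2)
          = (φ ^ 2 ^ k - ψ ^ 2 ^ k) * (φ ^ 2 ^ k + ψ ^ 2 ^ k) := by ring
      rw [h1]
      field_simp
      ring
  simp only [hps]
  have hlim : Filter.Tendsto (fun n : ℕ => ψ ^ 2 ^ n / (φ ^ 2 ^ n - ψ ^ 2 ^ n))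
      Filter.atTop (nhds 0) := by
    have hx : 1 < φ / ψ := (one_lt_div hψpos).2 hφψ
    have h1 : Filter.Tendsto (fun n : ℕ => (φ / ψ) ^ 2 ^ n) Filter.atTop Filter.atTop :=
      (tendsto_pow_atTop_atTop_of_one_lt hx).comp
        (tendsto_pow_atTop_atTop_of_one_lt (r := (2:ℕ)) one_lt_two)
    have h2 : Filter.Tendsto (fun n : ℕ => (φ / ψ) ^ 2 ^ n - 1) Filter.atTop Filter.atTop := by
      simpa [sub_eq_add_neg] using Filter.tendsto_atTop_add_const_right Filter.atTop (-1 : ℝ) h1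
    have h3 := h2.inv_tendsto_atTop
    have heq : (fun n : ℕ => ψ ^ 2 ^ n / (φ ^ 2 ^ n - ψ ^ 2 ^ n))
        = fun n : ℕ => ((φ / ψ) ^ 2 ^ n - 1)⁻¹ := by
      funext n
      have hq : (0:ℝ) < ψ ^ 2 ^ n := pow_pos hψpos _
      have h2k : (2 : ℕ) ^ n ≠ 0 := (pow_pos (by norm_num : (0:ℕ) < 2) n).ne'
      have hltn : ψ ^ 2 ^ n < φ ^ 2 ^ n := pow_lt_pow_left₀ hφψ hψpos.le h2k
      have hne1 : φ ^ 2 ^ n - ψ ^ 2 ^ n ≠ 0 := ne_of_gt (sub_pos.2 hltn)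
      have hgt1 : 1 < (φ / ψ) ^ 2 ^ n := one_lt_pow₀ ((one_lt_div hψpos).2 hφψ) h2k
      have hne2 : (φ / ψ) ^ 2 ^ n - 1 ≠ 0 := ne_of_gt (sub_pos.2 hgt1)
      rw [div_eq_iff hne1, inv_mul_eq_div, eq_div_iff hne2, div_pow]
      have hcs : C - s = ψ * 2 := by rw [hψdef]; ring
      field_simp
      rw [hcs, mul_pow]
      have hψi : ψ ^ 2 ^ n * ψ⁻¹ ^ 2 ^ n = 1 := by rw [← mul_pow, mul_inv_cancel₀ hψpos.ne', one_pow]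
      simp only [div_pow, mul_pow]
      linear_combination (φ ^ 2 ^ n * 2 ^ 2 ^ n) * hψi
    rw [heq]
    exact h3
  have hfinal : Filter.Tendsto
      (fun n : ℕ => ψ / ((b 1 : ℤ) : ℝ)
        - s / ((b 1 : ℤ) : ℝ) * (ψ ^ 2 ^ n / (φ ^ 2 ^ n - ψ ^ 2 ^ n)))
      Filter.atTop (nhds (ψ / ((b 1 : ℤ) : ℝ) - s / ((b 1 : ℤ) : ℝ) * 0)) :=
    tendsto_const_nhds.sub (hlim.const_mul _)
  rw [mul_zero, sub_zero] at hfinal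
  exact hfinal
end

section
/- The series of real numbers ∑_{n=1}^∞ (−D_d)^{n−1} / (B_{nd−1}·B_{(n+1)d−1}) converges, and its sum equals α / B_{d−1}². -/
/-- Auxiliary second solution of the continued-fraction recurrence, with
initial values `Aseq 0 = 1` (playing the role of `A (-1)`) and `Aseq 1 = 0`
(playing the role of `A 0`). -/
private def Aseq (a b : ℤ → ℤ) : ℕ → ℤ
  | 0 => 1
  | 1 => 0
  | (n+2) => b ((n : ℤ) + 1) * Aseq a b (n+1) + a ((n : ℤ) + 1) * Aseq a b n

set_option maxHeartbeats 1600000 in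
/-- The telescoping series `∑_{n≥1} (−D_d)^(n−1)/(B_{nd−1}·B_{(n+1)d−1}) = α/B_{d−1}²`
(the series is indexed here by `n : ℕ` via the shift `n ↦ n + 1`). -/
theorem telescoping_series_two
    (d : ℕ) (hd : 1 ≤ d) (a b : ℤ → ℤ)
    (ha : ∀ ν : ℤ, 1 ≤ ν → 0 < a ν) (hb : ∀ ν : ℤ, 1 ≤ ν → 0 < b ν)
    (hpa : ∀ ν : ℤ, 1 ≤ ν → a (ν + d) = a ν) (hpb : ∀ ν : ℤ, 1 ≤ ν → b (ν + d) = b ν)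
    (B : ℤ → ℤ) (hBm1 : B (-1) = 0) (hB0 : B 0 = 1)
    (hBrec : ∀ ν : ℤ, 1 ≤ ν → B ν = b ν * B (ν - 1) + a ν * B (ν - 2))
    (Cd Dd Δ : ℤ)
    (hC : B ((d : ℤ) - 1) * Cd = B (2 * (d : ℤ) - 1))
    (hD : Dd = (-1 : ℤ) ^ (d - 1) * ∏ i ∈ Finset.range d, a ((i : ℤ) + 1))
    (hΔ : Δ = Cd ^ 2 + 4 * Dd) (hΔpos : 0 < Δ)
    (α β : ℝ)
    (hα : α = (-(Cd : ℝ) + Real.sqrt (Δ : ℝ)) / (2 * (Dd : ℝ)))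
    (hβ : β = (-(Cd : ℝ) - Real.sqrt (Δ : ℝ)) / (2 * (Dd : ℝ))) :
    HasSum
      (fun n : ℕ =>
        (-(Dd : ℝ)) ^ n /
          ((B (((n : ℤ) + 1) * d - 1) : ℝ) * (B (((n : ℤ) + 2) * d - 1) : ℝ)))
      (α / (B ((d : ℤ) - 1) : ℝ) ^ 2) := by
  -- shifted ℕ-indexed version of B : `BB n = B (n - 1)`
  set BB : ℕ → ℤ := fun n => B ((n : ℤ) - 1) with hBB
  set A : ℕ → ℤ := Aseq a b with hA
  have hBB0 : BB 0 = 0 := by simpa [hBB] using hBm1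
  have hBB1 : BB 1 = 1 := by simpa [hBB] using hB0
  have hA0 : A 0 = 1 := rfl
  have hA1 : A 1 = 0 := rfl
  have hArec : ∀ n : ℕ, A (n+2) = b ((n:ℤ)+1) * A (n+1) + a ((n:ℤ)+1) * A n :=
    fun n => rfl
  have hBBrec : ∀ n : ℕ, BB (n+2) = b ((n:ℤ)+1) * BB (n+1) + a ((n:ℤ)+1) * BB n := by
    intro n
    have h := hBrec ((n:ℤ)+1) (by omega)
    have e1 : ((n:ℤ)+1) - 1 = ((n+1 : ℕ) : ℤ) - 1 := by push_cast; ring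
    have e2 : ((n:ℤ)+1) - 2 = ((n : ℕ) : ℤ) - 1 := by ring
    have e3 : ((n+2 : ℕ) : ℤ) - 1 = ((n:ℤ)+1) := by push_cast; ring
    simp only [hBB, e3]
    rw [h, e1, e2]
  have hpa' : ∀ n : ℕ, a ((n:ℤ)+1+d) = a ((n:ℤ)+1) := fun n => hpa _ (by omega)
  have hpb' : ∀ n : ℕ, b ((n:ℤ)+1+d) = b ((n:ℤ)+1) := fun n => hpb _ (by omega)
  have hBBpos : ∀ n : ℕ, 0 < BB (n+1) := by
    have key : ∀ n : ℕ, 0 < BB (n+1) ∧ 0 < BB (n+2) := by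
      intro n
      induction n with
      | zero =>
        constructor
        · rw [hBB1]; norm_num
        · rw [hBBrec 0, hBB0, hBB1]
          have := hb 1 le_rfl
          push_cast
          nlinarith [hb (0+1) (by omega)]
      | succ n ih =>
        refine ⟨ih.2, ?_⟩
        rw [hBBrec (n+1)]
        nlinarith [ha (((n+1:ℕ):ℤ)+1) (by omega), hb (((n+1:ℕ):ℤ)+1) (by omega),
          ih.1, ih.2]
    exact fun n => (key n).1
  -- shift-by-d formulas
  have hL1 : ∀ n : ℕ, BB (n + d) = BB (d+1) * BB n + BB d * A n := by
    have key : ∀ n : ℕ, (BB (n + d) = BB (d+1) * BB n + BB d * A n) ∧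
        (BB (n + 1 + d) = BB (d+1) * BB (n+1) + BB d * A (n+1)) := by
      intro n
      induction n with
      | zero =>
        constructor
        · rw [hBB0, hA0]; ring_nf
        · rw [hBB1, hA1]; ring_nf
      | succ n ih =>
        refine ⟨ih.2, ?_⟩
        have e0 : n + 1 + 1 + d = (n + d) + 2 := by ring
        have e1 : ((n + d : ℕ) : ℤ) + 1 = ((n:ℤ)+1) + d := by push_cast; ring
        rw [e0, hBBrec (n + d), e1, hpa' n, hpb' n,
          show n + d + 1 = (n+1) + d by ring, ih.2, ih.1, hBBrec n, hArec n]
        ring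
    exact fun n => (key n).1
  have hL2 : ∀ n : ℕ, A (n + d) = A (d+1) * BB n + A d * A n := by
    have key : ∀ n : ℕ, (A (n + d) = A (d+1) * BB n + A d * A n) ∧
        (A (n + 1 + d) = A (d+1) * BB (n+1) + A d * A (n+1)) := by
      intro n
      induction n with
      | zero =>
        constructor
        · rw [hBB0, hA0]; ring_nf
        · rw [hBB1, hA1]; ring_nf
      | succ n ih =>
        refine ⟨ih.2, ?_⟩
        have e0 : n + 1 + 1 + d = (n + d) + 2 := by ring
        have e1 : ((n + d : ℕ) : ℤ) + 1 = ((n:ℤ)+1) + d := by push_cast; ring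
        rw [e0, hArec (n + d), e1, hpa' n, hpb' n,
          show n + d + 1 = (n+1) + d by ring, ih.2, ih.1, hBBrec n, hArec n]
        ring
    exact fun n => (key n).1
  -- determinant formula
  have hL3 : ∀ n : ℕ, BB (n+1) * A n - BB n * A (n+1)
      = (-1)^n * ∏ i ∈ Finset.range n, a ((i : ℤ) + 1) := by
    intro n
    induction n with
    | zero => simp [hBB0, hBB1, hA0, hA1]
    | succ n ih =>
      rw [Finset.prod_range_succ, hBBrec n, hArec n, pow_succ]
      linear_combination (-(a ((n:ℤ)+1))) * ih
  have hprodpos : 0 < ∏ i ∈ Finset.range d, a ((i : ℤ) + 1) :=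
    Finset.prod_pos (fun i _ => ha _ (by omega))
  have hDdne : Dd ≠ 0 := by
    rw [hD]
    exact mul_ne_zero (pow_ne_zero _ (by norm_num)) (ne_of_gt hprodpos)
  have hdet : BB (d+1) * A d - BB d * A (d+1) = -Dd := by
    obtain ⟨m, rfl⟩ : ∃ m, d = m + 1 := ⟨d - 1, by omega⟩
    rw [hL3 (m+1), hD]
    simp only [Nat.add_sub_cancel, pow_succ]
    ring
  -- the subsequence u n = B (n*d - 1)
  set u : ℕ → ℤ := fun n => BB (n * d) with hu
  have hu0 : u 0 = 0 := by simp [hu, hBB0]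
  have hu1 : u 1 = BB d := by simp [hu]
  have hustep : ∀ n : ℕ, u (n+1) = BB (d+1) * u n + BB d * A (n*d) := by
    intro n
    have : (n+1) * d = n * d + d := by ring
    show BB ((n+1)*d) = _
    rw [this]; exact hL1 (n*d)
  have hAstep : ∀ n : ℕ, A ((n+1)*d) = A (d+1) * u n + A d * A (n*d) := by
    intro n
    have : (n+1) * d = n * d + d := by ring
    rw [this, hL2 (n*d)]
  have hurec0 : ∀ n : ℕ, u (n+2) = (BB (d+1) + A d) * u (n+1) + Dd * u n := by
    intro n
    have h1 := hustep (n+1)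
    have h2 := hustep n
    have h3 := hAstep n
    linear_combination h1 + BB d * h3 - A d * h2 - u n * hdet
  have huBpos : ∀ n : ℕ, 0 < u (n+1) := by
    intro n
    have : (n+1) * d = ((n+1)*d - 1) + 1 := by
      have : 1 ≤ (n+1)*d := Nat.one_le_iff_ne_zero.mpr (by positivity)
      omega
    show 0 < BB ((n+1)*d)
    rw [this]
    exact hBBpos _
  have hu1pos : 0 < u 1 := huBpos 0
  have hu2pos : 0 < u 2 := huBpos 1
  -- identify Cd with the trace
  have hCd : Cd = BB (d+1) + A d := by
    have h2 : u 2 = (BB (d+1) + A d) * u 1 + Dd * u 0 := hurec0 0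
    have hCu : BB d * Cd = u 2 := by
      have e : ((2*d : ℕ) : ℤ) - 1 = 2 * (d:ℤ) - 1 := by push_cast; ring
      have h22 : u 2 = BB (2*d) := rfl
      have : BB (2*d) = B (2*(d:ℤ)-1) := by show B (((2*d:ℕ):ℤ)-1) = _; rw [e]
      rw [h22, this, ← hC]
    have hBBd : 0 < BB d := by rw [← hu1]; exact hu1pos
    have : BB d * Cd = BB d * (BB (d+1) + A d) := by
      rw [hCu, h2, hu0, hu1]; ring
    exact mul_left_cancel₀ (ne_of_gt hBBd) this
  have hurec : ∀ n : ℕ, u (n+2) = Cd * u (n+1) + Dd * u n := by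
    intro n; rw [hCd]; exact hurec0 n
  have hCdpos : 0 < Cd := by
    have h2 : u 2 = Cd * u 1 + Dd * u 0 := hurec 0
    rw [hu0, mul_zero, add_zero] at h2
    nlinarith [hu1pos, hu2pos]
  -- telescoping identity
  have htel : ∀ n : ℕ, u (n+2) * u n - u (n+1)^2 = (-Dd)^n * (-(u 1)^2) := by
    intro n
    induction n with
    | zero => rw [hu0]; ring
    | succ n ih =>
      have h1 := hurec (n+1)
      have h2 := hurec n
      calc u (n+1+2) * u (n+1) - u (n+1+1)^2
          = -Dd * (u (n+2) * u n - u (n+1)^2) := by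
            linear_combination u (n+1) * h1 - u (n+2) * h2
        _ = (-Dd)^(n+1) * (-(u 1)^2) := by rw [ih]; ring
  -- real characteristic roots
  set s : ℝ := Real.sqrt (Δ : ℝ) with hsdef
  have hΔR : (0:ℝ) < (Δ:ℝ) := by exact_mod_cast hΔpos
  have hspos : 0 < s := Real.sqrt_pos.mpr hΔR
  have hs2 : s^2 = (Δ:ℝ) := Real.sq_sqrt hΔR.le
  obtain ⟨tp, htpdef⟩ : ∃ x : ℝ, x = ((Cd:ℝ) + s)/2 := ⟨_, rfl⟩
  obtain ⟨tm, htmdef⟩ : ∃ x : ℝ, x = ((Cd:ℝ) - s)/2 := ⟨_, rfl⟩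
  have hΔR' : (Δ:ℝ) = (Cd:ℝ)^2 + 4*(Dd:ℝ) := by exact_mod_cast hΔ
  have htp2 : tp^2 = (Cd:ℝ)*tp + (Dd:ℝ) := by
    rw [htpdef]; linear_combination hs2/4 + hΔR'/4
  have htm2 : tm^2 = (Cd:ℝ)*tm + (Dd:ℝ) := by
    rw [htmdef]; linear_combination hs2/4 + hΔR'/4
  have hCdR : (0:ℝ) < (Cd:ℝ) := by exact_mod_cast hCdpos
  have htppos : 0 < tp := by rw [htpdef]; positivity
  have htmlt : |tm| < tp := by
    rw [abs_lt]; constructor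
    · rw [htmdef, htpdef]; linarith
    · rw [htmdef, htpdef]; linarith
  -- Binet formula
  have binet : ∀ n : ℕ, ((u n : ℤ):ℝ) * s = ((u 1 : ℤ):ℝ) * (tp^n - tm^n) := by
    have key : ∀ n : ℕ, ((u n : ℤ):ℝ) * s = ((u 1 : ℤ):ℝ) * (tp^n - tm^n) ∧
        ((u (n+1) : ℤ):ℝ) * s = ((u 1 : ℤ):ℝ) * (tp^(n+1) - tm^(n+1)) := by
      intro n
      induction n with
      | zero =>
        constructor
        · rw [hu0]; push_cast; ring
        · rw [htpdef, htmdef]; push_cast; ring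
      | succ n ih =>
        refine ⟨ih.2, ?_⟩
        have hr : ((u (n+2) : ℤ):ℝ) = (Cd:ℝ)*((u (n+1):ℤ):ℝ) + (Dd:ℝ)*((u n:ℤ):ℝ) := by
          exact_mod_cast hurec n
        linear_combination s*hr + (Cd:ℝ)*ih.2 + (Dd:ℝ)*ih.1
          - ((u 1:ℤ):ℝ)*tp^n*htp2 + ((u 1:ℤ):ℝ)*tm^n*htm2
    exact fun n => (key n).1
  -- geometric ratio
  obtain ⟨q, hqdef⟩ : ∃ x : ℝ, x = tm/tp := ⟨_, rfl⟩
  have hqlt : |q| < 1 := by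
    rw [hqdef, abs_div, abs_of_pos htppos, div_lt_one htppos]; exact htmlt
  have hpowtm : ∀ n : ℕ, tm^n = tp^n * q^n := by
    intro n
    rw [← mul_pow, hqdef, mul_div_cancel₀ _ (ne_of_gt htppos)]
  have hu1R : (0:ℝ) < ((u 1:ℤ):ℝ) := by exact_mod_cast hu1pos
  obtain ⟨c, hcdef⟩ : ∃ x : ℝ, x = ((u 1:ℤ):ℝ)/s := ⟨_, rfl⟩
  have hcpos : 0 < c := by rw [hcdef]; positivity
  have hureal : ∀ n : ℕ, ((u n:ℤ):ℝ) = c * tp^n * (1 - q^n) := by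
    intro n
    have h := binet n
    rw [hpowtm n] at h
    apply mul_right_cancel₀ (ne_of_gt hspos)
    rw [h, hcdef]
    field_simp
  have h1mq : (0:ℝ) < 1 - |q| := by linarith [abs_nonneg q, hqlt]
  have hqle : ∀ n : ℕ, q^(n+1) ≤ |q| := by
    intro n
    calc q^(n+1) ≤ |q^(n+1)| := le_abs_self _
      _ = |q|^(n+1) := abs_pow q (n+1)
      _ ≤ |q| := pow_le_of_le_one (abs_nonneg q) hqlt.le (by omega)
  have hfrac : ∀ n : ℕ, (0:ℝ) < 1 - q^(n+1) := fun n => by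
    have := hqle n; linarith
  -- the series, rewritten
  set F : ℕ → ℝ := fun n => (-(Dd:ℝ))^n / (((u (n+1):ℤ):ℝ) * ((u (n+2):ℤ):ℝ)) with hFdef
  have hBu : ∀ n : ℕ, B (((n:ℤ) + 1) * d - 1) = u (n+1) := by
    intro n
    have : ((n:ℤ) + 1) * d - 1 = (((n+1)*d : ℕ) : ℤ) - 1 := by push_cast; ring
    rw [this]
  have hBu2 : ∀ n : ℕ, B (((n:ℤ) + 2) * d - 1) = u (n+2) := by
    intro n
    have : ((n:ℤ) + 2) * d - 1 = (((n+2)*d : ℕ) : ℤ) - 1 := by push_cast; ring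
    rw [this]
  have hfun : (fun n : ℕ =>
      (-(Dd : ℝ)) ^ n /
        ((B (((n : ℤ) + 1) * d - 1) : ℝ) * (B (((n : ℤ) + 2) * d - 1) : ℝ))) = F := by
    funext n
    rw [hFdef]
    simp only [hBu n, hBu2 n]
  have huposR : ∀ n : ℕ, (0:ℝ) < ((u (n+1):ℤ):ℝ) := fun n => by exact_mod_cast huBpos n
  have hBd : B ((d:ℤ)-1) = u 1 := by
    show _ = BB (1*d)
    rw [one_mul]
  clear_value BB A u F
  -- summability
  have htptm : tp * tm = -(Dd:ℝ) := by
    rw [htpdef, htmdef]; linear_combination (-1/4)*hs2 - (1/4)*hΔR'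
  have hDdabs : |(Dd:ℝ)| = tp^2 * |q| := by
    have h1 : tm = tp * q := by rw [hqdef, mul_div_cancel₀ _ (ne_of_gt htppos)]
    rw [← abs_neg, ← htptm, h1, abs_mul, abs_mul, abs_of_pos htppos]
    ring
  obtain ⟨M, hMdef⟩ : ∃ x : ℝ, x = 1/(c^2*tp^3*(1-|q|)^2) := ⟨_, rfl⟩
  have hbound : ∀ n : ℕ, |F n| ≤ M * |q|^n := by
    intro n
    have habs : |F n| = |(Dd:ℝ)|^n / (((u (n+1):ℤ):ℝ) * ((u (n+2):ℤ):ℝ)) := by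
      simp only [hFdef]
      rw [abs_div, abs_pow, abs_neg, abs_of_pos (mul_pos (huposR n) (huposR (n+1)))]
    rw [habs, hDdabs, hureal (n+1), hureal (n+2)]
    have key : (tp^2*|q|)^n / ((c*tp^(n+1)*(1-|q|)) * (c*tp^(n+2)*(1-|q|))) = M * |q|^n := by
      rw [hMdef]
      field_simp
      ring
    rw [← key]
    have e1 := hqle n
    have e2 := hqle (n+1)
    have e3 := hfrac n
    have e4 := hfrac (n+1)
    have e5 : (0:ℝ) ≤ |q| := abs_nonneg q
    gcongr
  have hsum_geo : Summable (fun n : ℕ => M*|q|^n) :=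
    (summable_geometric_of_lt_one (abs_nonneg q) hqlt).mul_left M
  have hFsummable : Summable F :=
    Summable.of_abs (Summable.of_nonneg_of_le (fun n => abs_nonneg _) hbound hsum_geo)
  -- partial sums telescope
  have hpart : ∀ N : ℕ, ∑ n ∈ Finset.range N, F n
      = ((u N:ℤ):ℝ) / (((u 1:ℤ):ℝ)^2 * ((u (N+1):ℤ):ℝ)) := by
    intro N
    induction N with
    | zero => simp [hu0]
    | succ N ih =>
      rw [Finset.sum_range_succ, ih]
      have htelR : ((u (N+2):ℤ):ℝ) * ((u N:ℤ):ℝ) - ((u (N+1):ℤ):ℝ)^2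
          = (-(Dd:ℝ))^N * (-((u 1:ℤ):ℝ)^2) := by exact_mod_cast htel N
      have h1 := ne_of_gt (huposR N)
      have h2 := ne_of_gt (huposR (N+1))
      have h3 := ne_of_gt hu1R
      simp only [hFdef]
      field_simp
      linear_combination htelR
  -- limit of partial sums
  have hαtp : α = 1/tp := by
    have hne : (Cd:ℝ) + s ≠ 0 := by positivity
    have hDne : (Dd:ℝ) ≠ 0 := by exact_mod_cast hDdne
    rw [hα, htpdef]
    rw [div_eq_div_iff (by positivity) (by positivity)]
    linear_combination hs2/2 + hΔR'/2
  have hratio : ∀ N : ℕ, ((u N:ℤ):ℝ) / (((u 1:ℤ):ℝ)^2 * ((u (N+1):ℤ):ℝ))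
      = (1/((u 1:ℤ):ℝ)^2) * ((1 - q^N)/(tp*(1 - q^(N+1)))) := by
    intro N
    rw [hureal N, hureal (N+1)]
    have h1 : 1 - q^(N+1) ≠ 0 := ne_of_gt (hfrac N)
    have hc0 : c ≠ 0 := ne_of_gt hcpos
    have htp0 : tp ≠ 0 := ne_of_gt htppos
    have hu10 : ((u 1:ℤ):ℝ) ≠ 0 := ne_of_gt hu1R
    field_simp
    ring
  have hq0 : Filter.Tendsto (fun N : ℕ => q^N) Filter.atTop (nhds 0) :=
    tendsto_pow_atTop_nhds_zero_of_abs_lt_one hqlt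
  have hq0' : Filter.Tendsto (fun N : ℕ => q^(N+1)) Filter.atTop (nhds 0) := by
    have := hq0.mul_const q
    simpa [pow_succ] using this
  have hlim1 : Filter.Tendsto (fun N : ℕ => (1 - q^N)/(tp*(1 - q^(N+1))))
      Filter.atTop (nhds (1/tp)) := by
    have hnum : Filter.Tendsto (fun N : ℕ => 1 - q^N) Filter.atTop (nhds 1) := by
      simpa using tendsto_const_nhds.sub hq0
    have hden : Filter.Tendsto (fun N : ℕ => tp*(1 - q^(N+1))) Filter.atTop (nhds tp) := by
      have : Filter.Tendsto (fun N : ℕ => 1 - q^(N+1)) Filter.atTop (nhds 1) := by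
        simpa using tendsto_const_nhds.sub hq0'
      simpa using this.const_mul tp
    exact hnum.div hden (ne_of_gt htppos)
  have hlim : Filter.Tendsto (fun N => ∑ n ∈ Finset.range N, F n) Filter.atTop
      (nhds (α/((u 1:ℤ):ℝ)^2)) := by
    have heq : (fun N => ∑ n ∈ Finset.range N, F n)
        = fun N : ℕ => (1/((u 1:ℤ):ℝ)^2) * ((1 - q^N)/(tp*(1 - q^(N+1)))) :=
      funext fun N => by rw [hpart N, hratio N]
    rw [heq]
    have := hlim1.const_mul (1/((u 1:ℤ):ℝ)^2)
    have he : (1/((u 1:ℤ):ℝ)^2) * (1/tp) = α/((u 1:ℤ):ℝ)^2 := by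
      rw [hαtp]; ring
    rw [← he]
    exact this
  -- conclusion
  have hHasSum : HasSum F (∑' n, F n) := hFsummable.hasSum
  have htsum : (∑' n, F n) = α/((u 1:ℤ):ℝ)^2 :=
    tendsto_nhds_unique hHasSum.tendsto_sum_nat hlim
  rw [hfun, hBd]
  rw [← htsum]
  exact hHasSum
end

section
/- Suppose D_d = 1 (i.e., d is odd and a_1·a_2⋯a_d = 1). Then the series of real numbers ∑_{n=1}^∞ arctan( B_{2d−1} / B_{(2n+1)d−1} ) converges, and its sum equals arctan( B_{d−1} / B_{2d−1} ). -/
open Real Filter Finset Topology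

/-- Aux: second order recurrence sequence with coefficients `a b` (shifted to ℕ). -/
private def seq2 (a b : ℤ → ℤ) (x0 x1 : ℤ) : ℕ → ℤ
  | 0 => x0
  | 1 => x1
  | (k+2) => b ((k : ℤ) + 1) * seq2 a b x0 x1 (k+1) + a ((k : ℤ) + 1) * seq2 a b x0 x1 k

/-- Aux: generalized Fibonacci sequence. -/
private def fib2 (C : ℤ) : ℕ → ℤ
  | 0 => 0
  | 1 => 1
  | (n+2) => C * fib2 C (n+1) + fib2 C n

private lemma seq2_unique (a b : ℤ → ℤ) (s t : ℕ → ℤ)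
    (hs : ∀ k : ℕ, s (k+2) = b ((k : ℤ) + 1) * s (k+1) + a ((k : ℤ) + 1) * s k)
    (ht : ∀ k : ℕ, t (k+2) = b ((k : ℤ) + 1) * t (k+1) + a ((k : ℤ) + 1) * t k)
    (h0 : s 0 = t 0) (h1 : s 1 = t 1) : ∀ k, s k = t k := by
  intro k
  induction k using Nat.twoStepInduction with
  | zero => exact h0
  | one => exact h1
  | more k ih1 ih2 => rw [hs, ht, ih1, ih2]

/-- `B` reindexed by ℕ via `k ↦ B (k - 1)`. -/
private def BI (B : ℤ → ℤ) (k : ℕ) : ℤ := B ((k : ℤ) - 1)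

private lemma BI_rec (a b B : ℤ → ℤ)
    (hBrec : ∀ ν : ℤ, 1 ≤ ν → B ν = b ν * B (ν - 1) + a ν * B (ν - 2)) (k : ℕ) :
    BI B (k+2) = b ((k : ℤ) + 1) * BI B (k+1) + a ((k : ℤ) + 1) * BI B k := by
  have h := hBrec ((k : ℤ) + 1) (by omega)
  simp only [BI]
  rw [show ((k+2 : ℕ) : ℤ) - 1 = (k : ℤ) + 1 by push_cast; ring, h,
      show (k : ℤ) + 1 - 1 = ((k+1 : ℕ) : ℤ) - 1 by push_cast; ring,
      show (k : ℤ) + 1 - 2 = (k : ℤ) - 1 by ring]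

/-- The arctangent telescoping series: if `D_d = 1` then
`∑_{n≥1} arctan(B_{2d−1}/B_{(2n+1)d−1}) = arctan(B_{d−1}/B_{2d−1})`
(the series is indexed here by `n : ℕ` via the shift `n ↦ n + 1`). -/
theorem arctan_series
    (d : ℕ) (hd : 1 ≤ d) (a b : ℤ → ℤ)
    (ha : ∀ ν : ℤ, 1 ≤ ν → 0 < a ν) (hb : ∀ ν : ℤ, 1 ≤ ν → 0 < b ν)
    (hpa : ∀ ν : ℤ, 1 ≤ ν → a (ν + d) = a ν) (hpb : ∀ ν : ℤ, 1 ≤ ν → b (ν + d) = b ν)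
    (B : ℤ → ℤ) (hBm1 : B (-1) = 0) (hB0 : B 0 = 1)
    (hBrec : ∀ ν : ℤ, 1 ≤ ν → B ν = b ν * B (ν - 1) + a ν * B (ν - 2))
    (Cd Dd Δ : ℤ)
    (hC : B ((d : ℤ) - 1) * Cd = B (2 * (d : ℤ) - 1))
    (hD : Dd = (-1 : ℤ) ^ (d - 1) * ∏ i ∈ Finset.range d, a ((i : ℤ) + 1))
    (hΔ : Δ = Cd ^ 2 + 4 * Dd)
    (hD1 : Dd = 1) :
    HasSum
      (fun n : ℕ =>
        Real.arctan ((B (2 * (d : ℤ) - 1) : ℝ) / (B ((2 * ((n : ℤ) + 1) + 1) * d - 1) : ℝ)))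
      (Real.arctan ((B ((d : ℤ) - 1) : ℝ) / (B (2 * (d : ℤ) - 1) : ℝ))) := by
  set A : ℕ → ℤ := seq2 a b 1 0 with hAdef
  have hA0 : A 0 = 1 := rfl
  have hA1 : A 1 = 0 := rfl
  have hArec : ∀ k : ℕ, A (k+2) = b ((k : ℤ) + 1) * A (k+1) + a ((k : ℤ) + 1) * A k :=
    fun k => rfl
  have hBrec' := BI_rec a b B hBrec
  have hBI0 : BI B 0 = 0 := by simp [BI, hBm1]
  have hBI1 : BI B 1 = 1 := by simp [BI, hB0]
  have hpa' : ∀ k : ℕ, a ((k : ℤ) + 1 + d) = a ((k : ℤ) + 1) := fun k => hpa _ (by omega)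
  have hpb' : ∀ k : ℕ, b ((k : ℤ) + 1 + d) = b ((k : ℤ) + 1) := fun k => hpb _ (by omega)
  -- shift lemma for BI B
  have hshiftB : ∀ k : ℕ, BI B (k+d) = B (d : ℤ) * BI B k + B ((d : ℤ) - 1) * A k := by
    refine seq2_unique a b (fun k => BI B (k+d))
      (fun k => B (d : ℤ) * BI B k + B ((d : ℤ) - 1) * A k) ?_ ?_ ?_ ?_
    · intro k
      have h := hBrec' (k+d)
      rw [show k+2+d = k+d+2 by omega, h,
        show ((k+d : ℕ) : ℤ) + 1 = ((k : ℤ) + 1) + (d : ℤ) by push_cast; ring,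
        hpa' k, hpb' k, show k+d+1 = k+1+d by omega]
    · intro k
      rw [hBrec' k, hArec k]; ring
    · simp only [Nat.zero_add, hBI0, hA0]
      show BI B d = _
      simp only [BI]; ring
    · simp only [hBI1, hA1]
      show BI B (1+d) = _
      simp only [BI]
      rw [show ((1+d : ℕ) : ℤ) - 1 = (d : ℤ) by push_cast; ring]; ring
  -- shift lemma for A
  have hshiftA : ∀ k : ℕ, A (k+d) = A (d+1) * BI B k + A d * A k := by
    refine seq2_unique a b (fun k => A (k+d))
      (fun k => A (d+1) * BI B k + A d * A k) ?_ ?_ ?_ ?_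
    · intro k
      rw [show k+2+d = (k+d)+2 by omega, hArec (k+d),
        show ((k+d : ℕ) : ℤ) + 1 = ((k : ℤ) + 1) + (d : ℤ) by push_cast; ring,
        hpa' k, hpb' k, show k+d+1 = k+1+d by omega]
    · intro k
      rw [hBrec' k, hArec k]; ring
    · simp only [Nat.zero_add, hBI0, hA0]; ring
    · simp only [hBI1, hA1]
      rw [show 1+d = d+1 by omega]; ring
  -- Wronskian
  have hW : ∀ k : ℕ, BI B (k+1) * A k - BI B k * A (k+1)
      = (-1 : ℤ)^k * ∏ i ∈ Finset.range k, a ((i : ℤ) + 1) := by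
    intro k
    induction k with
    | zero => simp [hBI0, hBI1, hA0, hA1]
    | succ k ih =>
      rw [hBrec' k, hArec k, Finset.prod_range_succ]
      linear_combination (-(a ((k : ℤ) + 1))) * ih
  have hWd : B (d : ℤ) * A d - B ((d : ℤ) - 1) * A (d+1) = -1 := by
    have h := hW d
    rw [show (BI B (d+1)) = B (d : ℤ) by
        simp only [BI]; rw [show ((d+1 : ℕ) : ℤ) - 1 = (d : ℤ) by push_cast; ring],
      show (BI B d) = B ((d : ℤ) - 1) from rfl] at h
    have hpow : (-1 : ℤ)^d = -(-1 : ℤ)^(d-1) := by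
      conv_lhs => rw [show d = (d-1)+1 by omega]
      rw [pow_succ]; ring
    rw [h, hpow]
    rw [hD1] at hD
    linear_combination hD
  -- positivity of BI B
  have hBpos : ∀ k : ℕ, 0 < BI B (k+1) ∧ 0 ≤ BI B k := by
    intro k
    induction k with
    | zero => exact ⟨by rw [hBI1]; norm_num, by rw [hBI0]⟩
    | succ k ih =>
      refine ⟨?_, ih.1.le⟩
      rw [hBrec' k]
      have h1 := ha ((k : ℤ) + 1) (by omega)
      have h2 := hb ((k : ℤ) + 1) (by omega)
      nlinarith [ih.1, ih.2]
  have hBd1pos : 0 < B ((d : ℤ) - 1) := by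
    have h := (hBpos (d-1)).1
    rwa [show d-1+1 = d by omega] at h
  -- key recurrence
  have hkey : ∀ k : ℕ, BI B (k+2*d) = (B (d : ℤ) + A d) * BI B (k+d) + BI B k := by
    intro k
    have h1 := hshiftB (k+d)
    have h2 := hshiftA k
    have h3 := hshiftB k
    rw [show k+2*d = k+d+d by ring]
    linear_combination h1 + B ((d : ℤ) - 1) * h2 - A d * h3 - BI B k * hWd
  -- trace equals Cd
  have hBI2d : BI B (2*d) = B (2 * (d : ℤ) - 1) := by
    simp only [BI]; rw [show ((2*d : ℕ) : ℤ) - 1 = 2 * (d : ℤ) - 1 by push_cast; ring]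
  have hT : B (d : ℤ) + A d = Cd := by
    have h := hkey 0
    rw [Nat.zero_add, Nat.zero_add, hBI0, hBI2d] at h
    have hBId : BI B d = B ((d : ℤ) - 1) := rfl
    apply mul_left_cancel₀ hBd1pos.ne'
    rw [hC, h, hBId]; ring
  have hCpos : 0 < Cd := by
    have h2d : 0 < BI B (2*d) := by
      have h := (hBpos (2*d-1)).1
      rwa [show 2*d-1+1 = 2*d by omega] at h
    rw [hBI2d, ← hC] at h2d
    nlinarith [hBd1pos]
  -- Fibonacci-like sequence
  set f : ℕ → ℤ := fib2 Cd with hfdef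
  have hf0 : f 0 = 0 := rfl
  have hf1 : f 1 = 1 := rfl
  have hfrec : ∀ n : ℕ, f (n+2) = Cd * f (n+1) + f n := fun n => rfl
  have hBf : ∀ k : ℕ, BI B (k*d) = B ((d : ℤ) - 1) * f k := by
    intro k
    induction k using Nat.twoStepInduction with
    | zero => rw [Nat.zero_mul, hBI0, hf0]; ring
    | one => rw [Nat.one_mul, hf1]; simp only [BI]; ring
    | more k ih1 ih2 =>
      rw [show (k+2)*d = k*d+2*d by ring, hkey, show k*d+d = (k+1)*d by ring,
        ih1, ih2, hT, hfrec]
      ring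
  -- facts about f
  have hfpos : ∀ n : ℕ, 0 < f (n+1) ∧ 0 ≤ f n := by
    intro n
    induction n with
    | zero => exact ⟨by rw [hf1]; norm_num, by rw [hf0]⟩
    | succ n ih =>
      refine ⟨?_, ih.1.le⟩
      rw [hfrec]
      nlinarith [ih.1, ih.2, hCpos]
  have hcat : ∀ n : ℕ, f n * f (n+2) - f (n+1)^2 = (-1 : ℤ)^(n+1) := by
    intro n
    induction n with
    | zero => rw [hf0, hf1]; ring
    | succ n ih =>
      have h2 := hfrec n
      have h3 : f (n+3) = Cd * f (n+2) + f (n+1) := hfrec (n+1)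
      rw [show n+1+2 = n+3 by omega, show n+1+1 = n+2 by omega]
      linear_combination f (n+1) * h3 - f (n+2) * h2 - ih
  have hfub : ∀ n : ℕ, (n : ℤ) + 1 ≤ f (2*n+2) := by
    intro n
    induction n with
    | zero =>
      have : f 2 = Cd := by rw [hfrec 0, hf0, hf1]; ring
      rw [show 2*0+2 = 2 by norm_num, this]
      push_cast; omega
    | succ n ih =>
      have h := hfrec (2*n+2)
      rw [show 2*(n+1)+2 = 2*n+2+2 by omega, h]
      have h1 := (hfpos (2*n+2)).1
      rw [show 2*n+2+1 = 2*n+3 by omega] at h ⊢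
      push_cast
      nlinarith [hCpos, h1, ih]
  -- pass to reals
  set c : ℝ := (Cd : ℝ) with hcdef
  set F : ℕ → ℝ := fun n => ((f n : ℤ) : ℝ) with hFdef
  have hc1 : 1 ≤ c := by rw [hcdef]; exact_mod_cast hCpos
  have hF1 : ∀ n : ℕ, 1 ≤ F (n+1) := by
    intro n
    have := (hfpos n).1
    rw [hFdef]; simp only []
    exact_mod_cast this
  have hFrec : ∀ n : ℕ, F (n+2) = c * F (n+1) + F n := by
    intro n
    rw [hFdef, hcdef]; simp only []
    exact_mod_cast congrArg (fun z : ℤ => (z : ℝ)) (hfrec n)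
  -- term identity
  have hterm : ∀ n : ℕ, arctan (c / F (2*n+3))
      = arctan (1 / F (2*n+2)) - arctan (1 / F (2*(n+1)+2)) := by
    intro n
    have hp : 1 ≤ F (2*n+2) := by rw [show 2*n+2 = (2*n+1)+1 by omega]; exact hF1 _
    have hq : 1 ≤ F (2*n+3) := by rw [show 2*n+3 = (2*n+2)+1 by omega]; exact hF1 _
    have hr : 1 ≤ F (2*(n+1)+2) := by rw [show 2*(n+1)+2 = (2*n+3)+1 by omega]; exact hF1 _
    have hrr : F (2*(n+1)+2) = c * F (2*n+3) + F (2*n+2) := by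
      have := hFrec (2*n+2)
      rwa [show 2*n+2+2 = 2*(n+1)+2 by omega, show 2*n+2+1 = 2*n+3 by omega] at this
    have hpr : F (2*n+2) * F (2*(n+1)+2) = F (2*n+3)^2 - 1 := by
      have h := hcat (2*n+2)
      have hpow : ((-1 : ℤ))^(2*n+2+1) = -1 := Odd.neg_one_pow ⟨n+1, by ring⟩
      rw [hpow] at h
      rw [show 2*n+2+2 = 2*(n+1)+2 by omega, show 2*n+2+1 = 2*n+3 by omega] at h
      rw [hFdef]; simp only []
      exact_mod_cast (by linarith [h] : f (2*n+2) * f (2*(n+1)+2) = f (2*n+3)^2 - 1)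
    set p := F (2*n+2)
    set q := F (2*n+3)
    set r := F (2*(n+1)+2)
    have hp0 : (0:ℝ) < p := by linarith
    have hq0 : (0:ℝ) < q := by linarith
    have hr0 : (0:ℝ) < r := by linarith
    have hc0 : (0:ℝ) < c := by linarith
    have hlt : c < q * r := by nlinarith
    have hxy : (c / q) * (1 / r) < 1 := by
      rw [show (c / q) * (1 / r) = c / (q * r) by field_simp]
      rw [div_lt_one (by positivity)]
      exact hlt
    have hadd := Real.arctan_add hxy
    have hkeyeq : p * (c * r + q) = q * r - c := by linear_combination c * hpr - q * hrr
    have h1pos : (0:ℝ) < 1 - (c / q) * (1 / r) := by linarith [hxy]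
    have harg : (c / q + 1 / r) / (1 - (c / q) * (1 / r)) = 1 / p := by
      rw [div_eq_div_iff h1pos.ne' hp0.ne']
      field_simp
      linear_combination hkeyeq
    rw [← harg, ← hadd]
    ring
  -- nonnegativity
  have hnonneg : ∀ n : ℕ, 0 ≤ arctan (c / F (2*n+3)) := by
    intro n
    have hq : 1 ≤ F (2*n+3) := by rw [show 2*n+3 = (2*n+2)+1 by omega]; exact hF1 _
    have : (0:ℝ) ≤ c / F (2*n+3) := div_nonneg (by linarith) (by linarith)
    have h := Real.arctan_strictMono.monotone this
    rwa [Real.arctan_zero] at h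
  have hF2 : F 2 = c := by
    have : f 2 = Cd := by rw [hfrec 0, hf0, hf1]; ring
    rw [hFdef]; simp only []; rw [this]
  -- the key HasSum
  have hkey2 : HasSum (fun n : ℕ => arctan (c / F (2*n+3))) (arctan (1 / c)) := by
    rw [hasSum_iff_tendsto_nat_of_nonneg hnonneg]
    have hsum : ∀ N : ℕ, ∑ n ∈ Finset.range N, arctan (c / F (2*n+3))
        = arctan (1 / F 2) - arctan (1 / F (2*N+2)) := by
      intro N
      calc ∑ n ∈ Finset.range N, arctan (c / F (2*n+3))
          = ∑ n ∈ Finset.range N, ((fun m => arctan (1 / F (2*m+2))) n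
              - (fun m => arctan (1 / F (2*m+2))) (n+1)) :=
            Finset.sum_congr rfl (fun i _ => hterm i)
        _ = (fun m => arctan (1 / F (2*m+2))) 0 - (fun m => arctan (1 / F (2*m+2))) N :=
            Finset.sum_range_sub' (fun m => arctan (1 / F (2*m+2))) N
        _ = arctan (1 / F 2) - arctan (1 / F (2*N+2)) := by norm_num
    rw [show (fun N : ℕ => ∑ n ∈ Finset.range N, arctan (c / F (2*n+3)))
        = fun N : ℕ => arctan (1 / F 2) - arctan (1 / F (2*N+2)) from funext hsum, hF2]
    have hto : Tendsto (fun N : ℕ => arctan (1 / F (2*N+2))) atTop (𝓝 0) := by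
      have h0 : Tendsto (fun N : ℕ => 1 / F (2*N+2)) atTop (𝓝 0) := by
        apply squeeze_zero (fun n => by
            have := hF1 (2*n+1)
            rw [show 2*n+1+1 = 2*n+2 by omega] at this
            positivity)
          (fun n => ?_) tendsto_one_div_add_atTop_nhds_zero_nat
        have hb : ((n : ℝ)) + 1 ≤ F (2*n+2) := by
          have := hfub n
          rw [hFdef]; simp only []
          exact_mod_cast this
        exact one_div_le_one_div_of_le (by positivity) hb
      have := (Real.continuous_arctan.tendsto 0).comp h0
      simpa [Real.arctan_zero, Function.comp_def] using this
    simpa using tendsto_const_nhds.sub hto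
  -- final assembly
  have hBd1ne : ((B ((d : ℤ) - 1) : ℤ) : ℝ) ≠ 0 := by exact_mod_cast hBd1pos.ne'
  have hcne : c ≠ 0 := by linarith
  have hCcast : ((B (2 * (d : ℤ) - 1) : ℤ) : ℝ) = ((B ((d : ℤ) - 1) : ℤ) : ℝ) * c := by
    rw [hcdef]; exact_mod_cast hC.symm
  have hval : ((B ((d : ℤ) - 1) : ℤ) : ℝ) / ((B (2 * (d : ℤ) - 1) : ℤ) : ℝ) = 1 / c := by
    rw [hCcast]; field_simp
  have htermEq : ∀ n : ℕ,
      ((B (2 * (d : ℤ) - 1) : ℤ) : ℝ) / ((B ((2 * ((n : ℤ) + 1) + 1) * d - 1) : ℤ) : ℝ)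
        = c / F (2*n+3) := by
    intro n
    have hidx : (2 * ((n : ℤ) + 1) + 1) * d - 1 = (((2*n+3)*d : ℕ) : ℤ) - 1 := by
      push_cast; ring
    have h1 : B ((((2*n+3)*d : ℕ) : ℤ) - 1) = B ((d : ℤ) - 1) * f (2*n+3) := hBf (2*n+3)
    rw [hidx, h1, hCcast, hFdef]
    push_cast
    rw [mul_div_mul_left _ _ hBd1ne]
  rw [show (fun n : ℕ =>
      Real.arctan ((B (2 * (d : ℤ) - 1) : ℝ) / (B ((2 * ((n : ℤ) + 1) + 1) * d - 1) : ℝ)))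
      = fun n : ℕ => arctan (c / F (2*n+3)) from funext fun n => by rw [htermEq n], hval]
  exact hkey2
end
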